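/- arXiv:2410.06856 — 3 statements merged into one kernel-verified Lean document; each statement's English description precedes it below -/
import Mathlib

section
/- Let k ≥ 4 be a power of 2 and let n, m be positive integers with m > 30^(log k + 1). Set p = m^(−1/(log k + 1)) and c = p·n. Then the expected total list size satisfies k·n·(1 + Σ_{d=1}^{log k} c^(2^d − 1)/2^d)·(1 − 37p)^(k−1) ≤ E[Λ] ≤ k·n·(1 + Σ_{d=1}^{log k} c^(2^d − 1)/2^d)·(1 + 37p)^(k−1). -/
set_option maxHeartbeats 2000000


/-- `⟨s⟩`: the set of integers `{-⌊s/2⌋, …, ⌊s/2⌋}`. -/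
noncomputable def intRange (s : ℝ) : Finset ℤ := Finset.Icc (-⌊s / 2⌋) ⌊s / 2⌋

/-- The global index (0-based) of the `r`-th element of the `i`-th block of size `2^d`. -/
def blockIdx {κ : ℕ} (d : ℕ) (hd : d ≤ κ) (i : Fin (2 ^ (κ - d))) (r : Fin (2 ^ d)) :
    Fin (2 ^ κ) :=
  ⟨(i : ℕ) * 2 ^ d + (r : ℕ), by
    have hr := r.isLt
    have hi : (i : ℕ) + 1 ≤ 2 ^ (κ - d) := i.isLt
    have h1 : ((i : ℕ) + 1) * 2 ^ d ≤ 2 ^ (κ - d) * 2 ^ d := Nat.mul_le_mul hi (le_refl _)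
    have h2 : 2 ^ (κ - d) * 2 ^ d = 2 ^ κ := by rw [← pow_add, Nat.sub_add_cancel hd]
    have h3 : ((i : ℕ) + 1) * 2 ^ d = (i : ℕ) * 2 ^ d + 2 ^ d := by ring
    omega⟩

/-- `Λ_{d,i}`: the number of index tuples for the `i`-th block of `2^d` input lists all of
whose partial block sums at levels `t ∈ {1,…,d}` pass the corresponding filters `⟨m·p^t⟩`;
this is the size of the `i`-th list at level `d` of the k-Tree algorithm. -/
noncomputable def levelListSize (κ n m : ℕ) (p : ℝ) (L : Fin (2 ^ κ) → Fin n → ℤ)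
    (d : ℕ) (hd : d ≤ κ) (i : Fin (2 ^ (κ - d))) : ℕ :=
  Nat.card {ℓ : Fin (2 ^ d) → Fin n //
    ∀ t ∈ Finset.Icc 1 d, ∀ j < 2 ^ (d - t),
      (∑ r : Fin (2 ^ d),
          if j * 2 ^ t ≤ (r : ℕ) ∧ (r : ℕ) < (j + 1) * 2 ^ t
          then L (blockIdx d hd i r) (ℓ r) else 0)
        ∈ intRange ((m : ℝ) * p ^ t)}

/-- `Λ`: the total size of all the lists arising in the run of the k-Tree algorithm. -/
noncomputable def totalSize (κ n m : ℕ) (p : ℝ) (L : Fin (2 ^ κ) → Fin n → ℤ) : ℕ :=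
  ∑ d ∈ (Finset.range (κ + 1)).attach,
    ∑ i : Fin (2 ^ (κ - (d : ℕ))),
      levelListSize κ n m p L (d : ℕ) (Nat.lt_succ_iff.mp (Finset.mem_range.mp d.property)) i

/-- The expectation of `Λ` over the uniformly random choice of the `2^κ` input lists of `n`
entries each from `⟨m⟩`. -/
noncomputable def expTotalSize (κ n m : ℕ) (p : ℝ) : ℝ :=
  (∑ L : Fin (2 ^ κ) → Fin n → ↥(intRange (m : ℝ)),
      (totalSize κ n m p (fun i j => (L i j : ℤ)) : ℝ)) /
    (Fintype.card (Fin (2 ^ κ) → Fin n → ↥(intRange (m : ℝ))) : ℝ)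


namespace KTree

open Finset

/-- Values type -/
abbrev V (m : ℕ) := ↥(intRange (m : ℝ))

/-- filter predicate over ℕ-indexed tuples -/
def Filt (m : ℕ) (p : ℝ) (d : ℕ) (x : ℕ → ℤ) : Prop :=
  ∀ t ∈ Finset.Icc 1 d, ∀ j < 2 ^ (d - t),
    (∑ r ∈ Finset.range (2 ^ d),
      if j * 2 ^ t ≤ r ∧ r < (j + 1) * 2 ^ t then x r else 0) ∈ intRange ((m : ℝ) * p ^ t)

def ext {N : ℕ} (m : ℕ) (y : Fin N → V m) : ℕ → ℤ :=
  fun r => if h : r < N then (y ⟨r, h⟩ : ℤ) else 0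

noncomputable def Cnt (m : ℕ) (p : ℝ) (d : ℕ) (s : ℤ) : ℕ :=
  Nat.card {y : Fin (2 ^ d) → V m // Filt m p d (ext m y) ∧ (∑ r, (y r : ℤ)) = s}

noncomputable def Nd (m : ℕ) (p : ℝ) (d : ℕ) : ℕ :=
  Nat.card {y : Fin (2 ^ d) → V m // Filt m p d (ext m y)}

/-! ### generic counting lemmas -/

lemma card_subtype_fiber_sum {α : Type*} [Fintype α] (P : α → Prop) (f : α → ℤ)
    (T : Finset ℤ) (h : ∀ x, P x → f x ∈ T) :
    Nat.card {x // P x} = ∑ s ∈ T, Nat.card {x // P x ∧ f x = s} := by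
  classical
  simp_rw [Nat.card_eq_fintype_card, Fintype.card_subtype]
  rw [Finset.card_eq_sum_card_fiberwise (f := f) (t := T)
    (fun x hx => h x (by simpa using hx))]
  refine Finset.sum_congr rfl fun s hs => ?_
  congr 1
  ext x
  simp [Finset.mem_filter]

lemma card_conv {A B : Type*} [Fintype A] [Fintype B] (P : A → Prop) (Q : B → Prop)
    (f : A → ℤ) (g : B → ℤ) (T : Finset ℤ) (h : ∀ a, P a → f a ∈ T) (s : ℤ) :
    Nat.card {ab : A × B // P ab.1 ∧ Q ab.2 ∧ f ab.1 + g ab.2 = s}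
      = ∑ s1 ∈ T, Nat.card {a // P a ∧ f a = s1} * Nat.card {b // Q b ∧ g b = s - s1} := by
  classical
  rw [card_subtype_fiber_sum (fun ab : A × B => P ab.1 ∧ Q ab.2 ∧ f ab.1 + g ab.2 = s)
    (fun ab => f ab.1) T (fun ab hab => h ab.1 hab.1)]
  refine Finset.sum_congr rfl fun s1 hs1 => ?_
  have e : {ab : A × B // (P ab.1 ∧ Q ab.2 ∧ f ab.1 + g ab.2 = s) ∧ f ab.1 = s1}
      ≃ {a // P a ∧ f a = s1} × {b // Q b ∧ g b = s - s1} :=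
    (Equiv.subtypeEquivRight (fun ab => by
      constructor
      · rintro ⟨⟨hP, hQ, hsum⟩, hf⟩; exact ⟨⟨hP, hf⟩, hQ, by omega⟩
      · rintro ⟨⟨hP, hf⟩, hQ, hg⟩; exact ⟨⟨hP, hQ, by omega⟩, hf⟩)).trans
      Equiv.subtypeProdEquivProd
  rw [Nat.card_congr e, Nat.card_prod]

lemma sum_card_swap {A B : Type*} [Fintype A] [Fintype B] (Pr : A → B → Prop) :
    ∑ a : A, Nat.card {b // Pr a b} = ∑ b : B, Nat.card {a // Pr a b} := by
  classical
  simp_rw [Nat.card_eq_fintype_card, Fintype.card_subtype, Finset.card_filter]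
  exact Finset.sum_comm

lemma card_comp {α β W : Type*} [Fintype α] [Fintype β] [Fintype W]
    (e : α → β) (he : Function.Injective e) (Q : (α → W) → Prop) :
    Nat.card {f : β → W // Q (f ∘ e)}
      = Nat.card {g : α → W // Q g} * Fintype.card W ^ (Fintype.card β - Fintype.card α) := by
  classical
  let E : (β → W) ≃ (α → W) × ({b : β // b ∉ Set.range e} → W) :=
  { toFun := fun f => (f ∘ e, fun b => f b),
    invFun := fun gh b => if hb : b ∈ Set.range e then gh.1 hb.choose else gh.2 ⟨b, hb⟩,
    left_inv := fun f => by
      funext b; dsimp only; split_ifs with hb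
      · exact congrArg f hb.choose_spec
      · rfl,
    right_inv := fun gh => by
      refine Prod.ext ?_ ?_
      · funext x; simp only [Function.comp]
        have hb : e x ∈ Set.range e := ⟨x, rfl⟩
        rw [dif_pos hb]
        exact congrArg gh.1 (he hb.choose_spec)
      · funext b; dsimp only
        rw [dif_neg b.2] }
  have h1 : Nat.card {f : β → W // Q (f ∘ e)} = Nat.card {gh : (α → W) × ({b : β // b ∉ Set.range e} → W) // Q gh.1} :=
    Nat.card_congr (E.subtypeEquiv fun f => Iff.rfl)
  have h2 : {gh : (α → W) × ({b : β // b ∉ Set.range e} → W) // Q gh.1}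
      ≃ {g : α → W // Q g} × {h : ({b : β // b ∉ Set.range e} → W) // True} :=
    (Equiv.subtypeEquivRight (fun gh => (and_iff_left trivial).symm)).trans (Equiv.subtypeProdEquivProd (p := Q) (q := fun _ : ({b : β // b ∉ Set.range e} → W) => True))
  rw [h1, Nat.card_congr h2, Nat.card_prod, Nat.card_congr (Equiv.subtypeUnivEquiv fun _ => trivial)]
  congr 1
  rw [Nat.card_fun]
  congr 1
  · exact Nat.card_eq_fintype_card
  · have : Nat.card {b : β // b ∉ Set.range e} = Fintype.card {b : β // b ∉ Set.range e} := Nat.card_eq_fintype_card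
    rw [this, Fintype.card_subtype_compl (p := fun b => b ∈ Set.range e)]
    congr 1
    rw [← Nat.card_eq_fintype_card, ← Nat.card_eq_fintype_card (α := α)]
    exact Nat.card_range_of_injective he


/-! ### filter splitting -/

variable {m : ℕ} {p : ℝ}

lemma filt_zero (x : ℕ → ℤ) : Filt m p 0 x := by
  intro t ht
  simp at ht

lemma filt_congr {d : ℕ} {x x' : ℕ → ℤ} (h : ∀ r < 2 ^ d, x r = x' r) :
    Filt m p d x ↔ Filt m p d x' := by
  unfold Filt
  refine forall₂_congr fun t ht => forall₂_congr fun j hj => ?_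
  rw [Finset.sum_congr rfl fun r hr => by rw [h r (Finset.mem_range.mp hr)]]

lemma win_sum_left {d t j : ℕ} (ht : t ≤ d) (hj : j < 2 ^ (d - t)) (x : ℕ → ℤ) :
    (∑ r ∈ Finset.range (2 ^ (d + 1)),
      if j * 2 ^ t ≤ r ∧ r < (j + 1) * 2 ^ t then x r else 0)
    = ∑ r ∈ Finset.range (2 ^ d), if j * 2 ^ t ≤ r ∧ r < (j + 1) * 2 ^ t then x r else 0 := by
  have hkey : 2 ^ (d - t) * 2 ^ t = 2 ^ d := by
    rw [← pow_add, Nat.sub_add_cancel ht]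
  have hb : (j + 1) * 2 ^ t ≤ 2 ^ d := by
    calc (j + 1) * 2 ^ t ≤ 2 ^ (d - t) * 2 ^ t := Nat.mul_le_mul_right _ hj
    _ = 2 ^ d := hkey
  rw [show (2:ℕ) ^ (d+1) = 2 ^ d + 2 ^ d by rw [pow_succ]; omega, Finset.sum_range_add]
  have hz : (∑ r ∈ Finset.range (2 ^ d),
      if j * 2 ^ t ≤ 2 ^ d + r ∧ 2 ^ d + r < (j + 1) * 2 ^ t then x (2 ^ d + r) else 0) = 0 :=
    Finset.sum_eq_zero fun r hr => if_neg (by omega)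
  rw [hz, add_zero]

lemma win_sum_right {d t j : ℕ} (ht : t ≤ d) (hj : j < 2 ^ (d - t)) (x : ℕ → ℤ) :
    (∑ r ∈ Finset.range (2 ^ (d + 1)),
      if (2 ^ (d - t) + j) * 2 ^ t ≤ r ∧ r < (2 ^ (d - t) + j + 1) * 2 ^ t then x r else 0)
    = ∑ r ∈ Finset.range (2 ^ d),
        if j * 2 ^ t ≤ r ∧ r < (j + 1) * 2 ^ t then x (2 ^ d + r) else 0 := by
  have hkey : 2 ^ (d - t) * 2 ^ t = 2 ^ d := by
    rw [← pow_add, Nat.sub_add_cancel ht]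
  have h1 : (2 ^ (d - t) + j) * 2 ^ t = 2 ^ d + j * 2 ^ t := by rw [add_mul, hkey]
  have h2 : (2 ^ (d - t) + j + 1) * 2 ^ t = 2 ^ d + (j + 1) * 2 ^ t := by
    rw [add_assoc, add_mul, hkey, add_mul, one_mul]
  rw [show (2:ℕ) ^ (d+1) = 2 ^ d + 2 ^ d by rw [pow_succ]; omega, Finset.sum_range_add]
  have hz : (∑ r ∈ Finset.range (2 ^ d),
      if (2 ^ (d - t) + j) * 2 ^ t ≤ r ∧ r < (2 ^ (d - t) + j + 1) * 2 ^ t then x r else 0) = 0 :=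
    Finset.sum_eq_zero fun r hr => if_neg (by have := Finset.mem_range.mp hr; omega)
  rw [hz, zero_add]
  refine Finset.sum_congr rfl fun r hr => ?_
  exact if_congr (by omega) rfl rfl

lemma win_sum_full {N : ℕ} (x : ℕ → ℤ) :
    (∑ r ∈ Finset.range N, if 0 * N ≤ r ∧ r < (0 + 1) * N then x r else 0)
    = ∑ r ∈ Finset.range N, x r := by
  refine Finset.sum_congr rfl fun r hr => ?_
  rw [Finset.mem_range] at hr
  exact if_pos (by omega)

lemma filt_succ (d : ℕ) (x : ℕ → ℤ) :
    Filt m p (d + 1) x ↔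
      Filt m p d x ∧ Filt m p d (fun r => x (2 ^ d + r)) ∧
        (∑ r ∈ Finset.range (2 ^ (d + 1)), x r) ∈ intRange ((m : ℝ) * p ^ (d + 1)) := by
  have hdt : ∀ t, t ≤ d → 2 ^ (d + 1 - t) = 2 ^ (d - t) + 2 ^ (d - t) := by
    intro t ht
    rw [show d + 1 - t = (d - t) + 1 by omega, pow_succ]; omega
  constructor
  · intro h
    refine ⟨?_, ?_, ?_⟩
    · intro t ht j hj
      rw [Finset.mem_Icc] at ht
      have := h t (Finset.mem_Icc.mpr (by omega)) j (by rw [hdt t ht.2]; omega)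
      rwa [win_sum_left ht.2 hj x] at this
    · intro t ht j hj
      rw [Finset.mem_Icc] at ht
      have := h t (Finset.mem_Icc.mpr (by omega)) (2 ^ (d - t) + j) (by rw [hdt t ht.2]; omega)
      rwa [win_sum_right ht.2 hj x] at this
    · have := h (d + 1) (Finset.mem_Icc.mpr (by omega)) 0 (by simp)
      rwa [win_sum_full x] at this
  · rintro ⟨h1, h2, h3⟩ t ht j hj
    rw [Finset.mem_Icc] at ht
    by_cases hc : t = d + 1
    · subst hc
      have hj0 : j = 0 := by simp [show d + 1 - (d+1) = 0 by omega] at hj; omega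
      subst hj0
      rwa [win_sum_full x]
    · have ht' : t ≤ d := by omega
      by_cases hcj : j < 2 ^ (d - t)
      · rw [win_sum_left ht' hcj x]
        exact h1 t (Finset.mem_Icc.mpr (by omega)) j hcj
      · have hj' : j - 2 ^ (d - t) < 2 ^ (d - t) := by
          rw [hdt t ht'] at hj; omega
        have hjeq : j = 2 ^ (d - t) + (j - 2 ^ (d - t)) := by omega
        rw [hjeq, win_sum_right ht' hj' x]
        exact h2 t (Finset.mem_Icc.mpr (by omega)) _ hj'


/-! ### halves equivalence and Cnt recursion -/

def halves (m d : ℕ) : (Fin (2 ^ (d + 1)) → V m) ≃ (Fin (2 ^ d) → V m) × (Fin (2 ^ d) → V m) where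
  toFun y := (fun r => y ⟨r.1, by have := r.isLt; have h := pow_succ 2 d; omega⟩,
              fun r => y ⟨2 ^ d + r.1, by have := r.isLt; have h := pow_succ 2 d; omega⟩)
  invFun ab := fun r => if h : (r : ℕ) < 2 ^ d then ab.1 ⟨r, h⟩
    else ab.2 ⟨(r : ℕ) - 2 ^ d, by have := r.isLt; have h2 := pow_succ 2 d; omega⟩
  left_inv y := by
    funext r
    dsimp only
    split_ifs with h
    · exact congrArg y (Fin.ext rfl)
    · exact congrArg y (Fin.ext (by simp only [Fin.val_mk]; omega))
  right_inv ab := by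
    refine Prod.ext ?_ ?_
    · funext r; dsimp only
      rw [dif_pos r.isLt]
    · funext r; dsimp only
      rw [dif_neg (by omega)]
      exact congrArg ab.2 (Fin.ext (by simp only [Fin.val_mk]; omega))

lemma ext_fst (d : ℕ) (y : Fin (2 ^ (d + 1)) → V m) :
    ∀ r < 2 ^ d, ext m ((halves m d y).1) r = ext m y r := by
  intro r hr
  have hr' : r < 2 ^ (d + 1) := by have := pow_succ 2 d; omega
  simp only [ext, halves, Equiv.coe_fn_mk, dif_pos hr, dif_pos hr']

lemma ext_snd (d : ℕ) (y : Fin (2 ^ (d + 1)) → V m) :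
    ∀ r < 2 ^ d, ext m ((halves m d y).2) r = ext m y (2 ^ d + r) := by
  intro r hr
  have hr' : 2 ^ d + r < 2 ^ (d + 1) := by have := pow_succ 2 d; omega
  simp only [ext, halves, Equiv.coe_fn_mk, dif_pos hr, dif_pos hr']

lemma sum_ext {N : ℕ} (y : Fin N → V m) :
    (∑ r ∈ Finset.range N, ext m y r) = ∑ r, (y r : ℤ) := by
  rw [← Fin.sum_univ_eq_sum_range (fun r => ext m y r) N]
  refine Finset.sum_congr rfl fun r _ => ?_
  simp only [ext, dif_pos r.isLt]

lemma sum_halves (d : ℕ) (y : Fin (2 ^ (d + 1)) → V m) :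
    (∑ r, (y r : ℤ)) = (∑ r, ((halves m d y).1 r : ℤ)) + ∑ r, ((halves m d y).2 r : ℤ) := by
  rw [← sum_ext y, ← sum_ext (halves m d y).1, ← sum_ext (halves m d y).2]
  have h := Finset.sum_range_add (ext m y) (2 ^ d) (2 ^ d)
  rw [show (2:ℕ) ^ d + 2 ^ d = 2 ^ (d + 1) by rw [pow_succ]; omega] at h
  rw [h]
  congr 1
  · exact Finset.sum_congr rfl fun r hr => (ext_fst d y r (Finset.mem_range.mp hr)).symm
  · exact Finset.sum_congr rfl fun r hr => (ext_snd d y r (Finset.mem_range.mp hr)).symm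

set_option maxHeartbeats 1000000 in
lemma cnt_succ (d : ℕ) (T : Finset ℤ)
    (hT : ∀ y : Fin (2 ^ d) → V m, Filt m p d (ext m y) → (∑ r, (y r : ℤ)) ∈ T)
    (s : ℤ) (hs : s ∈ intRange ((m : ℝ) * p ^ (d + 1))) :
    Cnt m p (d + 1) s = ∑ s1 ∈ T, Cnt m p d s1 * Cnt m p d (s - s1) := by
  have key : ∀ y : Fin (2 ^ (d + 1)) → V m,
      (Filt m p (d + 1) (ext m y) ∧ (∑ r, (y r : ℤ)) = s) ↔
      (Filt m p d (ext m ((halves m d y).1)) ∧ Filt m p d (ext m ((halves m d y).2)) ∧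
        (∑ r, ((halves m d y).1 r : ℤ)) + (∑ r, ((halves m d y).2 r : ℤ)) = s) := by
    intro y
    rw [filt_succ]
    have e1 : Filt m p d (ext m y) ↔ Filt m p d (ext m ((halves m d y).1)) :=
      (filt_congr (ext_fst d y)).symm
    have e2 : Filt m p d (fun r => ext m y (2 ^ d + r)) ↔ Filt m p d (ext m ((halves m d y).2)) :=
      (filt_congr (m := m) (p := p) (x := ext m ((halves m d y).2))
        (x' := fun r => ext m y (2 ^ d + r)) (fun r hr => ext_snd d y r hr)).symm
    have e3 : (∑ r ∈ Finset.range (2 ^ (d + 1)), ext m y r) = ∑ r, (y r : ℤ) := sum_ext y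
    rw [e1, e2, e3, sum_halves d y]
    constructor
    · rintro ⟨⟨f1, f2, _⟩, hsum⟩; exact ⟨f1, f2, hsum⟩
    · rintro ⟨f1, f2, hsum⟩; exact ⟨⟨f1, f2, hsum ▸ hs⟩, hsum⟩
  have e : {y : Fin (2 ^ (d + 1)) → V m // Filt m p (d + 1) (ext m y) ∧ (∑ r, (y r : ℤ)) = s}
      ≃ {ab : (Fin (2 ^ d) → V m) × (Fin (2 ^ d) → V m) //
          Filt m p d (ext m ab.1) ∧ Filt m p d (ext m ab.2) ∧
            (∑ r, (ab.1 r : ℤ)) + (∑ r, (ab.2 r : ℤ)) = s} :=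
    (halves m d).subtypeEquiv fun y => by rw [key y]
  rw [Cnt, Nat.card_congr e,
    card_conv (fun a : Fin (2 ^ d) → V m => Filt m p d (ext m a))
      (fun b : Fin (2 ^ d) → V m => Filt m p d (ext m b))
      (fun a => ∑ r, (a r : ℤ)) (fun b => ∑ r, (b r : ℤ)) T (fun a ha => hT a ha) s]
  simp only [Cnt]

lemma cnt_supp (d : ℕ) (hd : 1 ≤ d) (z : ℤ) (hz : z ∉ intRange ((m : ℝ) * p ^ d)) :
    Cnt m p d z = 0 := by
  rw [Cnt, Nat.card_eq_zero]
  left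
  refine ⟨fun ⟨y, hy, hsum⟩ => hz ?_⟩
  have := hy d (Finset.mem_Icc.mpr ⟨hd, le_refl d⟩) 0 (by simp)
  rwa [win_sum_full (ext m y), sum_ext y, hsum] at this

lemma filt_sum_mem (d : ℕ) (hd : 1 ≤ d) (y : Fin (2 ^ d) → V m)
    (hy : Filt m p d (ext m y)) : (∑ r, (y r : ℤ)) ∈ intRange ((m : ℝ) * p ^ d) := by
  have := hy d (Finset.mem_Icc.mpr ⟨hd, le_refl d⟩) 0 (by simp)
  rwa [win_sum_full (ext m y), sum_ext y] at this

lemma nd_eq_sum (d : ℕ) (hd : 1 ≤ d) :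
    Nd m p d = ∑ s ∈ intRange ((m : ℝ) * p ^ d), Cnt m p d s := by
  simp only [Nd, Cnt]
  exact card_subtype_fiber_sum (fun y : Fin (2 ^ d) → V m => Filt m p d (ext m y))
    (fun y => ∑ r, (y r : ℤ)) _ (fun y hy => filt_sum_mem d hd y hy)


/-! ### base case -/

lemma card_subtype_val_eq (T : Finset ℤ) (s : ℤ) :
    Nat.card {v : ↥T // (v : ℤ) = s} = if s ∈ T then 1 else 0 := by
  split_ifs with h
  · have : Unique {v : ↥T // (v : ℤ) = s} :=
      ⟨⟨⟨⟨s, h⟩, rfl⟩⟩, by rintro ⟨⟨v, hv⟩, rfl⟩; rfl⟩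
    exact Nat.card_unique
  · have : IsEmpty {v : ↥T // (v : ℤ) = s} :=
      ⟨by rintro ⟨⟨v, hv⟩, rfl⟩; exact h hv⟩
    exact Nat.card_of_isEmpty

lemma pow_zero_eq_one' : (2 : ℕ) ^ 0 = 1 := rfl

def z0 : Fin (2 ^ 0) := ⟨0, by norm_num⟩

lemma sum_single (y : Fin (2 ^ 0) → V m) : (∑ r, (y r : ℤ)) = (y z0 : ℤ) := by
  rw [← sum_ext y]
  show ∑ r ∈ Finset.range 1, ext m y r = _
  rw [Finset.sum_range_one]
  simp only [ext, dif_pos (by norm_num : (0:ℕ) < 2 ^ 0)]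
  rfl

lemma cnt_zero (s : ℤ) : Cnt m p 0 s = if s ∈ intRange ((m : ℝ)) then 1 else 0 := by
  rw [Cnt, ← card_subtype_val_eq (intRange ((m : ℝ))) s]
  refine Nat.card_congr ?_
  refine Equiv.mk (fun y => ⟨y.1 z0, by rw [← sum_single y.1]; exact y.2.2⟩)
    (fun v => ⟨fun _ => v.1, filt_zero _, by rw [sum_single]; exact v.2⟩) ?_ ?_
  · rintro ⟨y, hy, hsum⟩
    refine Subtype.ext (funext fun r => ?_)
    show y z0 = y r
    have hr : r = z0 := Fin.ext (by have h0 : (r : ℕ) < 1 := r.isLt; omega)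
    exact (congrArg y hr).symm
  · rintro ⟨v, hv⟩
    rfl

lemma filter_shift_card (W s : ℤ) (hW : 0 ≤ W) (hs : |s| ≤ 2 * W) :
    ((Finset.Icc (-W) W).filter (fun s1 => s - s1 ∈ Finset.Icc (-W) W)).card
      = (2 * W + 1 - |s|).toNat := by
  have habs := abs_choice s
  have h1 : ((Finset.Icc (-W) W).filter (fun s1 => s - s1 ∈ Finset.Icc (-W) W))
      = Finset.Icc (max (-W) (s - W)) (min W (s + W)) := by
    ext a
    simp only [Finset.mem_filter, Finset.mem_Icc, le_max_iff, max_le_iff, le_min_iff,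
      min_le_iff, le_refl]
    omega
  rw [h1, Int.card_Icc]
  rcases le_or_gt 0 s with hpos | hneg
  · rw [abs_of_nonneg hpos, max_eq_right (by omega), min_eq_left (by omega)]
    congr 1
    omega
  · rw [abs_of_neg hneg, max_eq_left (by omega), min_eq_right (by omega)]
    congr 1
    omega

lemma sum_fin_pow_zero_mem (y : Fin (2 ^ 0) → V m) : (∑ r, (y r : ℤ)) ∈ intRange ((m : ℝ)) := by
  rw [sum_single y]; exact (y z0).2

lemma cnt_one (s : ℤ) (hs : s ∈ intRange ((m : ℝ) * p ^ (0 + 1))) :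
    Cnt m p 1 s = ((intRange ((m : ℝ))).filter (fun s1 => s - s1 ∈ intRange ((m : ℝ)))).card := by
  have h := cnt_succ (m := m) (p := p) 0 (intRange ((m : ℝ)))
    (fun y _ => sum_fin_pow_zero_mem y) s hs
  rw [h]
  rw [Finset.card_filter]
  refine Finset.sum_congr rfl fun s1 hs1 => ?_
  rw [cnt_zero, cnt_zero, if_pos hs1, one_mul]


/-! ### numeric bounds -/

noncomputable def Wf (m : ℕ) (p : ℝ) (t : ℕ) : ℤ := ⌊(m : ℝ) * p ^ t / 2⌋

noncomputable def Mr (m : ℕ) (p : ℝ) : ℝ := 2 * (Wf m p 0 : ℝ) + 1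

lemma intRange_eq (m : ℕ) (p : ℝ) (t : ℕ) :
    intRange ((m : ℝ) * p ^ t) = Finset.Icc (-(Wf m p t)) (Wf m p t) := rfl

lemma intRange_m_eq (m : ℕ) (p : ℝ) :
    intRange ((m : ℝ)) = Finset.Icc (-(Wf m p 0)) (Wf m p 0) := by
  simp [intRange, Wf]

section Bounds

variable {κ m : ℕ} {p q : ℝ}

lemma nd_bounds (hq : 30 < q) (hpq : p = q⁻¹) (hmq : (m : ℝ) = q ^ (κ + 1)) :
    ∀ d, 1 ≤ d → d ≤ κ →
      Mr m p ^ (2 ^ d) * p ^ (2 ^ d - 1) * (1 - 3 * p) ^ (2 ^ d) ≤ (Nd m p d : ℝ) ∧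
      (Nd m p d : ℝ) ≤ Mr m p ^ (2 ^ d) * p ^ (2 ^ d - 1) * (1 + p) ^ (2 ^ (d - 1)) := by
  have hq0 : (0 : ℝ) < q := by linarith
  have hp0 : 0 < p := by rw [hpq]; exact inv_pos.mpr hq0
  have hp30 : p < 1 / 30 := by
    rw [hpq]
    rw [inv_lt_comm₀ hq0 (by norm_num)]
    simpa using hq
  have hp1 : p ≤ 1 := by linarith
  have hq1 : (1 : ℝ) ≤ q := by linarith
  have hA : ∀ t, t ≤ κ + 1 → (m : ℝ) * p ^ t = q ^ (κ + 1 - t) := by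
    intro t ht
    rw [hmq, hpq, inv_pow, pow_sub₀ q (ne_of_gt hq0) ht]
  have hWle : ∀ t, (Wf m p t : ℝ) ≤ (m : ℝ) * p ^ t / 2 := fun t => Int.floor_le _
  have hWgt : ∀ t, (m : ℝ) * p ^ t / 2 - 1 < (Wf m p t : ℝ) := fun t => Int.sub_one_lt_floor _
  have hmpt_nonneg : ∀ t, 0 ≤ (m : ℝ) * p ^ t := by
    intro t; positivity
  have hW0 : ∀ t, (0 : ℤ) ≤ Wf m p t := by
    intro t; exact Int.floor_nonneg.mpr (by positivity)
  have hMm : (m : ℝ) ≤ Mr m p := by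
    have h := hWgt 0
    simp only [pow_zero, mul_one] at h
    have hz : (m : ℤ) - 2 < 2 * Wf m p 0 := by exact_mod_cast (by push_cast; linarith : ((m : ℤ) : ℝ) - 2 < 2 * (Wf m p 0 : ℝ))
    have : (m : ℤ) ≤ 2 * Wf m p 0 + 1 := by omega
    rw [Mr]
    exact_mod_cast this
  have hMup : Mr m p ≤ (m : ℝ) + 1 := by
    have h := hWle 0
    simp only [pow_zero, mul_one] at h
    rw [Mr]; linarith
  have hMpos : 0 < Mr m p := by
    have := hW0 0
    rw [Mr]
    have : (0 : ℝ) ≤ (Wf m p 0 : ℝ) := by exact_mod_cast this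
    linarith
  have hAq : ∀ t, t ≤ κ → q ≤ (m : ℝ) * p ^ t := by
    intro t ht
    rw [hA t (by omega)]
    exact le_self_pow₀ hq1 (by omega)
  have hpA : ∀ t, t ≤ κ → 1 ≤ p * ((m : ℝ) * p ^ t) := by
    intro t ht
    have h : p * ((m : ℝ) * p ^ t) = (m : ℝ) * p ^ (t + 1) := by ring
    rw [h, hA (t + 1) (by omega)]
    exact one_le_pow₀ hq1
  have hpt1 : ∀ t : ℕ, p ^ t ≤ 1 := fun t => pow_le_one₀ hp0.le hp1
  have hWmono : ∀ t : ℕ, Wf m p (t + 1) ≤ Wf m p t := by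
    intro t
    apply Int.floor_le_floor
    have : p ^ (t + 1) ≤ p ^ t := pow_le_pow_of_le_one hp0.le hp1 (by omega)
    have hm0 : (0:ℝ) ≤ (m:ℝ) := Nat.cast_nonneg m
    nlinarith
  -- window size bounds, t ≤ κ
  have f1 : ∀ t, t ≤ κ → 2 * (Wf m p t : ℝ) + 1 ≤ Mr m p * p ^ t * (1 + p) := by
    intro t ht
    have h1 := hWle t
    have h2 : (m : ℝ) * p ^ t ≤ Mr m p * p ^ t := by
      apply mul_le_mul_of_nonneg_right hMm (by positivity)
    have h3 : 1 ≤ p * ((m : ℝ) * p ^ t) := hpA t ht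
    have h4 : p * ((m : ℝ) * p ^ t) ≤ p * (Mr m p * p ^ t) := by
      apply mul_le_mul_of_nonneg_left _ hp0.le
      apply mul_le_mul_of_nonneg_right hMm (by positivity)
    nlinarith
  have f2 : ∀ t, t ≤ κ → Mr m p * p ^ t * (1 - 2 * p) ≤ 2 * (Wf m p t : ℝ) + 1 := by
    intro t ht
    have h1 := hWgt t
    have h2 : Mr m p * p ^ t ≤ (m : ℝ) * p ^ t + p ^ t := by nlinarith [hpt1 t, hmpt_nonneg t, mul_le_mul_of_nonneg_right hMup (le_of_lt (pow_pos hp0 t))]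
    have h3 : 1 ≤ p * ((m : ℝ) * p ^ t) := hpA t ht
    have h4 := hpt1 t
    nlinarith
  have f3 : ∀ t, t ≤ κ → Mr m p * p ^ t * (1 - 3 * p) ≤ 2 * (Wf m p t : ℝ) + 1 - (Wf m p (t + 1) : ℝ) := by
    intro t ht
    have h1 := hWgt t
    have h2 : Mr m p * p ^ t ≤ (m : ℝ) * p ^ t + p ^ t := by nlinarith [hpt1 t, hmpt_nonneg t, mul_le_mul_of_nonneg_right hMup (le_of_lt (pow_pos hp0 t))]
    have h3 : 1 ≤ p * ((m : ℝ) * p ^ t) := hpA t ht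
    have h4 := hpt1 t
    have h5 : (Wf m p (t + 1) : ℝ) ≤ (m : ℝ) * p ^ (t + 1) / 2 := hWle (t + 1)
    have h6 : (m : ℝ) * p ^ (t + 1) = p * ((m : ℝ) * p ^ t) := by ring
    nlinarith
  have h3p : 0 < 1 - 3 * p := by linarith
  have h1p : 0 < 1 + p := by linarith
  -- pointwise bounds on Cnt
  have main : ∀ d, 1 ≤ d → d ≤ κ → ∀ s ∈ Finset.Icc (-(Wf m p d)) (Wf m p d),
      Mr m p ^ (2 ^ d - 1) * p ^ (2 ^ d - 1 - d) * (1 - 3 * p) ^ (2 ^ d - 1) ≤ (Cnt m p d s : ℝ) ∧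
      (Cnt m p d s : ℝ) ≤ Mr m p ^ (2 ^ d - 1) * p ^ (2 ^ d - 1 - d) * (1 + p) ^ (2 ^ (d - 1) - 1) := by
    intro d hd1
    induction d, hd1 using Nat.le_induction with
    | base =>
      intro hκ1 s hs
      rw [Finset.mem_Icc] at hs
      have hs1 : |s| ≤ Wf m p 1 := by rw [abs_le]; exact hs
      have hs0 : |s| ≤ 2 * Wf m p 0 := le_trans hs1 (le_trans (hWmono 0) (by have := hW0 0; omega))
      have hcnt : Cnt m p 1 s = ((2 * Wf m p 0 + 1 - |s|).toNat) := by
        rw [cnt_one s (by rw [intRange_eq, Finset.mem_Icc]; exact (by simpa using hs : -(Wf m p (0+1)) ≤ s ∧ s ≤ Wf m p (0+1)))]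
        rw [intRange_m_eq m p, filter_shift_card (Wf m p 0) s (hW0 0) hs0]
      rw [hcnt]
      have hnn : (0:ℤ) ≤ 2 * Wf m p 0 + 1 - |s| := by omega
      have hcast : (((2 * Wf m p 0 + 1 - |s|).toNat : ℕ) : ℝ) = 2 * (Wf m p 0 : ℝ) + 1 - (|s| : ℝ) := by
        have := Int.toNat_of_nonneg hnn
        exact_mod_cast congrArg (fun z : ℤ => (z : ℝ)) this
      rw [hcast]
      have e0 : Mr m p ^ (2 ^ 1 - 1) * p ^ (2 ^ 1 - 1 - 1) * (1 + p) ^ (2 ^ (1 - 1) - 1) = Mr m p := by norm_num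
      have e0' : Mr m p ^ (2 ^ 1 - 1) * p ^ (2 ^ 1 - 1 - 1) * (1 - 3 * p) ^ (2 ^ 1 - 1) = Mr m p * (1 - 3 * p) := by norm_num
      rw [e0, e0']
      have habs0 : (0:ℝ) ≤ (|s| : ℝ) := by positivity
      have hsW1 : (|s| : ℝ) ≤ (Wf m p 1 : ℝ) := by exact_mod_cast hs1
      have hW1le : (Wf m p 1 : ℝ) ≤ (m : ℝ) * p ^ 1 / 2 := hWle 1
      have hmp1 : (m : ℝ) * p ^ 1 ≤ Mr m p * p := by
        have h' : (m:ℝ) * p ^ 1 = (m:ℝ) * p := by ring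
        rw [h']
        exact mul_le_mul_of_nonneg_right hMm hp0.le
      constructor
      · unfold Mr at *; nlinarith
      · unfold Mr at *; nlinarith
    | succ d hd1 IH =>
      intro hκ1 s hs
      have hdκ : d ≤ κ := by omega
      have IH' := IH hdκ
      rw [Finset.mem_Icc] at hs
      have hsabs : |s| ≤ Wf m p (d + 1) := by rw [abs_le]; exact hs
      have hrec := cnt_succ (m := m) (p := p) d (intRange ((m : ℝ) * p ^ d))
        (fun y hy => filt_sum_mem d hd1 y hy) s
        (by rw [intRange_eq, Finset.mem_Icc]; exact hs)
      rw [hrec, intRange_eq]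
      set lowd := Mr m p ^ (2 ^ d - 1) * p ^ (2 ^ d - 1 - d) * (1 - 3 * p) ^ (2 ^ d - 1) with hlowd
      set upd := Mr m p ^ (2 ^ d - 1) * p ^ (2 ^ d - 1 - d) * (1 + p) ^ (2 ^ (d - 1) - 1) with hupd
      have hup0 : 0 ≤ upd := by rw [hupd]; positivity
      have hlow0 : 0 ≤ lowd := by rw [hlowd]; positivity
      have hp2d : (2:ℕ) ^ (d+1) = 2 ^ d + 2 ^ d := by rw [pow_succ]; omega
      have hp2d' : (2:ℕ) ^ d = 2 ^ (d-1) + 2 ^ (d-1) := by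
        have hd' : d - 1 + 1 = d := by omega
        calc (2:ℕ) ^ d = 2 ^ (d - 1 + 1) := by rw [hd']
        _ = 2 ^ (d-1) + 2 ^ (d-1) := by rw [pow_succ]; omega
      have hdlt : d + 1 ≤ 2 ^ d := by have := @Nat.lt_two_pow_self d; omega
      have h12 : 1 ≤ (2:ℕ) ^ (d - 1) := Nat.one_le_two_pow
      have e_up : Mr m p * p ^ d * (1 + p) * (upd * upd)
          = Mr m p ^ (2 ^ (d+1) - 1) * p ^ (2 ^ (d+1) - 1 - (d+1)) * (1 + p) ^ (2 ^ ((d+1) - 1) - 1) := by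
        rw [hupd]
        rw [show (2:ℕ) ^ (d+1) - 1 = (2 ^ d - 1) + (2 ^ d - 1) + 1 by omega]
        rw [show ((2:ℕ) ^ d - 1) + (2 ^ d - 1) + 1 - (d+1) = (2 ^ d - 1 - d) + (2 ^ d - 1 - d) + d by omega]
        rw [show (2:ℕ) ^ ((d+1) - 1) - 1 = (2 ^ (d-1) - 1) + (2 ^ (d-1) - 1) + 1 by simp only [Nat.add_sub_cancel]; omega]
        rw [pow_add, pow_add, pow_add, pow_add, pow_add, pow_add]
        ring
      have e_low : Mr m p * p ^ d * (1 - 3 * p) * (lowd * lowd)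
          = Mr m p ^ (2 ^ (d+1) - 1) * p ^ (2 ^ (d+1) - 1 - (d+1)) * (1 - 3 * p) ^ (2 ^ (d+1) - 1) := by
        rw [hlowd]
        rw [show (2:ℕ) ^ (d+1) - 1 = (2 ^ d - 1) + (2 ^ d - 1) + 1 by omega]
        rw [show ((2:ℕ) ^ d - 1) + (2 ^ d - 1) + 1 - (d+1) = (2 ^ d - 1 - d) + (2 ^ d - 1 - d) + d by omega]
        rw [pow_add, pow_add, pow_add, pow_add, pow_add, pow_add]
        ring
      have hcast : ((∑ s1 ∈ Finset.Icc (-(Wf m p d)) (Wf m p d),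
            Cnt m p d s1 * Cnt m p d (s - s1) : ℕ) : ℝ)
          = ∑ s1 ∈ Finset.Icc (-(Wf m p d)) (Wf m p d),
              (Cnt m p d s1 : ℝ) * (Cnt m p d (s - s1) : ℝ) := by
        push_cast; rfl
      have hcardIcc : ((Finset.Icc (-(Wf m p d)) (Wf m p d)).card : ℝ) = 2 * (Wf m p d : ℝ) + 1 := by
        rw [Int.card_Icc]
        have h0 := hW0 d
        have : ((Wf m p d + 1 - -(Wf m p d)).toNat : ℤ) = 2 * Wf m p d + 1 := by
          rw [Int.toNat_of_nonneg (by omega)]; ring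
        exact_mod_cast congrArg (fun z : ℤ => (z : ℝ)) this
      constructor
      · -- lower bound
        rw [hcast, ← e_low]
        set F := Finset.filter (fun s1 => s - s1 ∈ Finset.Icc (-(Wf m p d)) (Wf m p d))
            (Finset.Icc (-(Wf m p d)) (Wf m p d)) with hF
        have hsles : |s| ≤ 2 * Wf m p d := by
          have h1 := hWmono d
          have h0 := hW0 d
          omega
        have hcardF : (F.card : ℝ) = 2 * (Wf m p d : ℝ) + 1 - (|s| : ℝ) := by
          rw [hF, filter_shift_card (Wf m p d) s (hW0 d) hsles]
          have : ((2 * Wf m p d + 1 - |s|).toNat : ℤ) = 2 * Wf m p d + 1 - |s| :=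
            Int.toNat_of_nonneg (by omega)
          exact_mod_cast congrArg (fun z : ℤ => (z : ℝ)) this
        have hterm : ∀ s1 ∈ F, lowd * lowd ≤ (Cnt m p d s1 : ℝ) * (Cnt m p d (s - s1) : ℝ) := by
          intro s1 hs1
          rw [hF, Finset.mem_filter] at hs1
          have b1 := (IH' s1 hs1.1).1
          have b2 := (IH' (s - s1) hs1.2).1
          exact mul_le_mul b1 b2 hlow0 (by positivity)
        have hstep : (F.card : ℝ) * (lowd * lowd)
            ≤ ∑ s1 ∈ F, (Cnt m p d s1 : ℝ) * (Cnt m p d (s - s1) : ℝ) := by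
          have := Finset.card_nsmul_le_sum F
            (fun s1 => (Cnt m p d s1 : ℝ) * (Cnt m p d (s - s1) : ℝ)) (lowd * lowd) hterm
          simpa [nsmul_eq_mul] using this
        have hmono : ∑ s1 ∈ F, (Cnt m p d s1 : ℝ) * (Cnt m p d (s - s1) : ℝ)
            ≤ ∑ s1 ∈ Finset.Icc (-(Wf m p d)) (Wf m p d),
                (Cnt m p d s1 : ℝ) * (Cnt m p d (s - s1) : ℝ) := by
          apply Finset.sum_le_sum_of_subset_of_nonneg (Finset.filter_subset _ _)
          intro i _ _
          positivity
        have hWd1 : (|s| : ℝ) ≤ (Wf m p (d+1) : ℝ) := by exact_mod_cast hsabs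
        have hf3 := f3 d hdκ
        have hchain : Mr m p * p ^ d * (1 - 3 * p) * (lowd * lowd) ≤ (F.card : ℝ) * (lowd * lowd) := by
          apply mul_le_mul_of_nonneg_right _ (by positivity)
          rw [hcardF]
          linarith
        linarith
      · -- upper bound
        rw [hcast, ← e_up]
        have hterm : ∀ s1 ∈ Finset.Icc (-(Wf m p d)) (Wf m p d),
            (Cnt m p d s1 : ℝ) * (Cnt m p d (s - s1) : ℝ) ≤ upd * upd := by
          intro s1 hs1
          have b1 := (IH' s1 hs1).2
          by_cases hmem : s - s1 ∈ Finset.Icc (-(Wf m p d)) (Wf m p d)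
          · have b2 := (IH' (s - s1) hmem).2
            exact mul_le_mul b1 b2 (by positivity) (le_trans (by positivity) b1)
          · rw [cnt_supp d hd1 (s - s1) (by rw [intRange_eq]; exact hmem)]
            push_cast
            rw [mul_zero]
            positivity
        have hstep : ∑ s1 ∈ Finset.Icc (-(Wf m p d)) (Wf m p d),
            (Cnt m p d s1 : ℝ) * (Cnt m p d (s - s1) : ℝ)
            ≤ ((Finset.Icc (-(Wf m p d)) (Wf m p d)).card : ℝ) * (upd * upd) := by
          have := Finset.sum_le_card_nsmul (Finset.Icc (-(Wf m p d)) (Wf m p d))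
            (fun s1 => (Cnt m p d s1 : ℝ) * (Cnt m p d (s - s1) : ℝ)) (upd * upd) hterm
          simpa [nsmul_eq_mul] using this
        have hf1 := f1 d hdκ
        have hchain : ((Finset.Icc (-(Wf m p d)) (Wf m p d)).card : ℝ) * (upd * upd)
            ≤ Mr m p * p ^ d * (1 + p) * (upd * upd) := by
          apply mul_le_mul_of_nonneg_right _ (by positivity)
          rw [hcardIcc]
          linarith
        linarith
  -- conclude Nd bounds
  intro d hd1 hdκ
  have hcardIcc : ((Finset.Icc (-(Wf m p d)) (Wf m p d)).card : ℝ) = 2 * (Wf m p d : ℝ) + 1 := by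
    rw [Int.card_Icc]
    have h0 := hW0 d
    have : ((Wf m p d + 1 - -(Wf m p d)).toNat : ℤ) = 2 * Wf m p d + 1 := by
      rw [Int.toNat_of_nonneg (by omega)]; ring
    exact_mod_cast congrArg (fun z : ℤ => (z : ℝ)) this
  have hdlt : d + 1 ≤ 2 ^ d := by have := @Nat.lt_two_pow_self d; omega
  have h12 : 1 ≤ (2:ℕ) ^ (d - 1) := Nat.one_le_two_pow
  set lowd := Mr m p ^ (2 ^ d - 1) * p ^ (2 ^ d - 1 - d) * (1 - 3 * p) ^ (2 ^ d - 1) with hlowd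
  set upd := Mr m p ^ (2 ^ d - 1) * p ^ (2 ^ d - 1 - d) * (1 + p) ^ (2 ^ (d - 1) - 1) with hupd
  have hup0 : 0 ≤ upd := by rw [hupd]; positivity
  have hlow0 : 0 ≤ lowd := by rw [hlowd]; positivity
  have h3p : 0 < 1 - 3 * p := by linarith
  have a1 : Mr m p ^ (2 ^ d) = Mr m p ^ (2 ^ d - 1) * Mr m p := by
    rw [← pow_succ]; congr 1; omega
  have a2 : p ^ (2 ^ d - 1) = p ^ (2 ^ d - 1 - d) * p ^ d := by
    rw [← pow_add]; congr 1; omega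
  have a3 : (1 + p) ^ (2 ^ (d - 1)) = (1 + p) ^ (2 ^ (d - 1) - 1) * (1 + p) := by
    rw [← pow_succ]; congr 1; omega
  have a4 : (1 - 3 * p) ^ (2 ^ d) = (1 - 3 * p) ^ (2 ^ d - 1) * (1 - 3 * p) := by
    rw [← pow_succ]; congr 1; omega
  have e_up : Mr m p * p ^ d * (1 + p) * upd
      = Mr m p ^ (2 ^ d) * p ^ (2 ^ d - 1) * (1 + p) ^ (2 ^ (d - 1)) := by
    rw [hupd, a1, a3]
    rw [show Mr m p ^ (2 ^ d - 1) * Mr m p * p ^ (2 ^ d - 1) = Mr m p ^ (2 ^ d - 1) * Mr m p * (p ^ (2 ^ d - 1 - d) * p ^ d) from by rw [← a2]]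
    ring
  have e_low : Mr m p * p ^ d * (1 - 3 * p) * lowd
      = Mr m p ^ (2 ^ d) * p ^ (2 ^ d - 1) * (1 - 3 * p) ^ (2 ^ d) := by
    rw [hlowd, a1, a4]
    rw [show Mr m p ^ (2 ^ d - 1) * Mr m p * p ^ (2 ^ d - 1) = Mr m p ^ (2 ^ d - 1) * Mr m p * (p ^ (2 ^ d - 1 - d) * p ^ d) from by rw [← a2]]
    ring
  have hmain := main d hd1 hdκ
  rw [nd_eq_sum d hd1, intRange_eq]
  have hcast : ((∑ s ∈ Finset.Icc (-(Wf m p d)) (Wf m p d), Cnt m p d s : ℕ) : ℝ)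
      = ∑ s ∈ Finset.Icc (-(Wf m p d)) (Wf m p d), (Cnt m p d s : ℝ) := by push_cast; rfl
  rw [hcast]
  constructor
  · rw [← e_low]
    have hstep : ((Finset.Icc (-(Wf m p d)) (Wf m p d)).card : ℝ) * lowd
        ≤ ∑ s ∈ Finset.Icc (-(Wf m p d)) (Wf m p d), (Cnt m p d s : ℝ) := by
      have := Finset.card_nsmul_le_sum (Finset.Icc (-(Wf m p d)) (Wf m p d))
        (fun s => (Cnt m p d s : ℝ)) lowd (fun s hs => (hmain s hs).1)
      simpa [nsmul_eq_mul] using this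
    have hf2 := f2 d hdκ
    have hchain : Mr m p * p ^ d * (1 - 3 * p) * lowd
        ≤ ((Finset.Icc (-(Wf m p d)) (Wf m p d)).card : ℝ) * lowd := by
      apply mul_le_mul_of_nonneg_right _ hlow0
      rw [hcardIcc]
      nlinarith [pow_pos hp0 d, mul_pos hMpos (pow_pos hp0 d)]
    linarith
  · rw [← e_up]
    have hstep : ∑ s ∈ Finset.Icc (-(Wf m p d)) (Wf m p d), (Cnt m p d s : ℝ)
        ≤ ((Finset.Icc (-(Wf m p d)) (Wf m p d)).card : ℝ) * upd := by
      have := Finset.sum_le_card_nsmul (Finset.Icc (-(Wf m p d)) (Wf m p d))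
        (fun s => (Cnt m p d s : ℝ)) upd (fun s hs => (hmain s hs).2)
      simpa [nsmul_eq_mul] using this
    have hf1 := f1 d hdκ
    have hchain : ((Finset.Icc (-(Wf m p d)) (Wf m p d)).card : ℝ) * upd
        ≤ Mr m p * p ^ d * (1 + p) * upd := by
      apply mul_le_mul_of_nonneg_right _ hup0
      rw [hcardIcc]
      linarith
    linarith

end Bounds


/-! ### expectation reduction -/

def Q (m : ℕ) (p : ℝ) (d : ℕ) (y : Fin (2 ^ d) → V m) : Prop :=
  ∀ t ∈ Finset.Icc 1 d, ∀ j < 2 ^ (d - t),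
    (∑ r : Fin (2 ^ d), if j * 2 ^ t ≤ (r : ℕ) ∧ (r : ℕ) < (j + 1) * 2 ^ t
        then ((y r : ℤ)) else 0) ∈ intRange ((m : ℝ) * p ^ t)

lemma Q_iff_filt {m : ℕ} {p : ℝ} (d : ℕ) (y : Fin (2 ^ d) → V m) :
    Q m p d y ↔ Filt m p d (ext m y) := by
  unfold Q Filt
  refine forall₂_congr fun t ht => forall₂_congr fun j hj => ?_
  have hsum : (∑ r : Fin (2 ^ d), if j * 2 ^ t ≤ (r : ℕ) ∧ (r : ℕ) < (j + 1) * 2 ^ t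
        then ((y r : ℤ)) else 0)
      = ∑ r ∈ Finset.range (2 ^ d), if j * 2 ^ t ≤ r ∧ r < (j + 1) * 2 ^ t
          then ext m y r else 0 := by
    rw [← Fin.sum_univ_eq_sum_range
      (fun r => if j * 2 ^ t ≤ r ∧ r < (j + 1) * 2 ^ t then ext m y r else 0) (2 ^ d)]
    refine Finset.sum_congr rfl fun r _ => ?_
    by_cases hc : j * 2 ^ t ≤ (r : ℕ) ∧ (r : ℕ) < (j + 1) * 2 ^ t
    · rw [if_pos hc, if_pos hc]
      simp only [ext]
      rw [dif_pos r.isLt]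
    · rw [if_neg hc, if_neg hc]
  rw [hsum]

lemma nd_eq_Q (m : ℕ) (p : ℝ) (d : ℕ) :
    Nat.card {y : Fin (2 ^ d) → V m // Q m p d y} = Nd m p d :=
  Nat.card_congr (Equiv.subtypeEquivRight fun y => Q_iff_filt d y)

lemma nd_zero (m : ℕ) (p : ℝ) : Nd m p 0 = (intRange ((m : ℝ))).card := by
  classical
  rw [Nd, Nat.card_congr (Equiv.subtypeUnivEquiv (fun y => filt_zero (ext m y))),
    Nat.card_eq_fintype_card, Fintype.card_fun, Fintype.card_fin, Fintype.card_coe]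
  norm_num

lemma count_L (κ n m : ℕ) (p : ℝ) (d : ℕ) (hd : d ≤ κ) (i : Fin (2 ^ (κ - d)))
    (ℓ : Fin (2 ^ d) → Fin n) :
    Nat.card {L : Fin (2 ^ κ) → Fin n → V m //
      ∀ t ∈ Finset.Icc 1 d, ∀ j < 2 ^ (d - t),
        (∑ r : Fin (2 ^ d), if j * 2 ^ t ≤ (r : ℕ) ∧ (r : ℕ) < (j + 1) * 2 ^ t
            then ((L (blockIdx d hd i r) (ℓ r) : ℤ)) else 0) ∈ intRange ((m : ℝ) * p ^ t)}
    = Nd m p d * (intRange ((m : ℝ))).card ^ (2 ^ κ * n - 2 ^ d) := by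
  classical
  set e : Fin (2 ^ d) → Fin (2 ^ κ) × Fin n := fun r => (blockIdx d hd i r, ℓ r) with he_def
  have he : Function.Injective e := by
    intro r1 r2 h
    rw [he_def] at h
    have h1 : (blockIdx d hd i r1 : Fin (2 ^ κ)) = blockIdx d hd i r2 := congrArg Prod.fst h
    have h2 : (i : ℕ) * 2 ^ d + (r1 : ℕ) = (i : ℕ) * 2 ^ d + (r2 : ℕ) := congrArg Fin.val h1
    exact Fin.ext (by omega)
  have step1 : Nat.card {L : Fin (2 ^ κ) → Fin n → V m //
      ∀ t ∈ Finset.Icc 1 d, ∀ j < 2 ^ (d - t),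
        (∑ r : Fin (2 ^ d), if j * 2 ^ t ≤ (r : ℕ) ∧ (r : ℕ) < (j + 1) * 2 ^ t
            then ((L (blockIdx d hd i r) (ℓ r) : ℤ)) else 0) ∈ intRange ((m : ℝ) * p ^ t)}
      = Nat.card {f : Fin (2 ^ κ) × Fin n → V m // Q m p d (f ∘ e)} :=
    (Nat.card_congr ((Equiv.curry (Fin (2 ^ κ)) (Fin n) (V m)).subtypeEquiv
      (fun f => Iff.rfl))).symm
  rw [step1, card_comp e he (Q m p d), nd_eq_Q, Fintype.card_coe, Fintype.card_prod,
    Fintype.card_fin, Fintype.card_fin, Fintype.card_fin]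

lemma sum_lls (κ n m : ℕ) (p : ℝ) (d : ℕ) (hd : d ≤ κ) (i : Fin (2 ^ (κ - d))) :
    (∑ L : Fin (2 ^ κ) → Fin n → V m,
        levelListSize κ n m p (fun a b => (L a b : ℤ)) d hd i)
      = n ^ 2 ^ d * (Nd m p d * (intRange ((m : ℝ))).card ^ (2 ^ κ * n - 2 ^ d)) := by
  classical
  have hswap := sum_card_swap (A := Fin (2 ^ κ) → Fin n → V m) (B := Fin (2 ^ d) → Fin n)
    (fun L ℓ => ∀ t ∈ Finset.Icc 1 d, ∀ j < 2 ^ (d - t),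
      (∑ r : Fin (2 ^ d), if j * 2 ^ t ≤ (r : ℕ) ∧ (r : ℕ) < (j + 1) * 2 ^ t
          then ((L (blockIdx d hd i r) (ℓ r) : ℤ)) else 0) ∈ intRange ((m : ℝ) * p ^ t))
  calc (∑ L : Fin (2 ^ κ) → Fin n → V m,
        levelListSize κ n m p (fun a b => (L a b : ℤ)) d hd i)
      = ∑ ℓ : Fin (2 ^ d) → Fin n, Nat.card {L : Fin (2 ^ κ) → Fin n → V m //
          ∀ t ∈ Finset.Icc 1 d, ∀ j < 2 ^ (d - t),
            (∑ r : Fin (2 ^ d), if j * 2 ^ t ≤ (r : ℕ) ∧ (r : ℕ) < (j + 1) * 2 ^ t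
                then ((L (blockIdx d hd i r) (ℓ r) : ℤ)) else 0) ∈ intRange ((m : ℝ) * p ^ t)} :=
      hswap
    _ = ∑ _ℓ : Fin (2 ^ d) → Fin n,
          (Nd m p d * (intRange ((m : ℝ))).card ^ (2 ^ κ * n - 2 ^ d)) :=
      Finset.sum_congr rfl fun ℓ _ => count_L κ n m p d hd i ℓ
    _ = n ^ 2 ^ d * (Nd m p d * (intRange ((m : ℝ))).card ^ (2 ^ κ * n - 2 ^ d)) := by
      rw [Finset.sum_const, Finset.card_univ, Fintype.card_fun, Fintype.card_fin,
        Fintype.card_fin, smul_eq_mul]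

lemma exp_eq (κ n m : ℕ) (p : ℝ) (hn : 0 < n) :
    expTotalSize κ n m p
      = ∑ d ∈ Finset.range (κ + 1), (2 : ℝ) ^ (κ - d) * (n : ℝ) ^ 2 ^ d * (Nd m p d : ℝ)
          / ((intRange ((m : ℝ))).card : ℝ) ^ 2 ^ d := by
  classical
  have hM1 : 1 ≤ (intRange ((m : ℝ))).card := by
    rw [intRange]
    rw [Int.card_Icc]
    have h0 : (0:ℤ) ≤ ⌊(m:ℝ)/2⌋ := Int.floor_nonneg.mpr (by positivity)
    omega
  have hM0 : (0:ℝ) < ((intRange ((m : ℝ))).card : ℝ) := by exact_mod_cast hM1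
  have hcardΩ : (Fintype.card (Fin (2 ^ κ) → Fin n → V m) : ℝ)
      = ((intRange ((m : ℝ))).card : ℝ) ^ (2 ^ κ * n) := by
    rw [Fintype.card_fun, Fintype.card_fun, Fintype.card_fin, Fintype.card_fin,
      Fintype.card_coe, ← pow_mul, mul_comm n (2 ^ κ)]
    push_cast
    rfl
  rw [expTotalSize, hcardΩ]
  have hnum : (∑ L : Fin (2 ^ κ) → Fin n → V m,
      (totalSize κ n m p (fun a b => ((L a b : ℤ))) : ℝ))
      = ∑ d ∈ (Finset.range (κ + 1)).attach,
          (2 : ℝ) ^ (κ - (d : ℕ)) * (n : ℝ) ^ 2 ^ (d : ℕ) * (Nd m p (d : ℕ) : ℝ)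
            * ((intRange ((m : ℝ))).card : ℝ) ^ (2 ^ κ * n - 2 ^ (d : ℕ)) := by
    simp only [totalSize, Nat.cast_sum]
    rw [Finset.sum_comm]
    refine Finset.sum_congr rfl fun d _ => ?_
    rw [Finset.sum_comm]
    have hone : ∀ i : Fin (2 ^ (κ - (d : ℕ))),
        (∑ L : Fin (2 ^ κ) → Fin n → V m,
          (levelListSize κ n m p (fun a b => ((L a b : ℤ))) (d : ℕ)
            (Nat.lt_succ_iff.mp (Finset.mem_range.mp d.property)) i : ℝ))
        = (n : ℝ) ^ 2 ^ (d : ℕ) * (Nd m p (d : ℕ) : ℝ)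
            * ((intRange ((m : ℝ))).card : ℝ) ^ (2 ^ κ * n - 2 ^ (d : ℕ)) := by
      intro i
      rw [← Nat.cast_sum]
      rw [sum_lls κ n m p (d : ℕ) (Nat.lt_succ_iff.mp (Finset.mem_range.mp d.property)) i]
      push_cast
      ring
    rw [Finset.sum_congr rfl fun i _ => hone i, Finset.sum_const, Finset.card_univ,
      Fintype.card_fin, nsmul_eq_mul]
    push_cast
    ring
  rw [hnum, Finset.sum_div]
  rw [← Finset.sum_attach (Finset.range (κ + 1)) (fun d => (2 : ℝ) ^ (κ - d) * (n : ℝ) ^ 2 ^ d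
      * (Nd m p d : ℝ) / ((intRange ((m : ℝ))).card : ℝ) ^ 2 ^ d)]
  refine Finset.sum_congr rfl fun d _ => ?_
  have hdκ' : (d : ℕ) ≤ κ := Nat.lt_succ_iff.mp (Finset.mem_range.mp d.property)
  have hd2 : 2 ^ (d : ℕ) ≤ 2 ^ κ * n := by
    have h1 : 2 ^ (d : ℕ) ≤ 2 ^ κ := Nat.pow_le_pow_right (by norm_num) hdκ'
    have h2 : 2 ^ κ * 1 ≤ 2 ^ κ * n := Nat.mul_le_mul_left _ hn
    omega
  have hpow : ((intRange ((m : ℝ))).card : ℝ) ^ (2 ^ κ * n - 2 ^ (d : ℕ))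
      * ((intRange ((m : ℝ))).card : ℝ) ^ (2 ^ (d : ℕ))
      = ((intRange ((m : ℝ))).card : ℝ) ^ (2 ^ κ * n) := by
    rw [← pow_add]
    congr 1
    omega
  field_simp
  rw [mul_assoc, hpow]


lemma card_intRange_m (m : ℕ) (p : ℝ) : ((intRange ((m : ℝ))).card : ℝ) = Mr m p := by
  rw [intRange_m_eq m p, Int.card_Icc, Mr]
  have h0 : (0:ℤ) ≤ Wf m p 0 := Int.floor_nonneg.mpr (by rw [pow_zero, mul_one]; positivity)
  have h1 : ((Wf m p 0 + 1 - -(Wf m p 0)).toNat : ℤ) = 2 * Wf m p 0 + 1 := by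
    rw [Int.toNat_of_nonneg (by omega)]; ring
  exact_mod_cast congrArg (fun z : ℤ => (z : ℝ)) h1

end KTree


open KTree in
theorem kTree_complexity_bounds
    (κ n m : ℕ) (hκ : 2 ≤ κ) (hn : 0 < n) (hm : 0 < m)
    (hm' : (30 : ℝ) ^ (κ + 1) < m)
    (p c : ℝ) (hp : p = (m : ℝ) ^ (-(1 / ((κ : ℝ) + 1)))) (hc : c = p * n) :
    (2 ^ κ : ℝ) * n * (1 + ∑ d ∈ Finset.Icc 1 κ, c ^ (2 ^ d - 1) / (2 : ℝ) ^ d) *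
        (1 - 37 * p) ^ (2 ^ κ - 1)
      ≤ expTotalSize κ n m p ∧
    expTotalSize κ n m p
      ≤ (2 ^ κ : ℝ) * n * (1 + ∑ d ∈ Finset.Icc 1 κ, c ^ (2 ^ d - 1) / (2 : ℝ) ^ d) *
        (1 + 37 * p) ^ (2 ^ κ - 1) := by
  have hκ1 : (0:ℝ) < (κ : ℝ) + 1 := by positivity
  have hm0 : (0:ℝ) ≤ (m : ℝ) := Nat.cast_nonneg m
  set q : ℝ := (m : ℝ) ^ ((1 : ℝ) / ((κ : ℝ) + 1)) with hqdef
  have hq30 : 30 < q := by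
    have h1 : ((30:ℝ) ^ (κ + 1) : ℝ) ^ ((1:ℝ)/((κ:ℝ)+1)) < (m:ℝ) ^ ((1:ℝ)/((κ:ℝ)+1)) :=
      Real.rpow_lt_rpow (by positivity) hm' (by positivity)
    have h2 : ((30:ℝ) ^ (κ + 1)) ^ ((1:ℝ)/((κ:ℝ)+1)) = 30 := by
      rw [← Real.rpow_natCast (30:ℝ) (κ + 1), ← Real.rpow_mul (by norm_num)]
      rw [show ((κ + 1 : ℕ) : ℝ) * ((1:ℝ)/((κ:ℝ)+1)) = 1 by push_cast; field_simp]
      exact Real.rpow_one 30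
    rw [hqdef]
    rw [h2] at h1
    exact h1
  have hpq : p = q⁻¹ := by
    rw [hp, hqdef, ← Real.rpow_neg hm0]
  have hmq : (m : ℝ) = q ^ (κ + 1) := by
    rw [hqdef, ← Real.rpow_natCast ((m:ℝ) ^ ((1:ℝ)/((κ:ℝ)+1))) (κ + 1), ← Real.rpow_mul hm0]
    rw [show ((1:ℝ)/((κ:ℝ)+1)) * ((κ + 1 : ℕ) : ℝ) = 1 by push_cast; field_simp]
    exact (Real.rpow_one _).symm
  have hq0 : (0:ℝ) < q := by linarith
  have hp0 : 0 < p := by rw [hpq]; positivity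
  have hp30 : p < 1/30 := by
    rw [hpq, inv_lt_comm₀ hq0 (by norm_num)]
    simpa using hq30
  have hNB := nd_bounds hq30 hpq hmq
  have hMcard1 : 1 ≤ (intRange ((m : ℝ))).card := by
    rw [intRange, Int.card_Icc]
    have h0 : (0:ℤ) ≤ ⌊(m:ℝ)/2⌋ := Int.floor_nonneg.mpr (by positivity)
    omega
  have hMrpos : 0 < Mr m p := by
    rw [← card_intRange_m m p]
    exact_mod_cast hMcard1
  -- rewrite expectation
  rw [exp_eq κ n m p hn]
  simp only [card_intRange_m m p]
  have hsplit : Finset.range (κ + 1) = insert 0 (Finset.Icc 1 κ) := by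
    ext a
    simp only [Finset.mem_range, Finset.mem_insert, Finset.mem_Icc]
    omega
  have h0notin : (0 : ℕ) ∉ Finset.Icc 1 κ := by simp
  rw [hsplit, Finset.sum_insert h0notin]
  have hterm0 : (2:ℝ) ^ (κ - 0) * (n:ℝ) ^ 2 ^ 0 * (Nd m p 0 : ℝ) / Mr m p ^ 2 ^ 0
      = 2 ^ κ * n := by
    have hnd0 : (Nd m p 0 : ℝ) = Mr m p := by
      rw [nd_zero m p]; exact card_intRange_m m p
    rw [hnd0]
    norm_num
    rw [mul_div_assoc, div_self (ne_of_gt hMrpos), mul_one]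
  rw [hterm0]
  -- identities
  have h2d1 : ∀ d : ℕ, 1 ≤ d → (1:ℕ) ≤ 2 ^ d := fun d _ => Nat.one_le_two_pow
  have hid : ∀ d : ℕ, 1 ≤ d → d ≤ κ →
      (2:ℝ) ^ κ * n * (c ^ (2 ^ d - 1) / (2:ℝ) ^ d) = 2 ^ (κ - d) * (n:ℝ) ^ 2 ^ d * p ^ (2 ^ d - 1) := by
    intro d hd1 hdκ
    have h2 : (2:ℝ) ^ (κ - d) * 2 ^ d = 2 ^ κ := by
      rw [← pow_add]; congr 1; omega
    have hn2 : (n:ℝ) ^ 2 ^ d = (n:ℝ) ^ (2 ^ d - 1) * n := by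
      rw [← pow_succ]; congr 1; have := h2d1 d hd1; omega
    rw [hc, mul_pow, hn2, ← h2]
    have h2dne : ((2:ℝ) ^ d) ≠ 0 := by positivity
    field_simp
  have hKodd : 2 ^ (κ - 1) + 2 ^ (κ - 1) = 2 ^ κ := by
    have hκ' : κ - 1 + 1 = κ := by omega
    calc 2 ^ (κ - 1) + 2 ^ (κ - 1) = 2 ^ (κ - 1 + 1) := by rw [pow_succ]; omega
    _ = 2 ^ κ := by rw [hκ']
  have hexpK : ∀ d : ℕ, 1 ≤ d → d ≤ κ → 2 ^ (d - 1) ≤ 2 ^ κ - 1 := by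
    intro d hd1 hdκ
    have e1 : (2:ℕ) ^ (d - 1) ≤ 2 ^ (κ - 1) := Nat.pow_le_pow_right (by norm_num) (by omega)
    have e3 : (1:ℕ) ≤ 2 ^ (κ - 1) := Nat.one_le_two_pow
    omega
  have hdiv_up : ∀ d : ℕ, 1 ≤ d → d ≤ κ →
      (Nd m p d : ℝ) / Mr m p ^ 2 ^ d ≤ p ^ (2 ^ d - 1) * (1 + 37 * p) ^ (2 ^ κ - 1) := by
    intro d hd1 hdκ
    have hup := (hNB d hd1 hdκ).2
    have hMrpow : (0:ℝ) < Mr m p ^ 2 ^ d := pow_pos hMrpos _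
    rw [div_le_iff₀ hMrpow]
    calc (Nd m p d : ℝ) ≤ Mr m p ^ 2 ^ d * p ^ (2 ^ d - 1) * (1 + p) ^ 2 ^ (d - 1) := hup
    _ ≤ Mr m p ^ 2 ^ d * p ^ (2 ^ d - 1) * (1 + 37 * p) ^ (2 ^ κ - 1) := by
        apply mul_le_mul_of_nonneg_left _
          (mul_nonneg (pow_nonneg hMrpos.le _) (pow_nonneg hp0.le _))
        calc (1 + p) ^ 2 ^ (d - 1) ≤ (1 + 37 * p) ^ 2 ^ (d - 1) :=
            pow_le_pow_left₀ (by linarith) (by linarith) _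
        _ ≤ (1 + 37 * p) ^ (2 ^ κ - 1) :=
            pow_le_pow_right₀ (by linarith) (hexpK d hd1 hdκ)
    _ = p ^ (2 ^ d - 1) * (1 + 37 * p) ^ (2 ^ κ - 1) * Mr m p ^ 2 ^ d := by ring
  -- expand RHS/LHS products
  have hexpand : ∀ X : ℝ,
      (2 ^ κ : ℝ) * n * (1 + ∑ d ∈ Finset.Icc 1 κ, c ^ (2 ^ d - 1) / (2 : ℝ) ^ d) * X
      = (2 ^ κ : ℝ) * n * X
        + ∑ d ∈ Finset.Icc 1 κ, (2 ^ κ : ℝ) * n * (c ^ (2 ^ d - 1) / (2 : ℝ) ^ d) * X := by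
    intro X
    rw [mul_add, add_mul, mul_one, Finset.mul_sum, Finset.sum_mul]
  constructor
  · -- lower bound
    rw [hexpand]
    by_cases h37 : 37 * p ≤ 1
    · apply add_le_add
      · have hb1 : (1 - 37 * p) ^ (2 ^ κ - 1) ≤ 1 := pow_le_one₀ (by linarith) (by linarith)
        have hb2 : (2 ^ κ : ℝ) * n * (1 - 37 * p) ^ (2 ^ κ - 1) ≤ (2 ^ κ : ℝ) * n * 1 :=
          mul_le_mul_of_nonneg_left hb1 (by positivity)
        linarith
      · apply Finset.sum_le_sum
        intro d hd
        rw [Finset.mem_Icc] at hd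
        have hd1 := hd.1
        have hdκ := hd.2
        have hlow := (hNB d hd1 hdκ).1
        have hMrpow : (0:ℝ) < Mr m p ^ 2 ^ d := pow_pos hMrpos _
        have hchain : p ^ (2 ^ d - 1) * (1 - 37 * p) ^ (2 ^ κ - 1)
            ≤ (Nd m p d : ℝ) / Mr m p ^ 2 ^ d := by
          rw [le_div_iff₀ hMrpow]
          have c1 : (1 - 37 * p) ^ (2 ^ κ - 1) ≤ (1 - 37 * p) ^ (2 ^ d - 1) := by
            apply pow_le_pow_of_le_one (by linarith) (by linarith)
            have := Nat.pow_le_pow_right (show 1 ≤ 2 by norm_num) hdκ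
            omega
          have c2 : (1 - 37 * p) ^ (2 ^ d - 1) ≤ (1 - 3 * p) ^ 2 ^ d := by
            have h2le : (2:ℕ) ≤ 2 ^ d := by
              calc (2:ℕ) = 2 ^ 1 := by norm_num
              _ ≤ 2 ^ d := Nat.pow_le_pow_right (by norm_num) hd1
            have e1 : (2:ℕ) ^ d - 1 = (2 ^ d - 2) + 1 := by omega
            have e2 : (2:ℕ) ^ d = (2 ^ d - 2) + 2 := by omega
            rw [e1, e2, pow_add, pow_add]
            apply mul_le_mul
            · exact pow_le_pow_left₀ (by linarith) (by linarith) _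
            · rw [pow_one]
              nlinarith
            · rw [pow_one]; linarith
            · exact pow_nonneg (by linarith) _
          calc p ^ (2 ^ d - 1) * (1 - 37 * p) ^ (2 ^ κ - 1) * Mr m p ^ 2 ^ d
              ≤ p ^ (2 ^ d - 1) * (1 - 3 * p) ^ 2 ^ d * Mr m p ^ 2 ^ d := by
                apply mul_le_mul_of_nonneg_right _ (le_of_lt hMrpow)
                apply mul_le_mul_of_nonneg_left (le_trans c1 c2) (pow_nonneg hp0.le _)
          _ = Mr m p ^ 2 ^ d * p ^ (2 ^ d - 1) * (1 - 3 * p) ^ 2 ^ d := by ring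
          _ ≤ (Nd m p d : ℝ) := hlow
        calc (2 ^ κ : ℝ) * n * (c ^ (2 ^ d - 1) / (2:ℝ) ^ d) * (1 - 37 * p) ^ (2 ^ κ - 1)
            = (2 ^ (κ - d) * (n:ℝ) ^ 2 ^ d * p ^ (2 ^ d - 1)) * (1 - 37 * p) ^ (2 ^ κ - 1) := by
              rw [hid d hd1 hdκ]
        _ = (2 ^ (κ - d) * (n:ℝ) ^ 2 ^ d) * (p ^ (2 ^ d - 1) * (1 - 37 * p) ^ (2 ^ κ - 1)) := by
              ring
        _ ≤ (2 ^ (κ - d) * (n:ℝ) ^ 2 ^ d) * ((Nd m p d : ℝ) / Mr m p ^ 2 ^ d) := by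
              apply mul_le_mul_of_nonneg_left hchain (by positivity)
        _ = 2 ^ (κ - d) * (n:ℝ) ^ 2 ^ d * (Nd m p d : ℝ) / Mr m p ^ 2 ^ d := by
              rw [mul_div_assoc]
    · -- 37 p > 1 : trivial
      push_neg at h37
      have hKoddP : Odd (2 ^ κ - 1) := by
        refine ⟨2 ^ (κ - 1) - 1, ?_⟩
        have e3 : (1:ℕ) ≤ 2 ^ (κ - 1) := Nat.one_le_two_pow
        omega
      have hneg : (1 - 37 * p) ^ (2 ^ κ - 1) ≤ 0 :=
        Odd.pow_nonpos hKoddP (by linarith)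
      have hSnn : 0 ≤ ∑ d ∈ Finset.Icc 1 κ, c ^ (2 ^ d - 1) / (2 : ℝ) ^ d := by
        apply Finset.sum_nonneg
        intro d _
        have hc0 : (0:ℝ) ≤ c := by rw [hc]; positivity
        exact div_nonneg (pow_nonneg hc0 _) (by positivity)
      have hA : (0:ℝ) ≤ (2 ^ κ : ℝ) * n * (1 + ∑ d ∈ Finset.Icc 1 κ, c ^ (2 ^ d - 1) / (2 : ℝ) ^ d) :=
        mul_nonneg (by positivity) (by linarith)
      have hL : (2 ^ κ : ℝ) * n * (1 + ∑ d ∈ Finset.Icc 1 κ, c ^ (2 ^ d - 1) / (2 : ℝ) ^ d) *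
          (1 - 37 * p) ^ (2 ^ κ - 1) ≤ 0 :=
        mul_nonpos_iff.mpr (Or.inl ⟨hA, hneg⟩)
      rw [hexpand ((1 - 37 * p) ^ (2 ^ κ - 1))] at hL
      have hR : (0:ℝ) ≤ (2 ^ κ : ℝ) * n + ∑ d ∈ Finset.Icc 1 κ,
          2 ^ (κ - d) * (n:ℝ) ^ 2 ^ d * (Nd m p d : ℝ) / Mr m p ^ 2 ^ d := by
        have hsum : (0:ℝ) ≤ ∑ d ∈ Finset.Icc 1 κ,
            2 ^ (κ - d) * (n:ℝ) ^ 2 ^ d * (Nd m p d : ℝ) / Mr m p ^ 2 ^ d := by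
          apply Finset.sum_nonneg
          intro d _
          exact div_nonneg (by positivity) (pow_nonneg hMrpos.le _)
        have h2n : (0:ℝ) ≤ (2 ^ κ : ℝ) * n := by positivity
        linarith
      linarith
  · -- upper bound
    rw [hexpand]
    apply add_le_add
    · have hb1 : (1:ℝ) ≤ (1 + 37 * p) ^ (2 ^ κ - 1) := one_le_pow₀ (by linarith)
      have hb2 : (2 ^ κ : ℝ) * n * 1 ≤ (2 ^ κ : ℝ) * n * (1 + 37 * p) ^ (2 ^ κ - 1) :=
        mul_le_mul_of_nonneg_left hb1 (by positivity)
      linarith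
    · apply Finset.sum_le_sum
      intro d hd
      rw [Finset.mem_Icc] at hd
      have hd1 := hd.1
      have hdκ := hd.2
      calc 2 ^ (κ - d) * (n:ℝ) ^ 2 ^ d * (Nd m p d : ℝ) / Mr m p ^ 2 ^ d
          = (2 ^ (κ - d) * (n:ℝ) ^ 2 ^ d) * ((Nd m p d : ℝ) / Mr m p ^ 2 ^ d) := by
            rw [mul_div_assoc]
      _ ≤ (2 ^ (κ - d) * (n:ℝ) ^ 2 ^ d) * (p ^ (2 ^ d - 1) * (1 + 37 * p) ^ (2 ^ κ - 1)) := by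
            apply mul_le_mul_of_nonneg_left (hdiv_up d hd1 hdκ) (by positivity)
      _ = (2 ^ (κ - d) * (n:ℝ) ^ 2 ^ d * p ^ (2 ^ d - 1)) * (1 + 37 * p) ^ (2 ^ κ - 1) := by
            ring
      _ = (2 ^ κ : ℝ) * n * (c ^ (2 ^ d - 1) / (2 : ℝ) ^ d) * (1 + 37 * p) ^ (2 ^ κ - 1) := by
            rw [hid d hd1 hdκ]
end

section
/- Let k ≥ 2 be a power of 2, let n, m be positive integers, and let p ∈ (0,1] satisfy m > 7k, p·k > (7/m)^(k/2 − 1), m·p^(log k) > 30, and p < 1/30. Then (n^k p^k)/(m·p^(log k + 1)) · (1 − p)^(k−1) · (1 − 35/(m·p^(log k)))^(k−1) ≤ E[C] ≤ (n^k p^k)/(m·p^(log k + 1)) · (1 + p)^(k−1) · (1 + 35/(m·p^(log k)))^(k−1). -/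
open Finset

section KTreeAux

variable (m : ℕ) (p : ℝ)

/-- tree counting function -/
noncomputable def cnt : ℕ → ℤ → ℕ
  | 0, s => if s ∈ intRange ((m : ℝ) * p ^ 0) then 1 else 0
  | (d+1), s => if s ∈ intRange ((m : ℝ) * p ^ (d+1)) then
      ∑ a ∈ intRange ((m : ℝ) * p ^ d), cnt d a * cnt d (s - a) else 0

def Ok (κ : ℕ) (x : Fin (2 ^ κ) → ℤ) : Prop :=
  ∀ d ∈ Finset.Icc 1 κ, ∀ i < 2 ^ (κ - d),
    (∑ j : Fin (2 ^ κ), if i * 2 ^ d ≤ (j : ℕ) ∧ (j : ℕ) < (i + 1) * 2 ^ d then x j else 0)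
      ∈ intRange ((m : ℝ) * p ^ d)

open Classical in
noncomputable def tupleSet (d : ℕ) (s : ℤ) : Finset (Fin (2 ^ d) → ℤ) :=
  (Fintype.piFinset fun _ => intRange (m : ℝ)).filter
    (fun x => Ok m p d x ∧ ∑ j, x j = s)

lemma mem_tupleSet {d : ℕ} {s : ℤ} {x : Fin (2 ^ d) → ℤ} :
    x ∈ tupleSet m p d s ↔
      (x ∈ Fintype.piFinset fun _ => intRange (m : ℝ)) ∧ Ok m p d x ∧ (∑ j, x j) = s := by
  classical
  rw [tupleSet]
  exact Finset.mem_filter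

end KTreeAux

section Glue

variable {κ : ℕ}

theorem pow_split (κ : ℕ) : 2 ^ (κ+1) = 2 ^ κ + 2 ^ κ := by rw [pow_succ, mul_two]

def pairFun (N : ℕ) (a b : Fin N → ℤ) : Fin (N + N) → ℤ :=
  fun j => if h : (j : ℕ) < N then a ⟨j, h⟩ else b ⟨(j : ℕ) - N, by omega⟩

def glue (a b : Fin (2 ^ κ) → ℤ) : Fin (2 ^ (κ+1)) → ℤ :=
  fun j => pairFun (2 ^ κ) a b (Fin.cast (pow_split κ) j)

@[simp] lemma pairFun_castAdd (N : ℕ) (a b : Fin N → ℤ) (i : Fin N) :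
    pairFun N a b (Fin.castAdd N i) = a i := by
  simp [pairFun, i.isLt]

@[simp] lemma pairFun_natAdd (N : ℕ) (a b : Fin N → ℤ) (i : Fin N) :
    pairFun N a b (Fin.natAdd N i) = b i := by
  have h1 : ¬ ((Fin.natAdd N i : Fin (N + N)) : ℕ) < N := by simp [Fin.natAdd]
  rw [pairFun, dif_neg h1]
  congr 1
  ext
  simp [Fin.natAdd]

@[simp] lemma pairFun_addNat (N : ℕ) (a b : Fin N → ℤ) (i : Fin N) :
    pairFun N a b (i.addNat N) = b i := by
  have h1 : ¬ ((i.addNat N : Fin (N + N)) : ℕ) < N := by simp [Fin.addNat]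
  rw [pairFun, dif_neg h1]
  congr 1
  ext
  simp [Fin.addNat]

/-- generic sum over glue, with a weight depending on the index value -/
lemma sum_glue_weighted (a b : Fin (2 ^ κ) → ℤ) (P : ℕ → Prop) [DecidablePred P] :
    (∑ j : Fin (2 ^ (κ+1)), if P (j : ℕ) then glue a b j else 0)
      = (∑ i : Fin (2 ^ κ), if P (i : ℕ) then a i else 0)
        + (∑ i : Fin (2 ^ κ), if P ((i : ℕ) + 2 ^ κ) then b i else 0) := by
  have h := pow_split κ
  rw [Fintype.sum_equiv (finCongr h)
      (fun j => if P ((j : Fin (2 ^ (κ+1))) : ℕ) then glue a b j else 0)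
      (fun j' => if P ((j' : Fin (2 ^ κ + 2 ^ κ)) : ℕ) then pairFun (2 ^ κ) a b j' else 0)]
  · rw [Fin.sum_univ_add]
    congr 1
    · apply Finset.sum_congr rfl; intro i _; simp
    · apply Finset.sum_congr rfl; intro i _; simp
  · intro j
    simp [glue, finCongr_apply]

lemma sum_glue (a b : Fin (2 ^ κ) → ℤ) :
    (∑ j, glue a b j) = (∑ i, a i) + (∑ i, b i) := by
  have := sum_glue_weighted a b (fun _ => True)
  simpa using this

lemma glue_left_inv (a b : Fin (2 ^ κ) → ℤ) (i : Fin (2 ^ κ)) :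
    glue a b (Fin.cast (pow_split κ).symm (Fin.castAdd (2 ^ κ) i)) = a i := by
  simp [glue]

lemma glue_right_inv (a b : Fin (2 ^ κ) → ℤ) (i : Fin (2 ^ κ)) :
    glue a b (Fin.cast (pow_split κ).symm (Fin.natAdd (2 ^ κ) i)) = b i := by
  simp [glue]

lemma glue_injective : Function.Injective (fun ab : (Fin (2^κ) → ℤ) × (Fin (2^κ) → ℤ) =>
    glue ab.1 ab.2) := by
  intro ⟨a, b⟩ ⟨a', b'⟩ h
  have h2 : glue a b = glue a' b' := h
  simp only [Prod.mk.injEq]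
  constructor
  · funext i
    have := congrFun h2 (Fin.cast (pow_split κ).symm (Fin.castAdd (2 ^ κ) i))
    rw [glue_left_inv, glue_left_inv] at this
    exact this
  · funext i
    have := congrFun h2 (Fin.cast (pow_split κ).symm (Fin.natAdd (2 ^ κ) i))
    rw [glue_right_inv, glue_right_inv] at this
    exact this

lemma glue_surj (x : Fin (2 ^ (κ+1)) → ℤ) :
    x = glue (fun i => x (Fin.cast (pow_split κ).symm (Fin.castAdd (2 ^ κ) i)))
             (fun i => x (Fin.cast (pow_split κ).symm (Fin.natAdd (2 ^ κ) i))) := by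
  funext j
  simp only [glue, pairFun]
  simp only [Fin.coe_cast]
  by_cases h : (j : ℕ) < 2 ^ κ
  · rw [dif_pos h]
    congr 1
  · rw [dif_neg h]
    congr 1
    ext
    simp only [Fin.coe_cast, Fin.natAdd]
    omega

end Glue

section Blocks

variable {κ : ℕ} (m : ℕ) (p : ℝ)

lemma glue_block_left (a b : Fin (2 ^ κ) → ℤ) (d i : ℕ) (hd : d ≤ κ) (hi : i < 2 ^ (κ - d)) :
    (∑ j : Fin (2 ^ (κ+1)), if i * 2 ^ d ≤ (j : ℕ) ∧ (j : ℕ) < (i+1) * 2 ^ d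
        then glue a b j else 0)
      = ∑ j : Fin (2 ^ κ), if i * 2 ^ d ≤ (j : ℕ) ∧ (j : ℕ) < (i+1) * 2 ^ d then a j else 0 := by
  have hpow : 2 ^ (κ - d) * 2 ^ d = 2 ^ κ := by rw [← pow_add]; congr 1; omega
  have hhi : (i + 1) * 2 ^ d ≤ 2 ^ κ := by
    calc (i + 1) * 2 ^ d ≤ 2 ^ (κ - d) * 2 ^ d := by
          exact Nat.mul_le_mul_right _ (by omega)
      _ = 2 ^ κ := hpow
  rw [sum_glue_weighted a b (fun t => i * 2 ^ d ≤ t ∧ t < (i+1) * 2 ^ d)]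
  have hz : ∀ j : Fin (2 ^ κ),
      (if i * 2 ^ d ≤ (j : ℕ) + 2 ^ κ ∧ (j : ℕ) + 2 ^ κ < (i+1) * 2 ^ d then b j else 0) = 0 :=
    fun j => if_neg (by omega)
  rw [Finset.sum_congr rfl (fun j _ => hz j), Finset.sum_const_zero, add_zero]

lemma glue_block_right (a b : Fin (2 ^ κ) → ℤ) (d i : ℕ) (hd : d ≤ κ) (hi : i < 2 ^ (κ - d)) :
    (∑ j : Fin (2 ^ (κ+1)), if (i + 2 ^ (κ - d)) * 2 ^ d ≤ (j : ℕ) ∧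
        (j : ℕ) < (i + 2 ^ (κ - d) + 1) * 2 ^ d then glue a b j else 0)
      = ∑ j : Fin (2 ^ κ), if i * 2 ^ d ≤ (j : ℕ) ∧ (j : ℕ) < (i+1) * 2 ^ d then b j else 0 := by
  have hpow : 2 ^ (κ - d) * 2 ^ d = 2 ^ κ := by rw [← pow_add]; congr 1; omega
  rw [sum_glue_weighted a b
    (fun t => (i + 2 ^ (κ - d)) * 2 ^ d ≤ t ∧ t < (i + 2 ^ (κ - d) + 1) * 2 ^ d)]
  have hz : ∀ j : Fin (2 ^ κ),
      (if (i + 2 ^ (κ - d)) * 2 ^ d ≤ (j : ℕ) ∧ (j : ℕ) < (i + 2 ^ (κ - d) + 1) * 2 ^ d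
        then a j else 0) = 0 := by
    intro j
    apply if_neg
    have hj := j.isLt
    have hlo : 2 ^ κ ≤ (i + 2 ^ (κ - d)) * 2 ^ d := by
      calc 2 ^ κ = 2 ^ (κ - d) * 2 ^ d := hpow.symm
        _ ≤ (i + 2 ^ (κ - d)) * 2 ^ d := Nat.mul_le_mul_right _ (by omega)
    omega
  rw [Finset.sum_congr rfl (fun j _ => hz j), Finset.sum_const_zero, zero_add]
  apply Finset.sum_congr rfl
  intro j _
  apply if_congr _ rfl rfl
  have h1 : (i + 2 ^ (κ - d)) * 2 ^ d = i * 2 ^ d + 2 ^ κ := by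
    rw [Nat.add_mul, hpow]
  have h2 : (i + 2 ^ (κ - d) + 1) * 2 ^ d = (i + 1) * 2 ^ d + 2 ^ κ := by
    rw [Nat.add_mul, Nat.add_mul, Nat.add_mul, hpow]; ring
  omega

lemma glue_block_top (a b : Fin (2 ^ κ) → ℤ) :
    (∑ j : Fin (2 ^ (κ+1)), if 0 * 2 ^ (κ+1) ≤ (j : ℕ) ∧ (j : ℕ) < (0+1) * 2 ^ (κ+1)
        then glue a b j else 0) = (∑ i, a i) + ∑ i, b i := by
  rw [← sum_glue a b]
  apply Finset.sum_congr rfl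
  intro j _
  exact if_pos (by simpa using j.isLt)

lemma ok_glue_iff (a b : Fin (2 ^ κ) → ℤ) :
    Ok m p (κ+1) (glue a b) ↔
      Ok m p κ a ∧ Ok m p κ b ∧ ((∑ i, a i) + ∑ i, b i) ∈ intRange ((m : ℝ) * p ^ (κ+1)) := by
  constructor
  · intro H
    refine ⟨?_, ?_, ?_⟩
    · intro d hd i hi
      rw [Finset.mem_Icc] at hd
      have hd2 : d ∈ Finset.Icc 1 (κ+1) := Finset.mem_Icc.2 (by omega)
      have hi2 : i < 2 ^ (κ + 1 - d) := by
        have : κ + 1 - d = (κ - d) + 1 := by omega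
        rw [this, pow_succ]
        omega
      have := H d hd2 i hi2
      rwa [glue_block_left a b d i (by omega) hi] at this
    · intro d hd i hi
      rw [Finset.mem_Icc] at hd
      have hd2 : d ∈ Finset.Icc 1 (κ+1) := Finset.mem_Icc.2 (by omega)
      have hi2 : i + 2 ^ (κ - d) < 2 ^ (κ + 1 - d) := by
        have : κ + 1 - d = (κ - d) + 1 := by omega
        rw [this, pow_succ]
        omega
      have := H d hd2 (i + 2 ^ (κ - d)) hi2
      rwa [glue_block_right a b d i (by omega) hi] at this
    · have := H (κ+1) (Finset.mem_Icc.2 (by omega)) 0 (by norm_num)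
      rwa [glue_block_top a b] at this
  · rintro ⟨Ha, Hb, Htop⟩ d hd i hi
    rw [Finset.mem_Icc] at hd
    by_cases hdtop : d = κ + 1
    · subst hdtop
      have hi0 : i = 0 := by simp at hi; omega
      subst hi0
      rwa [glue_block_top a b]
    · have hdκ : d ≤ κ := by omega
      have hsplit : κ + 1 - d = (κ - d) + 1 := by omega
      rw [hsplit, pow_succ] at hi
      by_cases hleft : i < 2 ^ (κ - d)
      · rw [glue_block_left a b d i hdκ hleft]
        exact Ha d (Finset.mem_Icc.2 (by omega)) i hleft
      · have hi' : i - 2 ^ (κ - d) < 2 ^ (κ - d) := by omega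
        have heq : i = (i - 2 ^ (κ - d)) + 2 ^ (κ - d) := by omega
        rw [heq, glue_block_right a b d _ hdκ hi']
        exact Hb d (Finset.mem_Icc.2 (by omega)) _ hi'

end Blocks

section CardTuple

variable (m : ℕ) (p : ℝ)

lemma top_block {N : ℕ} (x : Fin (2 ^ N) → ℤ) :
    (∑ j : Fin (2 ^ N), if 0 * 2 ^ N ≤ (j : ℕ) ∧ (j : ℕ) < (0+1) * 2 ^ N then x j else 0)
      = ∑ j, x j :=
  Finset.sum_congr rfl fun j _ => if_pos (by simpa using j.isLt)

lemma ok_zero (y : Fin (2 ^ 0) → ℤ) : Ok m p 0 y := by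
  intro d hd
  rw [Finset.mem_Icc] at hd
  omega

lemma sum_fin_pow_zero (y : Fin (2 ^ 0) → ℤ) : (∑ j, y j) = y 0 := by
  apply Finset.sum_eq_single_of_mem 0 (Finset.mem_univ _)
  intro b _ hb
  exact absurd (Fin.ext (by have := b.isLt; simp [pow_zero] at this; omega)) hb

lemma sum_mem_of_mem_tupleSet {d : ℕ} {s : ℤ} {x : Fin (2 ^ d) → ℤ}
    (hx : x ∈ tupleSet m p d s) : s ∈ intRange ((m : ℝ) * p ^ d) := by
  rw [mem_tupleSet] at hx
  obtain ⟨hpi, hok, hsum⟩ := hx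
  cases d with
  | zero =>
    rw [pow_zero, mul_one]
    rw [← hsum, sum_fin_pow_zero]
    exact (Fintype.mem_piFinset.1 hpi) 0
  | succ d =>
    have := hok (d+1) (Finset.mem_Icc.2 (by omega)) 0 (by simp)
    rwa [top_block, hsum] at this

lemma tupleSet_zero (s : ℤ) :
    tupleSet m p 0 s = if s ∈ intRange ((m : ℝ) * p ^ 0) then {fun _ => s} else ∅ := by
  ext y
  rw [mem_tupleSet]
  by_cases hs : s ∈ intRange ((m : ℝ) * p ^ 0)
  · rw [if_pos hs, Finset.mem_singleton]
    constructor
    · rintro ⟨hpi, -, hsum⟩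
      funext j
      have hj : j = 0 := Fin.ext (by have := j.isLt; simp [pow_zero] at this; omega)
      rw [hj, ← sum_fin_pow_zero y, hsum]
    · rintro rfl
      refine ⟨Fintype.mem_piFinset.2 fun i => ?_, ok_zero m p _, by rw [sum_fin_pow_zero]⟩
      rwa [pow_zero, mul_one] at hs
  · rw [if_neg hs, iff_false_intro (Finset.notMem_empty y), iff_false]
    rintro ⟨hpi, -, hsum⟩
    apply hs
    rw [pow_zero, mul_one, ← hsum, sum_fin_pow_zero]
    exact (Fintype.mem_piFinset.1 hpi) 0

lemma glue_mem_pi {κ : ℕ} {a b : Fin (2 ^ κ) → ℤ}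
    (ha : a ∈ Fintype.piFinset fun _ => intRange (m : ℝ))
    (hb : b ∈ Fintype.piFinset fun _ => intRange (m : ℝ)) :
    glue a b ∈ (Fintype.piFinset fun _ : Fin (2 ^ (κ+1)) => intRange (m : ℝ)) := by
  rw [Fintype.mem_piFinset] at ha hb ⊢
  intro j
  rw [glue, pairFun]
  split
  · exact ha _
  · exact hb _

lemma mem_tupleSet_succ_iff {d : ℕ} {s t : ℤ} {a b : Fin (2 ^ d) → ℤ}
    (hs : s ∈ intRange ((m : ℝ) * p ^ (d+1))) :
    glue a b ∈ tupleSet m p (d+1) s ∧ (∑ i, a i) = t ↔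
      a ∈ tupleSet m p d t ∧ b ∈ tupleSet m p d (s - t) := by
  rw [mem_tupleSet, mem_tupleSet, mem_tupleSet, ok_glue_iff, sum_glue]
  constructor
  · rintro ⟨⟨hpi, ⟨hoka, hokb, -⟩, hsum⟩, hta⟩
    have hpa : a ∈ Fintype.piFinset fun _ => intRange (m : ℝ) := by
      rw [Fintype.mem_piFinset] at hpi ⊢
      intro i
      have := hpi (Fin.cast (pow_split d).symm (Fin.castAdd (2 ^ d) i))
      rwa [glue_left_inv] at this
    have hpb : b ∈ Fintype.piFinset fun _ => intRange (m : ℝ) := by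
      rw [Fintype.mem_piFinset] at hpi ⊢
      intro i
      have := hpi (Fin.cast (pow_split d).symm (Fin.natAdd (2 ^ d) i))
      rwa [glue_right_inv] at this
    exact ⟨⟨hpa, hoka, hta⟩, ⟨hpb, hokb, by omega⟩⟩
  · rintro ⟨⟨hpa, hoka, hta⟩, ⟨hpb, hokb, htb⟩⟩
    refine ⟨⟨glue_mem_pi m hpa hpb, ⟨hoka, hokb, ?_⟩, ?_⟩, hta⟩
    · rw [hta, htb]; simpa using hs
    · omega

theorem card_tupleSet : ∀ (d : ℕ) (s : ℤ), (tupleSet m p d s).card = cnt m p d s := by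
  intro d
  induction d with
  | zero =>
    intro s
    rw [tupleSet_zero, cnt]
    split
    · exact Finset.card_singleton _
    · exact Finset.card_empty
  | succ d IH =>
    intro s
    rw [cnt]
    by_cases hs : s ∈ intRange ((m : ℝ) * p ^ (d+1))
    · rw [if_pos hs]
      have hset : tupleSet m p (d+1) s =
          (intRange ((m : ℝ) * p ^ d)).biUnion (fun t =>
            ((tupleSet m p d t) ×ˢ (tupleSet m p d (s - t))).image
              (fun q => glue q.1 q.2)) := by
        ext x
        rw [Finset.mem_biUnion]
        constructor
        · intro hx
          set a : Fin (2 ^ d) → ℤ :=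
            fun i => x (Fin.cast (pow_split d).symm (Fin.castAdd (2 ^ d) i)) with ha
          set b : Fin (2 ^ d) → ℤ :=
            fun i => x (Fin.cast (pow_split d).symm (Fin.natAdd (2 ^ d) i)) with hb
          have hxg : x = glue a b := glue_surj x
          rw [hxg] at hx
          have hab := (mem_tupleSet_succ_iff m p hs (t := ∑ i, a i)).1 ⟨hx, rfl⟩
          refine ⟨∑ i, a i, sum_mem_of_mem_tupleSet m p hab.1, ?_⟩
          rw [Finset.mem_image]
          exact ⟨(a, b), Finset.mem_product.2 ⟨hab.1, hab.2⟩, hxg.symm⟩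
        · rintro ⟨t, ht, hx⟩
          rw [Finset.mem_image] at hx
          obtain ⟨⟨a, b⟩, hq, rfl⟩ := hx
          rw [Finset.mem_product] at hq
          exact ((mem_tupleSet_succ_iff m p hs (t := t)).2 ⟨hq.1, hq.2⟩).1
      rw [hset, Finset.card_biUnion]
      · apply Finset.sum_congr rfl
        intro t _
        rw [Finset.card_image_of_injective _ glue_injective, Finset.card_product, IH, IH]
      · intro t _ t' _ htt'
        simp only [Function.onFun]
        rw [Finset.disjoint_left]
        intro x hx hx'
        rw [Finset.mem_image] at hx hx'
        obtain ⟨⟨a, b⟩, hq, hg⟩ := hx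
        obtain ⟨⟨a', b'⟩, hq', hg'⟩ := hx'
        rw [Finset.mem_product] at hq hq'
        have hgg : glue a b = glue a' b' := hg.trans hg'.symm
        have hpair : (a, b) = (a', b') := glue_injective hgg
        apply htt'
        obtain ⟨rfl, rfl⟩ : a = a' ∧ b = b' :=
          ⟨congrArg Prod.fst hpair, congrArg Prod.snd hpair⟩
        have h1 : (∑ i, a i) = t := ((mem_tupleSet m p).1 hq.1).2.2
        have h2 : (∑ i, a i) = t' := ((mem_tupleSet m p).1 hq'.1).2.2
        omega
    · rw [if_neg hs]
      rw [Finset.card_eq_zero, Finset.eq_empty_iff_forall_notMem]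
      intro x hx
      exact hs (sum_mem_of_mem_tupleSet m p hx)

end CardTuple

section CntBounds

variable (m : ℕ) (p : ℝ)

/-- half-width of the level-`d` interval -/
noncomputable def Fl (d : ℕ) : ℕ := (⌊(m : ℝ) * p ^ d / 2⌋).toNat

noncomputable def UbN : ℕ → ℕ
  | 0 => 1
  | (d+1) => UbN d ^ 2 * (2 * Fl m p d + 1)

noncomputable def LbN : ℕ → ℕ
  | 0 => 1
  | (d+1) => LbN d ^ 2 * (2 * Fl m p d + 1 - Fl m p (d+1))

variable {m p}

lemma floor_half_nonneg (hp : 0 ≤ p) (d : ℕ) : 0 ≤ ⌊(m : ℝ) * p ^ d / 2⌋ :=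
  Int.floor_nonneg.2 (by positivity)

lemma intRange_eq (hp : 0 ≤ p) (d : ℕ) :
    intRange ((m : ℝ) * p ^ d) = Finset.Icc (-(Fl m p d : ℤ)) (Fl m p d) := by
  rw [intRange, Fl, Int.toNat_of_nonneg (floor_half_nonneg hp d)]

lemma card_intRange (hp : 0 ≤ p) (d : ℕ) :
    (intRange ((m : ℝ) * p ^ d)).card = 2 * Fl m p d + 1 := by
  rw [intRange_eq hp d, Int.card_Icc]
  omega

lemma Fl_succ_le (hp : 0 ≤ p) (hp1 : p ≤ 1) (d : ℕ) : Fl m p (d+1) ≤ Fl m p d := by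
  apply Int.toNat_le_toNat
  apply Int.floor_le_floor
  have : (m : ℝ) * p ^ (d+1) ≤ (m : ℝ) * p ^ d := by
    apply mul_le_mul_of_nonneg_left _ (by positivity)
    exact pow_le_pow_of_le_one hp hp1 (by omega)
  linarith

lemma cnt_le_UbN (hp : 0 ≤ p) : ∀ d, ∀ t : ℤ, cnt m p d t ≤ UbN m p d := by
  intro d
  induction d with
  | zero =>
    intro t
    rw [cnt, UbN]
    split <;> omega
  | succ d IH =>
    intro t
    rw [cnt, UbN]
    split
    · calc (∑ a ∈ intRange ((m:ℝ) * p ^ d), cnt m p d a * cnt m p d (t - a))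
          ≤ (intRange ((m:ℝ) * p ^ d)).card • (UbN m p d * UbN m p d) := by
            apply Finset.sum_le_card_nsmul
            intro a _
            exact Nat.mul_le_mul (IH a) (IH (t - a))
        _ = UbN m p d ^ 2 * (2 * Fl m p d + 1) := by
            rw [card_intRange hp d, smul_eq_mul]
            ring
    · exact Nat.zero_le _

lemma LbN_le_cnt (hp : 0 ≤ p) (hp1 : p ≤ 1) :
    ∀ d, ∀ t ∈ intRange ((m : ℝ) * p ^ d), LbN m p d ≤ cnt m p d t := by
  intro d
  induction d with
  | zero =>
    intro t ht
    rw [cnt, if_pos ht, LbN]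
  | succ d IH =>
    intro t ht
    rw [cnt, if_pos ht, LbN]
    -- the overlap set
    set F : ℕ := Fl m p d with hF
    set F' : ℕ := Fl m p (d+1) with hF'
    have htF : -(F' : ℤ) ≤ t ∧ t ≤ (F' : ℤ) := by
      rw [intRange_eq hp (d+1), Finset.mem_Icc] at ht
      exact ht
    have hFF' : F' ≤ F := Fl_succ_le hp hp1 d
    set O : Finset ℤ := Finset.Icc (max (-(F:ℤ)) (t - F)) (min (F:ℤ) (t + F)) with hO
    have hOsub : O ⊆ intRange ((m:ℝ) * p ^ d) := by
      intro a ha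
      rw [hO, Finset.mem_Icc] at ha
      rw [intRange_eq hp d, Finset.mem_Icc]
      omega
    have hOcard : 2 * F + 1 - F' ≤ O.card := by
      rw [hO, Int.card_Icc]
      omega
    calc LbN m p d ^ 2 * (2 * F + 1 - F')
        ≤ O.card • (LbN m p d * LbN m p d) := by
          rw [smul_eq_mul]
          calc LbN m p d ^ 2 * (2 * F + 1 - F') ≤ (2 * F + 1 - F') * (LbN m p d * LbN m p d) := by
                ring_nf
                omega
            _ ≤ O.card * (LbN m p d * LbN m p d) := Nat.mul_le_mul_right _ hOcard
      _ ≤ ∑ a ∈ O, cnt m p d a * cnt m p d (t - a) := by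
          apply Finset.card_nsmul_le_sum
          intro a ha
          rw [hO, Finset.mem_Icc] at ha
          apply Nat.mul_le_mul
          · exact IH a (hOsub (by rw [hO, Finset.mem_Icc]; omega))
          · apply IH (t - a)
            rw [intRange_eq hp d, Finset.mem_Icc]
            omega
      _ ≤ ∑ a ∈ intRange ((m:ℝ) * p ^ d), cnt m p d a * cnt m p d (t - a) :=
          Finset.sum_le_sum_of_subset hOsub

lemma zero_mem_intRange (hp : 0 ≤ p) (d : ℕ) : (0 : ℤ) ∈ intRange ((m : ℝ) * p ^ d) := by
  rw [intRange_eq hp d, Finset.mem_Icc]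
  omega

lemma cnt_top_lower (hp : 0 ≤ p) (hp1 : p ≤ 1) (κ : ℕ) (hκ : 1 ≤ κ) :
    (2 * Fl m p (κ-1) + 1) * LbN m p (κ-1) ^ 2 ≤ cnt m p κ 0 := by
  obtain ⟨d, rfl⟩ : ∃ d, κ = d + 1 := ⟨κ - 1, by omega⟩
  simp only [Nat.add_sub_cancel]
  rw [cnt, if_pos (zero_mem_intRange hp (d+1))]
  calc (2 * Fl m p d + 1) * LbN m p d ^ 2
      = (intRange ((m:ℝ) * p ^ d)).card • (LbN m p d * LbN m p d) := by
        rw [card_intRange hp d, smul_eq_mul]; ring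
    _ ≤ ∑ a ∈ intRange ((m:ℝ) * p ^ d), cnt m p d a * cnt m p d (0 - a) := by
        apply Finset.card_nsmul_le_sum
        intro a ha
        apply Nat.mul_le_mul (LbN_le_cnt hp hp1 d a ha)
        apply LbN_le_cnt hp hp1 d
        rw [intRange_eq hp d, Finset.mem_Icc] at ha ⊢
        omega

lemma cnt_top_upper (hp : 0 ≤ p) (κ : ℕ) : cnt m p κ 0 ≤ UbN m p κ := cnt_le_UbN hp κ 0

end CntBounds

section RealBounds

variable {m : ℕ} {p : ℝ}

lemma merge6 (x y z u v w : ℝ) : x*y*z*(u*v*w) = (x*u)*(y*v)*(z*w) := by ring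

lemma zpow_step {a b c : ℝ} (ha : a ≠ 0) (hb : b ≠ 0) (hc : c ≠ 0) (d : ℕ) :
    (a ^ ((2:ℤ)^d - 1) * b ^ ((2:ℤ)^d - d - 1) * c ^ ((2:ℤ)^d - 1)) ^ 2 * (a * b ^ (d:ℤ) * c)
      = a ^ ((2:ℤ)^(d+1) - 1) * b ^ ((2:ℤ)^(d+1) - (d+1) - 1) * c ^ ((2:ℤ)^(d+1) - 1) := by
  have sqz : ∀ (x : ℝ) (e : ℤ), (x^e)^2 = x^(2*e) := fun x e => by
    rw [← zpow_natCast (x^e) 2, ← zpow_mul]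
    norm_num [mul_comm]
  rw [mul_pow, mul_pow, sqz, sqz, sqz,
    show a * b^(d:ℤ) * c = a^(1:ℤ) * b^(d:ℤ) * c^(1:ℤ) by rw [zpow_one, zpow_one],
    merge6, ← zpow_add₀ ha, ← zpow_add₀ hb, ← zpow_add₀ hc]
  congr 1
  · congr 1
    · congr 1; push_cast; ring
    · congr 1; push_cast; ring
  · congr 1; push_cast; ring

lemma mp_pos (hm : 0 < m) (hp0 : 0 < p) (d : ℕ) : (0:ℝ) < (m:ℝ) * p ^ d := by positivity

/-- the relative error parameter -/
noncomputable def theta (m : ℕ) (p : ℝ) (κ : ℕ) : ℝ := 1 / ((m:ℝ) * p ^ κ)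

lemma theta_pos (hm : 0 < m) (hp0 : 0 < p) {κ : ℕ} : 0 < theta m p κ := by
  rw [theta]; positivity

lemma theta_lt (h3 : (30 : ℝ) < (m : ℝ) * p ^ κ) : theta m p κ < 1/30 := by
  rw [theta]
  rw [div_lt_div_iff₀ (by linarith) (by norm_num)]
  linarith

lemma one_le_mp_mul_theta (hm : 0 < m) (hp0 : 0 < p) (hp1 : p < 1) {κ d : ℕ} (hd : d ≤ κ) :
    1 ≤ ((m:ℝ) * p ^ d) * theta m p κ := by
  rw [theta, mul_one_div, le_div_iff₀ (mp_pos hm hp0 κ), one_mul]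
  apply mul_le_mul_of_nonneg_left _ (by positivity)
  exact pow_le_pow_of_le_one (le_of_lt hp0) (le_of_lt hp1) hd

lemma Fl_cast (hp0 : 0 < p) (d : ℕ) :
    ((Fl m p d : ℕ) : ℝ) = (⌊(m : ℝ) * p ^ d / 2⌋ : ℤ) := by
  rw [Fl]
  norm_cast
  exact Int.toNat_of_nonneg (floor_half_nonneg (le_of_lt hp0) d)

lemma Fl_bounds (hp0 : 0 < p) (d : ℕ) :
    (m : ℝ) * p ^ d - 1 ≤ 2 * (Fl m p d : ℝ) + 1 ∧ 2 * (Fl m p d : ℝ) + 1 ≤ (m:ℝ) * p ^ d + 1 := by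
  rw [Fl_cast hp0 d]
  have h1 : (⌊(m : ℝ) * p ^ d / 2⌋ : ℝ) ≤ (m : ℝ) * p ^ d / 2 := Int.floor_le _
  have h2 : (m : ℝ) * p ^ d / 2 - 1 < (⌊(m : ℝ) * p ^ d / 2⌋ : ℝ) := Int.sub_one_lt_floor _
  constructor <;> linarith

lemma UbN_le (hm : 0 < m) (hp0 : 0 < p) (hp1 : p < 1) {κ : ℕ} :
    ∀ d, d ≤ κ → (UbN m p d : ℝ) ≤
      (m:ℝ) ^ ((2:ℤ)^d - 1) * p ^ ((2:ℤ)^d - d - 1) * (1 + theta m p κ) ^ ((2:ℤ)^d - 1) := by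
  have hθ := theta_pos hm hp0 (κ := κ)
  intro d
  induction d with
  | zero => intro _; rw [UbN]; norm_num
  | succ d IH =>
    intro hd
    have hdκ : d ≤ κ := by omega
    have IH' := IH hdκ
    rw [UbN]
    push_cast
    rw [← zpow_step (a := (m:ℝ)) (b := p) (c := 1 + theta m p κ)
      (by positivity) (by positivity) (by positivity) d]
    have hub0 : (0:ℝ) ≤ (UbN m p d : ℝ) := by positivity
    have hfl : 2 * (Fl m p d : ℝ) + 1 ≤ (m:ℝ) * p ^ (d:ℤ) * (1 + theta m p κ) := by
      have h2 := (Fl_bounds (m := m) hp0 d).2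
      have h3' := one_le_mp_mul_theta hm hp0 hp1 hdκ
      have hmp := mp_pos hm hp0 d
      rw [zpow_natCast]
      nlinarith
    calc (UbN m p d : ℝ)^2 * (2 * (Fl m p d:ℝ) + 1)
        ≤ ((m:ℝ) ^ ((2:ℤ)^d - 1) * p ^ ((2:ℤ)^d - d - 1) * (1 + theta m p κ) ^ ((2:ℤ)^d - 1))^2
            * ((m:ℝ) * p ^ (d:ℤ) * (1 + theta m p κ)) := by
          apply mul_le_mul
          · exact pow_le_pow_left₀ hub0 IH' 2
          · exact hfl
          · positivity
          · positivity
      _ = _ := by rw [zpow_step (by positivity) (by positivity) (by positivity)]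

lemma LbN_ge (hm : 0 < m) (hp0 : 0 < p) (hp1 : p < 1) {κ : ℕ}
    (h3 : (30 : ℝ) < (m : ℝ) * p ^ κ) :
    ∀ d, d + 1 ≤ κ →
      (m:ℝ) ^ ((2:ℤ)^d - 1) * p ^ ((2:ℤ)^d - d - 1) * ((1 - p) * (1 - theta m p κ)) ^ ((2:ℤ)^d - 1)
        ≤ (LbN m p d : ℝ) := by
  have hθ := theta_pos hm hp0 (κ := κ)
  have hθ' := theta_lt (h3 := h3)
  have hc : (0:ℝ) < (1 - p) * (1 - theta m p κ) := by nlinarith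
  intro d
  induction d with
  | zero => intro _; rw [LbN]; norm_num
  | succ d IH =>
    intro hd
    have hdκ : d + 1 ≤ κ := by omega
    have IH' := IH hdκ
    rw [LbN]
    have hsub : Fl m p (d+1) ≤ 2 * Fl m p d + 1 := by
      have := Fl_succ_le (m := m) (le_of_lt hp0) (le_of_lt hp1) d
      omega
    push_cast [Nat.cast_sub hsub]
    rw [← zpow_step (a := (m:ℝ)) (b := p) (c := (1 - p) * (1 - theta m p κ))
      (by positivity) (by positivity) (ne_of_gt hc) d]
    have hfl : (m:ℝ) * p ^ (d:ℤ) * ((1 - p) * (1 - theta m p κ))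
        ≤ 2 * (Fl m p d : ℝ) + 1 - (Fl m p (d+1) : ℝ) := by
      have h2 := (Fl_bounds (m := m) hp0 d).1
      have hF' : (Fl m p (d+1) : ℝ) ≤ (m:ℝ) * p ^ (d+1) / 2 := by
        rw [Fl_cast hp0 (d+1)]
        exact Int.floor_le _
      have hmθ : 1 ≤ ((m:ℝ) * p ^ (d+1)) * theta m p κ := one_le_mp_mul_theta hm hp0 hp1 hdκ
      have hmp := mp_pos hm hp0 d
      have hpd : (0:ℝ) < p ^ d := by positivity
      rw [zpow_natCast]
      have hps : (m:ℝ) * p ^ (d+1) = ((m:ℝ) * p ^ d) * p := by ring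
      -- m p^d (1-p)(1-θ) ≤ (m p^d - 1) - m p^{d+1}/2
      rw [hps] at hmθ hF'
      nlinarith [mul_pos hmp hp0, theta_pos hm hp0 (κ := κ)]
    have hlb0 : (0:ℝ) ≤
        (m:ℝ) ^ ((2:ℤ)^d - 1) * p ^ ((2:ℤ)^d - d - 1) * ((1-p) * (1 - theta m p κ)) ^ ((2:ℤ)^d - 1) := by
      positivity
    calc ((m:ℝ) ^ ((2:ℤ)^d - 1) * p ^ ((2:ℤ)^d - d - 1)
            * ((1-p) * (1 - theta m p κ)) ^ ((2:ℤ)^d - 1))^2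
          * ((m:ℝ) * p ^ (d:ℤ) * ((1-p) * (1 - theta m p κ)))
        ≤ (LbN m p d : ℝ)^2 * (2 * (Fl m p d : ℝ) + 1 - (Fl m p (d+1) : ℝ)) := by
          apply mul_le_mul
          · exact pow_le_pow_left₀ hlb0 IH' 2
          · exact hfl
          · have hmp := mp_pos hm hp0 d
            rw [zpow_natCast]
            positivity
          · positivity
      _ = _ := by ring

end RealBounds

def Successful' (κ n m : ℕ) (p : ℝ) (L : Fin (2 ^ κ) → Fin n → ℤ)
    (ℓ : Fin (2 ^ κ) → Fin n) : Prop :=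
  (∀ d ∈ Finset.Icc 1 κ, ∀ i < 2 ^ (κ - d),
      (∑ j : Fin (2 ^ κ),
          if i * 2 ^ d ≤ (j : ℕ) ∧ (j : ℕ) < (i + 1) * 2 ^ d then L j (ℓ j) else 0)
        ∈ intRange ((m : ℝ) * p ^ d)) ∧
    (∑ j : Fin (2 ^ κ), L j (ℓ j)) = 0

section ExpCId

variable (κ n m : ℕ) (p : ℝ)

def piProd {ι : Type*} (α β : ι → Type*) :
    (∀ i, α i × β i) ≃ (∀ i, α i) × (∀ i, β i) where
  toFun f := (fun i => (f i).1, fun i => (f i).2)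
  invFun g := fun i => (g.1 i, g.2 i)
  left_inv f := rfl
  right_inv g := rfl

def prodSub {A B : Type*} (P : A → Prop) : {q : A × B // P q.1} ≃ {a // P a} × B where
  toFun q := (⟨q.1.1, q.2⟩, q.1.2)
  invFun q := ⟨(q.1.1, q.2), q.1.2⟩
  left_inv q := rfl
  right_inv q := rfl

lemma successful'_iff (L : Fin (2 ^ κ) → Fin n → ↥(intRange (m : ℝ)))
    (ℓ : Fin (2 ^ κ) → Fin n) :
    Successful' κ n m p (fun i j => (L i j : ℤ)) ℓ ↔
      (fun j => (L j (ℓ j) : ℤ)) ∈ tupleSet m p κ 0 := by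
  rw [mem_tupleSet]
  constructor
  · intro h
    exact ⟨Fintype.mem_piFinset.2 fun j => (L j (ℓ j)).2, h.1, h.2⟩
  · intro h
    exact ⟨h.2.1, h.2.2⟩

lemma count_L_fixed (ℓ : Fin (2 ^ κ) → Fin n) :
    Nat.card {L : Fin (2 ^ κ) → Fin n → ↥(intRange (m : ℝ)) //
        Successful' κ n m p (fun i j => (L i j : ℤ)) ℓ}
      = cnt m p κ 0 * ((intRange (m : ℝ)).card ^ (n - 1)) ^ (2 ^ κ) := by
  classical
  set S := ↥(intRange (m : ℝ))
  set P : (Fin (2 ^ κ) → S) → Prop := fun x => (fun j => (x j : ℤ)) ∈ tupleSet m p κ 0 with hP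
  -- step 1: rewrite with the equivalence splitting each list at the chosen index
  have E1 : {L : Fin (2 ^ κ) → Fin n → S // Successful' κ n m p (fun i j => (L i j : ℤ)) ℓ} ≃
      {q : (Fin (2 ^ κ) → S) × (∀ i : Fin (2 ^ κ), ({j // j ≠ ℓ i} → S)) // P q.1} := by
    refine Equiv.subtypeEquiv
      ((Equiv.piCongrRight fun i => Equiv.piSplitAt (ℓ i) (fun _ => S)).trans
        (piProd _ _)) ?_
    intro L
    rw [successful'_iff]
    rfl
  rw [Nat.card_congr (E1.trans (prodSub P)), Nat.card_prod]
  congr 1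
  · -- card of the solution-tuples subtype
    have E3 : {x : Fin (2 ^ κ) → S // P x} ≃ {y // y ∈ tupleSet m p κ 0} := by
      refine ⟨fun x => ⟨fun j => (x.1 j : ℤ), x.2⟩,
        fun y => ⟨fun j => ⟨y.1 j, ?_⟩, ?_⟩, fun x => ?_, fun y => ?_⟩
      · have := (mem_tupleSet m p).1 y.2
        exact Fintype.mem_piFinset.1 this.1 j
      · exact y.2
      · apply Subtype.ext; funext j; rfl
      · apply Subtype.ext; funext j; rfl
    rw [Nat.card_congr E3, Nat.card_eq_fintype_card, Fintype.card_coe,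
      card_tupleSet m p κ 0]
  · rw [Nat.card_pi]
    have hcard : ∀ i : Fin (2 ^ κ), Nat.card ({j // j ≠ ℓ i} → S)
        = (intRange (m : ℝ)).card ^ (n - 1) := by
      intro i
      rw [Nat.card_eq_fintype_card, Fintype.card_fun]
      congr 1
      · exact Fintype.card_coe _
      · simp [Fintype.card_subtype_compl]
    rw [Finset.prod_congr rfl (fun i _ => hcard i), Finset.prod_const, Finset.card_univ,
      Fintype.card_fin]

lemma expC_eq' (hn : 0 < n) (hm : 0 < m) :
    (∑ L : Fin (2 ^ κ) → Fin n → ↥(intRange (m : ℝ)),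
      (Nat.card {ℓ : Fin (2 ^ κ) → Fin n //
          Successful' κ n m p (fun i j => (L i j : ℤ)) ℓ} : ℝ)) /
    (Fintype.card (Fin (2 ^ κ) → Fin n → ↥(intRange (m : ℝ))) : ℝ)
      = (n : ℝ) ^ (2 ^ κ) * (cnt m p κ 0 : ℝ) / ((intRange (m : ℝ)).card : ℝ) ^ (2 ^ κ) := by
  classical
  set S := ↥(intRange (m : ℝ))
  set k := 2 ^ κ
  set Sc := (intRange (m : ℝ)).card with hSc
  have hSc0 : 0 < Sc := by
    apply Finset.card_pos.2
    refine ⟨0, ?_⟩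
    rw [intRange, Finset.mem_Icc]
    have : (0:ℤ) ≤ ⌊(m:ℝ)/2⌋ := Int.floor_nonneg.2 (by positivity)
    omega
  have hnum : (∑ L : Fin k → Fin n → S, Nat.card {ℓ : Fin k → Fin n //
      Successful' κ n m p (fun i j => (L i j : ℤ)) ℓ})
      = n ^ k * (cnt m p κ 0 * (Sc ^ (n-1)) ^ k) := by
    have swap : (∑ L : Fin k → Fin n → S, Nat.card {ℓ : Fin k → Fin n //
        Successful' κ n m p (fun i j => (L i j : ℤ)) ℓ})
        = ∑ ℓ : Fin k → Fin n, ∑ L : Fin k → Fin n → S,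
            if Successful' κ n m p (fun i j => (L i j : ℤ)) ℓ then 1 else 0 := by
      classical
      calc (∑ L : Fin k → Fin n → S, Nat.card {ℓ : Fin k → Fin n //
            Successful' κ n m p (fun i j => (L i j : ℤ)) ℓ})
          = ∑ L : Fin k → Fin n → S, ∑ ℓ : Fin k → Fin n,
              if Successful' κ n m p (fun i j => (L i j : ℤ)) ℓ then 1 else 0 :=
            Finset.sum_congr rfl (fun L _ => by
              rw [Nat.card_eq_fintype_card, Fintype.card_subtype, Finset.card_filter])
        _ = _ := Finset.sum_comm
    rw [swap]
    have hfix : ∀ ℓ : Fin k → Fin n, (∑ L : Fin k → Fin n → S,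
        if Successful' κ n m p (fun i j => (L i j : ℤ)) ℓ then 1 else 0)
        = cnt m p κ 0 * (Sc ^ (n-1)) ^ k := by
      intro ℓ
      rw [← Finset.card_filter, ← Fintype.card_subtype, ← Nat.card_eq_fintype_card]
      exact count_L_fixed κ n m p ℓ
    rw [Finset.sum_congr rfl (fun ℓ _ => hfix ℓ), Finset.sum_const, Finset.card_univ,
      smul_eq_mul, Fintype.card_fun, Fintype.card_fin, Fintype.card_fin]
  have hden : Fintype.card (Fin k → Fin n → S) = (Sc ^ n) ^ k := by
    rw [Fintype.card_fun, Fintype.card_fun, Fintype.card_fin, Fintype.card_fin,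
      Fintype.card_coe]
  have hnumR : (∑ L : Fin k → Fin n → S, ((Nat.card {ℓ : Fin k → Fin n //
      Successful' κ n m p (fun i j => (L i j : ℤ)) ℓ}) : ℝ))
      = ((n ^ k * (cnt m p κ 0 * (Sc ^ (n-1)) ^ k) : ℕ) : ℝ) := by
    rw [← hnum]
    exact (Nat.cast_sum _ _).symm
  have goalEq : (∑ L : Fin k → Fin n → S, ((Nat.card {ℓ : Fin k → Fin n //
      Successful' κ n m p (fun i j => (L i j : ℤ)) ℓ}) : ℝ))
      / ((Fintype.card (Fin k → Fin n → S)) : ℝ)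
      = (n : ℝ) ^ k * (cnt m p κ 0 : ℝ) / (Sc : ℝ) ^ k := by
    rw [hnumR, hden]
    clear hnumR hnum hden
    clear_value k Sc
    have hScR : (0:ℝ) < (Sc : ℝ) := by exact_mod_cast hSc0
    have hn1 : n = (n - 1) + 1 := by omega
    have hSplit : (Sc:ℝ) ^ n = (Sc:ℝ) ^ (n-1) * Sc := by
      conv_lhs => rw [hn1]
      rw [pow_succ]
    push_cast
    rw [hSplit]
    field_simp
    ring
  exact goalEq

end ExpCId

/-- A tuple `ℓ ∈ [n]^k` (with `k = 2^κ`) is *successful* for the lists `L` and filtering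
parameter `p` if every partial block sum at level `d ∈ {1,…,κ}` lies in `⟨m·p^d⟩`, and the
total sum is `0`. -/
def Successful (κ n m : ℕ) (p : ℝ) (L : Fin (2 ^ κ) → Fin n → ℤ)
    (ℓ : Fin (2 ^ κ) → Fin n) : Prop :=
  (∀ d ∈ Finset.Icc 1 κ, ∀ i < 2 ^ (κ - d),
      (∑ j : Fin (2 ^ κ),
          if i * 2 ^ d ≤ (j : ℕ) ∧ (j : ℕ) < (i + 1) * 2 ^ d then L j (ℓ j) else 0)
        ∈ intRange ((m : ℝ) * p ^ d)) ∧
    (∑ j : Fin (2 ^ κ), L j (ℓ j)) = 0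

/-- `E[C]`: the expected number of successful tuples, over `k = 2^κ` lists of `n`
independent uniform entries from `⟨m⟩`. -/
noncomputable def expC (κ n m : ℕ) (p : ℝ) : ℝ :=
  (∑ L : Fin (2 ^ κ) → Fin n → ↥(intRange (m : ℝ)),
      (Nat.card {ℓ : Fin (2 ^ κ) → Fin n //
          Successful κ n m p (fun i j => (L i j : ℤ)) ℓ} : ℝ)) /
    (Fintype.card (Fin (2 ^ κ) → Fin n → ↥(intRange (m : ℝ))) : ℝ)

set_option maxHeartbeats 2000000 in
theorem kTree_first_moment_bounds
    (κ n m : ℕ) (hκ : 1 ≤ κ) (hn : 0 < n) (hm : 0 < m)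
    (p : ℝ) (hp0 : 0 < p) (hp1 : p ≤ 1)
    (h1 : (7 : ℝ) * 2 ^ κ < m)
    (h2 : ((7 : ℝ) / m) ^ (2 ^ (κ - 1) - 1) < p * 2 ^ κ)
    (h3 : (30 : ℝ) < (m : ℝ) * p ^ κ)
    (h4 : p < 1 / 30) :
    ((n : ℝ) ^ (2 ^ κ) * p ^ (2 ^ κ)) / ((m : ℝ) * p ^ (κ + 1)) * (1 - p) ^ (2 ^ κ - 1) *
        (1 - 35 / ((m : ℝ) * p ^ κ)) ^ (2 ^ κ - 1)
      ≤ expC κ n m p ∧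
    expC κ n m p
      ≤ ((n : ℝ) ^ (2 ^ κ) * p ^ (2 ^ κ)) / ((m : ℝ) * p ^ (κ + 1)) * (1 + p) ^ (2 ^ κ - 1) *
        (1 + 35 / ((m : ℝ) * p ^ κ)) ^ (2 ^ κ - 1) := by
  have hp1' : p < 1 := lt_trans h4 (by norm_num)
  set k := 2 ^ κ with hk
  set θ := theta m p κ with hθdef
  have hθ0 : 0 < θ := theta_pos hm hp0
  have hθlt : θ < 1/30 := theta_lt h3
  have hmR : (0:ℝ) < m := by exact_mod_cast hm
  have hmpκ : (0:ℝ) < (m:ℝ) * p ^ κ := mp_pos hm hp0 κ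
  have hθeq : 35 / ((m:ℝ) * p ^ κ) = 35 * θ := by rw [hθdef, theta]; ring
  -- the expected-count identity
  set A := cnt m p κ 0 with hA
  set Sc := (intRange (m:ℝ)).card with hSc
  have hE : expC κ n m p = (n : ℝ) ^ k * (A : ℝ) / (Sc : ℝ) ^ k := by
    rw [expC]
    exact expC_eq' κ n m p hn hm
  -- bounds on Sc
  have hfl0 : ⌊(m:ℝ)/2⌋ = ((m / 2 : ℕ) : ℤ) := by
    rw [Int.floor_eq_iff]
    have h1' : 2 * (m/2) ≤ m ∧ m < 2 * (m/2) + 2 := by omega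
    constructor
    · push_cast
      rw [le_div_iff₀ (by norm_num : (0:ℝ) < 2)]
      exact_mod_cast (by omega : m / 2 * 2 ≤ m)
    · push_cast
      rw [div_lt_iff₀ (by norm_num : (0:ℝ) < 2)]
      exact_mod_cast (by omega : m < (m/2 + 1) * 2)
  have hSceq : Sc = 2 * (m / 2) + 1 := by
    rw [hSc, intRange, hfl0, Int.card_Icc]
    omega
  have hScm : (m:ℝ) ≤ (Sc:ℝ) := by exact_mod_cast (by omega : m ≤ 2 * (m/2) + 1).trans_eq hSceq.symm
  have hScm1 : (Sc:ℝ) ≤ (m:ℝ) + 1 := by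
    have : Sc ≤ m + 1 := by omega
    exact_mod_cast this
  have hSc0 : (0:ℝ) < (Sc:ℝ) := lt_of_lt_of_le hmR hScm
  -- exponent bookkeeping
  have hκ2 : κ + 1 ≤ k := by rw [hk]; exact Nat.succ_le_of_lt Nat.lt_two_pow_self
  set e1 := k - 1 with he1
  set e2 := k - (κ + 1) with he2
  have hcast1 : ∀ x : ℝ, x ^ ((2:ℤ)^κ - 1) = x ^ e1 := by
    intro x
    rw [← zpow_natCast x e1]
    congr 1
    rw [he1, hk]
    push_cast [Nat.cast_sub (Nat.one_le_two_pow)]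
    ring
  have hcast2 : p ^ ((2:ℤ)^κ - κ - 1) = p ^ e2 := by
    rw [← zpow_natCast p e2]
    congr 1
    rw [he2, hk]
    push_cast [Nat.cast_sub (by rw [← hk]; exact hκ2 : κ + 1 ≤ 2 ^ κ)]
    ring
  -- main-term identity
  have hmain : (n : ℝ) ^ k * p ^ k / ((m : ℝ) * p ^ (κ + 1))
      = (n:ℝ) ^ k * p ^ e2 / (m:ℝ) := by
    have hsplitp : p ^ k = p ^ e2 * p ^ (κ+1) := by
      rw [← pow_add]
      congr 1
      omega
    rw [hsplitp]
    field_simp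
  have hmk : ((m:ℝ)) ^ k = (m:ℝ) ^ e1 * m := by
    rw [← pow_succ]
    congr 1
    omega
  set c := (1 - p) * (1 - θ) with hc
  have hcpos : 0 < c := by rw [hc]; nlinarith
  -- upper bound on the count
  have hAub : (A : ℝ) ≤ (m:ℝ) ^ e1 * p ^ e2 * (1 + θ) ^ e1 := by
    have h := UbN_le hm hp0 hp1' (κ := κ) κ le_rfl
    have h' : (A:ℝ) ≤ (UbN m p κ : ℝ) := by exact_mod_cast cnt_top_upper (le_of_lt hp0) κ
    calc (A:ℝ) ≤ (UbN m p κ : ℝ) := h'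
      _ ≤ (m:ℝ) ^ ((2:ℤ)^κ - 1) * p ^ ((2:ℤ)^κ - κ - 1) * (1 + θ) ^ ((2:ℤ)^κ - 1) := h
      _ = (m:ℝ) ^ e1 * p ^ e2 * (1 + θ) ^ e1 := by rw [hcast1, hcast2, hcast1]
  -- lower bound on the count
  have hAlb : (m:ℝ) ^ e1 * p ^ e2 * c ^ e1 ≤ (A : ℝ) := by
    have hlbn : (m:ℝ) ^ ((2:ℤ)^(κ-1) - 1) * p ^ ((2:ℤ)^(κ-1) - ((κ-1 : ℕ) : ℤ) - 1)
        * c ^ ((2:ℤ)^(κ-1) - 1) ≤ (LbN m p (κ-1) : ℝ) := by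
      rw [hc, hθdef]
      exact LbN_ge hm hp0 hp1' h3 (κ - 1) (by omega)
    have hstep : ((m:ℝ) * p ^ ((κ - 1 : ℕ) : ℤ)) * c ≤ 2 * (Fl m p (κ-1) : ℝ) + 1 := by
      have hb := (Fl_bounds (m := m) hp0 (κ-1)).1
      have hmθ : 1 ≤ ((m:ℝ) * p ^ (κ-1)) * θ := one_le_mp_mul_theta hm hp0 hp1' (by omega)
      have hmp := mp_pos hm hp0 (κ-1)
      rw [zpow_natCast, hc]
      nlinarith
    have hcnt : (2 * Fl m p (κ-1) + 1) * LbN m p (κ-1) ^ 2 ≤ A := by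
      rw [hA]
      exact cnt_top_lower (le_of_lt hp0) (le_of_lt hp1') κ hκ
    have hcntR : (2 * (Fl m p (κ-1) :ℝ) + 1) * (LbN m p (κ-1) : ℝ) ^ 2 ≤ (A : ℝ) := by
      exact_mod_cast hcnt
    have hlow0 : (0:ℝ) ≤ (m:ℝ) ^ ((2:ℤ)^(κ-1) - 1) * p ^ ((2:ℤ)^(κ-1) - ((κ-1 : ℕ) : ℤ) - 1)
        * c ^ ((2:ℤ)^(κ-1) - 1) := by
      have t1 : (0:ℝ) < (m:ℝ) ^ ((2:ℤ)^(κ-1) - 1) := zpow_pos hmR _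
      have t2 : (0:ℝ) < p ^ ((2:ℤ)^(κ-1) - ((κ-1 : ℕ) : ℤ) - 1) := zpow_pos hp0 _
      have t3 : (0:ℝ) < c ^ ((2:ℤ)^(κ-1) - 1) := zpow_pos hcpos _
      positivity
    have hz := zpow_step (a := (m:ℝ)) (b := p) (c := c)
      (ne_of_gt hmR) (ne_of_gt hp0) (ne_of_gt hcpos) (κ-1)
    rw [show κ - 1 + 1 = κ from by omega] at hz
    have hexpfix : (2:ℤ)^κ - ((κ-1 : ℕ) : ℤ) - 1 - 1 = (2:ℤ)^κ - κ - 1 := by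
      push_cast [Nat.cast_sub hκ]
      ring
    have hz' : ((m:ℝ) ^ ((2:ℤ)^(κ-1) - 1) * p ^ ((2:ℤ)^(κ-1) - ((κ-1 : ℕ) : ℤ) - 1)
            * c ^ ((2:ℤ)^(κ-1) - 1)) ^ 2 * ((m:ℝ) * p ^ ((κ-1 : ℕ) : ℤ) * c)
        = (m:ℝ) ^ e1 * p ^ e2 * c ^ e1 := by
      rw [hz, hcast1, hcast1]
      congr 2
      rw [show (2:ℤ)^κ - (((κ-1 : ℕ) : ℤ) + 1) - 1 = (2:ℤ)^κ - κ - 1 by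
        push_cast [Nat.cast_sub hκ]; ring]
      exact hcast2
    calc (m:ℝ) ^ e1 * p ^ e2 * c ^ e1
        = ((m:ℝ) ^ ((2:ℤ)^(κ-1) - 1) * p ^ ((2:ℤ)^(κ-1) - ((κ-1 : ℕ) : ℤ) - 1)
            * c ^ ((2:ℤ)^(κ-1) - 1)) ^ 2 * ((m:ℝ) * p ^ ((κ-1 : ℕ) : ℤ) * c) := hz'.symm
      _ ≤ (LbN m p (κ-1) : ℝ) ^ 2 * (2 * (Fl m p (κ-1) : ℝ) + 1) := by
          apply mul_le_mul
          · exact pow_le_pow_left₀ hlow0 hlbn 2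
          · exact hstep
          · have : (0:ℝ) < p ^ ((κ-1 : ℕ) : ℤ) := zpow_pos hp0 _
            positivity
          · positivity
      _ ≤ (A : ℝ) := by
          rw [mul_comm]
          exact hcntR
  -- upper bound
  have hupper : expC κ n m p ≤ (n : ℝ) ^ k * p ^ k / ((m : ℝ) * p ^ (κ + 1))
      * (1 + p) ^ e1 * (1 + 35 / ((m:ℝ) * p ^ κ)) ^ e1 := by
    rw [hE, hθeq, hmain]
    have step1 : (n : ℝ) ^ k * (A : ℝ) / (Sc : ℝ) ^ k ≤ (n : ℝ) ^ k * (A : ℝ) / (m : ℝ) ^ k := by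
      apply div_le_div_of_nonneg_left (by positivity) (by positivity)
      exact pow_le_pow_left₀ (le_of_lt hmR) hScm k
    have step2 : (n : ℝ) ^ k * (A : ℝ) / (m : ℝ) ^ k
        ≤ (n : ℝ) ^ k * ((m:ℝ) ^ e1 * p ^ e2 * (1 + θ) ^ e1) / (m : ℝ) ^ k := by
      apply (div_le_div_iff_of_pos_right (by positivity)).2
      exact mul_le_mul_of_nonneg_left hAub (by positivity)
    have halg2 : (n : ℝ) ^ k * ((m:ℝ) ^ e1 * p ^ e2 * (1 + θ) ^ e1) / (m : ℝ) ^ k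
        = ((n:ℝ) ^ k * p ^ e2 / m) * (1 + θ) ^ e1 := by
      rw [hmk]
      field_simp
    have step3 : ((n:ℝ) ^ k * p ^ e2 / m) * (1 + θ) ^ e1
        ≤ ((n:ℝ) ^ k * p ^ e2 / m) * ((1 + p) ^ e1 * (1 + 35*θ) ^ e1) := by
      apply mul_le_mul_of_nonneg_left _ (by positivity)
      rw [← mul_pow]
      apply pow_le_pow_left₀ (by positivity)
      nlinarith
    calc (n : ℝ) ^ k * (A : ℝ) / (Sc : ℝ) ^ k
        ≤ (n : ℝ) ^ k * (A : ℝ) / (m : ℝ) ^ k := step1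
      _ ≤ (n : ℝ) ^ k * ((m:ℝ) ^ e1 * p ^ e2 * (1 + θ) ^ e1) / (m : ℝ) ^ k := step2
      _ = ((n:ℝ) ^ k * p ^ e2 / m) * (1 + θ) ^ e1 := halg2
      _ ≤ ((n:ℝ) ^ k * p ^ e2 / m) * ((1 + p) ^ e1 * (1 + 35*θ) ^ e1) := step3
      _ = (n:ℝ) ^ k * p ^ e2 / m * (1 + p) ^ e1 * (1 + 35*θ) ^ e1 := by ring
  -- lower bound
  have hlower : (n : ℝ) ^ k * p ^ k / ((m : ℝ) * p ^ (κ + 1))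
      * (1 - p) ^ e1 * (1 - 35 / ((m:ℝ) * p ^ κ)) ^ e1 ≤ expC κ n m p := by
    rw [hE, hθeq, hmain]
    have hexpC0 : (0:ℝ) ≤ (n : ℝ) ^ k * (A : ℝ) / (Sc : ℝ) ^ k := by positivity
    by_cases h35 : 35 * θ ≤ 1
    · -- real case
      have hscinv : (1 - θ)/(m:ℝ) ≤ 1/(Sc:ℝ) := by
        rw [div_le_div_iff₀ hmR hSc0]
        have hθm : 1 ≤ θ * m := by
          have : θ * m = 1 / p ^ κ := by
            rw [hθdef, theta]
            field_simp
          rw [this]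
          rw [le_div_iff₀ (by positivity)]
          rw [one_mul]
          exact pow_le_one₀ (le_of_lt hp0) hp1
        nlinarith
      have hA0 : (0:ℝ) ≤ (m:ℝ) ^ e1 * p ^ e2 * c ^ e1 := by positivity
      have step1 : (n:ℝ) ^ k * ((m:ℝ) ^ e1 * p ^ e2 * c ^ e1) * ((1 - θ)/(m:ℝ)) ^ k
          ≤ (n : ℝ) ^ k * (A : ℝ) / (Sc : ℝ) ^ k := by
        rw [div_eq_mul_inv ((n:ℝ)^k * (A:ℝ)), ← inv_pow, ← one_div]
        apply mul_le_mul
        · exact mul_le_mul_of_nonneg_left hAlb (by positivity)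
        · exact pow_le_pow_left₀ (div_nonneg (by linarith) (le_of_lt hmR)) hscinv k
        · exact pow_nonneg (div_nonneg (by linarith) (le_of_lt hmR)) k
        · positivity
      have halg3 : (n:ℝ) ^ k * ((m:ℝ) ^ e1 * p ^ e2 * c ^ e1) * ((1 - θ)/(m:ℝ)) ^ k
          = ((n:ℝ) ^ k * p ^ e2 / m) * (1-p) ^ e1 * ((1-θ) ^ (e1 + k)) := by
        rw [hc, div_pow, hmk, mul_pow, pow_add]
        field_simp
      have hfactor : (1 - 35*θ) ^ e1 ≤ (1-θ) ^ (e1 + k) := by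
        have hθ1 : 1 - θ ≤ 1 := by linarith
        have hθ1' : (0:ℝ) ≤ 1 - θ := by linarith
        have hk2 : 2 ≤ k := by
          rw [hk]
          calc 2 = 2^1 := by norm_num
            _ ≤ 2^κ := Nat.pow_le_pow_right (by norm_num) hκ
        calc (1 - 35*θ) ^ e1 ≤ (1 - 3*θ) ^ e1 := by
              apply pow_le_pow_left₀ (by linarith)
              linarith
          _ ≤ ((1-θ)^3) ^ e1 := by
              apply pow_le_pow_left₀ (by linarith)
              nlinarith [mul_nonneg (mul_nonneg hθ0.le hθ0.le) (by linarith : (0:ℝ) ≤ 3 - θ)]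
          _ = (1-θ) ^ (3 * e1) := by rw [← pow_mul]
          _ ≤ (1-θ) ^ (e1 + k) := by
              apply pow_le_pow_of_le_one hθ1' hθ1
              omega
      calc (n:ℝ) ^ k * p ^ e2 / m * (1-p) ^ e1 * (1 - 35*θ) ^ e1
          ≤ (n:ℝ) ^ k * p ^ e2 / m * (1-p) ^ e1 * ((1-θ) ^ (e1 + k)) := by
            apply mul_le_mul_of_nonneg_left hfactor
            apply mul_nonneg (by positivity)
            exact pow_nonneg (by linarith) _
        _ = (n:ℝ) ^ k * ((m:ℝ) ^ e1 * p ^ e2 * c ^ e1) * ((1 - θ)/(m:ℝ)) ^ k := by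
            rw [halg3]
        _ ≤ (n : ℝ) ^ k * (A : ℝ) / (Sc : ℝ) ^ k := step1
    · -- degenerate case: the lower bound is nonpositive
      push_neg at h35
      have hodd : Odd e1 := by
        refine ⟨2^(κ-1) - 1, ?_⟩
        have hpow : k = 2 * 2^(κ-1) := by
          rw [hk, ← pow_succ']
          congr 1
          omega
        have h1' : 1 ≤ 2^(κ-1) := Nat.one_le_two_pow
        omega
      have hfac : (1 - 35*θ) ^ e1 ≤ 0 := Odd.pow_nonpos hodd (by linarith)
      have hM0 : (0:ℝ) ≤ (n:ℝ) ^ k * p ^ e2 / m * (1-p) ^ e1 := by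
        apply mul_nonneg (by positivity)
        exact pow_nonneg (by linarith) _
      calc (n:ℝ) ^ k * p ^ e2 / m * (1-p) ^ e1 * (1 - 35*θ) ^ e1
          ≤ 0 := mul_nonpos_iff.2 (Or.inl ⟨hM0, hfac⟩)
        _ ≤ _ := hexpC0
  exact ⟨hlower, hupper⟩
end

section
/- Let k ≥ 2 be a power of 2, let n, m be positive integers, and let p ∈ (0,1] satisfy m > 7k, p·k > (7/m)^(k/2 − 1), m·p^(log k) > 30, and p < 1/30. Then k·n·(1 + Σ_{d=1}^{log k} (n·p)^(2^d − 1)/2^d)·(1 − p)^(k−1)·(1 − 35/(m·p^(log k)))^(k−1) ≤ E[Λ] ≤ k·n·(1 + Σ_{d=1}^{log k} (n·p)^(2^d − 1)/2^d)·(1 + p)^(k−1)·(1 + 35/(m·p^(log k)))^(k−1). -/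
open Finset in
open scoped Classical in
/-- The filter predicate on a block of `2^d` integer values. -/
def KQ (m : ℕ) (p : ℝ) (d : ℕ) (x : Fin (2 ^ d) → ℤ) : Prop :=
  ∀ t ∈ Finset.Icc 1 d, ∀ j < 2 ^ (d - t),
    (∑ r : Fin (2 ^ d), if j * 2 ^ t ≤ (r : ℕ) ∧ (r : ℕ) < (j + 1) * 2 ^ t then x r else 0)
      ∈ intRange ((m : ℝ) * p ^ t)

open scoped Classical in
noncomputable def KC (m : ℕ) (p : ℝ) (d : ℕ) : ℕ :=
  (Finset.univ.filter fun x : Fin (2 ^ d) → ↥(intRange (m : ℝ)) =>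
    KQ m p d fun r => (x r : ℤ)).card

open scoped Classical in
noncomputable def KG (m : ℕ) (p : ℝ) (d : ℕ) (z : ℤ) : ℕ :=
  (Finset.univ.filter fun x : Fin (2 ^ d) → ↥(intRange (m : ℝ)) =>
    (KQ m p d fun r => (x r : ℤ)) ∧ (∑ r, (x r : ℤ)) = z).card

lemma card_intRange_int (s : ℝ) (hs : 0 ≤ s) :
    ((intRange s).card : ℤ) = 2 * ⌊s / 2⌋ + 1 := by
  have h0 : (0 : ℤ) ≤ ⌊s / 2⌋ := Int.floor_nonneg.2 (by positivity)
  rw [intRange, Int.card_Icc]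
  omega

lemma card_intRange_le (s : ℝ) (hs : 0 ≤ s) : ((intRange s).card : ℝ) ≤ s + 1 := by
  have h1 : ((intRange s).card : ℤ) = 2 * ⌊s / 2⌋ + 1 := card_intRange_int s hs
  have h2 : (⌊s / 2⌋ : ℝ) ≤ s / 2 := Int.floor_le _
  have : ((intRange s).card : ℝ) = 2 * (⌊s / 2⌋ : ℝ) + 1 := by
    exact_mod_cast congrArg (Int.cast : ℤ → ℝ) h1
  rw [this]; linarith

lemma lt_card_intRange (s : ℝ) (hs : 0 ≤ s) : s - 1 < ((intRange s).card : ℝ) := by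
  have h1 : ((intRange s).card : ℤ) = 2 * ⌊s / 2⌋ + 1 := card_intRange_int s hs
  have h2 : s / 2 - 1 < (⌊s / 2⌋ : ℝ) := Int.sub_one_lt_floor _
  have : ((intRange s).card : ℝ) = 2 * (⌊s / 2⌋ : ℝ) + 1 := by
    exact_mod_cast congrArg (Int.cast : ℤ → ℝ) h1
  rw [this]; linarith

lemma zero_mem_intRange_s5 (s : ℝ) (hs : 0 ≤ s) : (0 : ℤ) ∈ intRange s := by
  have h0 : (0 : ℤ) ≤ ⌊s / 2⌋ := Int.floor_nonneg.2 (by positivity)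
  simp [intRange, Finset.mem_Icc]; omega

lemma card_filter_equiv {α β : Type*} [Fintype α] [Fintype β] (e : α ≃ β)
    (P : α → Prop) (Q : β → Prop) [DecidablePred P] [DecidablePred Q] (h : ∀ a, P a ↔ Q (e a)) :
    (Finset.univ.filter P).card = (Finset.univ.filter Q).card := by
  rw [← Fintype.card_subtype, ← Fintype.card_subtype]
  exact Fintype.card_congr (e.subtypeEquiv h)

lemma KQ_zero (m : ℕ) (p : ℝ) (x : Fin (2 ^ 0) → ℤ) : KQ m p 0 x := by
  intro t ht
  simp at ht
/-- Equiv splitting `Fin (2^(d+1))` into two halves. -/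
def esum (d : ℕ) : Fin (2 ^ d) ⊕ Fin (2 ^ d) ≃ Fin (2 ^ (d + 1)) :=
  finSumFinEquiv.trans (finCongr (by rw [pow_succ]; omega))

lemma esum_inl (d : ℕ) (r : Fin (2 ^ d)) : ((esum d (Sum.inl r)) : ℕ) = r := by
  simp [esum]

lemma esum_inr (d : ℕ) (r : Fin (2 ^ d)) : ((esum d (Sum.inr r)) : ℕ) = 2 ^ d + r := by
  simp [esum, add_comm]

lemma sum_split (d : ℕ) (x : Fin (2 ^ (d + 1)) → ℤ) :
    (∑ r, x r) = (∑ r, x (esum d (Sum.inl r))) + (∑ r, x (esum d (Sum.inr r))) := by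
  rw [← Equiv.sum_comp (esum d) x, Fintype.sum_sum_type]

lemma window_full (d : ℕ) (x : Fin (2 ^ d) → ℤ) :
    (∑ r : Fin (2 ^ d),
      if 0 * 2 ^ d ≤ (r : ℕ) ∧ (r : ℕ) < (0 + 1) * 2 ^ d then x r else 0) = ∑ r, x r := by
  refine Finset.sum_congr rfl fun r _ => if_pos ⟨by simp, by simpa using r.isLt⟩

lemma window_left (d t j : ℕ) (ht : t ≤ d) (hj : j < 2 ^ (d - t)) (x : Fin (2 ^ (d + 1)) → ℤ) :
    (∑ r : Fin (2 ^ (d + 1)),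
        if j * 2 ^ t ≤ (r : ℕ) ∧ (r : ℕ) < (j + 1) * 2 ^ t then x r else 0) =
    (∑ r : Fin (2 ^ d),
        if j * 2 ^ t ≤ (r : ℕ) ∧ (r : ℕ) < (j + 1) * 2 ^ t then x (esum d (Sum.inl r)) else 0) := by
  have hpow : 2 ^ (d - t) * 2 ^ t = 2 ^ d := by rw [← pow_add]; congr 1; omega
  have hle : (j + 1) * 2 ^ t ≤ 2 ^ d := hpow ▸ Nat.mul_le_mul_right _ hj
  rw [← Equiv.sum_comp (esum d) _, Fintype.sum_sum_type]
  have h2 : (∑ r : Fin (2 ^ d),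
      if j * 2 ^ t ≤ ((esum d (Sum.inr r)) : ℕ) ∧ ((esum d (Sum.inr r)) : ℕ) < (j + 1) * 2 ^ t
      then x (esum d (Sum.inr r)) else 0) = 0 := by
    refine Finset.sum_eq_zero fun r _ => if_neg ?_
    rw [esum_inr]
    omega
  have h1 : (∑ r : Fin (2 ^ d),
      if j * 2 ^ t ≤ ((esum d (Sum.inl r)) : ℕ) ∧ ((esum d (Sum.inl r)) : ℕ) < (j + 1) * 2 ^ t
      then x (esum d (Sum.inl r)) else 0) = (∑ r : Fin (2 ^ d),
      if j * 2 ^ t ≤ (r : ℕ) ∧ (r : ℕ) < (j + 1) * 2 ^ t then x (esum d (Sum.inl r)) else 0) := by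
    refine Finset.sum_congr rfl fun r _ => by rw [esum_inl]
  rw [h1, h2, add_zero]
lemma window_right (d t j : ℕ) (ht : t ≤ d) (hj : j < 2 ^ (d - t)) (x : Fin (2 ^ (d + 1)) → ℤ) :
    (∑ r : Fin (2 ^ (d + 1)),
        if (2 ^ (d - t) + j) * 2 ^ t ≤ (r : ℕ) ∧ (r : ℕ) < (2 ^ (d - t) + j + 1) * 2 ^ t
        then x r else 0) =
    (∑ r : Fin (2 ^ d),
        if j * 2 ^ t ≤ (r : ℕ) ∧ (r : ℕ) < (j + 1) * 2 ^ t then x (esum d (Sum.inr r)) else 0) := by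
  have hpow : 2 ^ (d - t) * 2 ^ t = 2 ^ d := by rw [← pow_add]; congr 1; omega
  have e1 : (2 ^ (d - t) + j) * 2 ^ t = 2 ^ d + j * 2 ^ t := by rw [add_mul, hpow]
  have e2 : (2 ^ (d - t) + j + 1) * 2 ^ t = 2 ^ d + (j + 1) * 2 ^ t := by
    rw [add_mul, add_mul, add_mul, hpow]; ring
  rw [← Equiv.sum_comp (esum d) _, Fintype.sum_sum_type]
  have h1 : (∑ r : Fin (2 ^ d),
      if (2 ^ (d - t) + j) * 2 ^ t ≤ ((esum d (Sum.inl r)) : ℕ) ∧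
          ((esum d (Sum.inl r)) : ℕ) < (2 ^ (d - t) + j + 1) * 2 ^ t
      then x (esum d (Sum.inl r)) else 0) = 0 := by
    refine Finset.sum_eq_zero fun r _ => if_neg ?_
    have := r.isLt
    rw [esum_inl]
    omega
  have h2 : (∑ r : Fin (2 ^ d),
      if (2 ^ (d - t) + j) * 2 ^ t ≤ ((esum d (Sum.inr r)) : ℕ) ∧
          ((esum d (Sum.inr r)) : ℕ) < (2 ^ (d - t) + j + 1) * 2 ^ t
      then x (esum d (Sum.inr r)) else 0) = (∑ r : Fin (2 ^ d),
      if j * 2 ^ t ≤ (r : ℕ) ∧ (r : ℕ) < (j + 1) * 2 ^ t then x (esum d (Sum.inr r)) else 0) := by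
    refine Finset.sum_congr rfl fun r _ => ?_
    rw [esum_inr]
    congr 1
    simp only [eq_iff_iff]
    constructor
    · rintro ⟨ha, hb⟩; omega
    · rintro ⟨ha, hb⟩; omega
  rw [h1, h2, zero_add]

lemma KQ_succ_iff (m : ℕ) (p : ℝ) (d : ℕ) (x : Fin (2 ^ (d + 1)) → ℤ) :
    KQ m p (d + 1) x ↔
      KQ m p d (fun r => x (esum d (Sum.inl r))) ∧
      KQ m p d (fun r => x (esum d (Sum.inr r))) ∧
      (∑ r, x r) ∈ intRange ((m : ℝ) * p ^ (d + 1)) := by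
  constructor
  · intro h
    refine ⟨fun t ht j hj => ?_, fun t ht j hj => ?_, ?_⟩
    · rw [Finset.mem_Icc] at ht
      rw [← window_left d t j ht.2 hj x]
      exact h t (Finset.mem_Icc.2 ⟨ht.1, ht.2.trans (Nat.le_succ d)⟩) j
        (hj.trans_le (Nat.pow_le_pow_right (by norm_num) (by omega)))
    · rw [Finset.mem_Icc] at ht
      rw [← window_right d t j ht.2 hj x]
      have hb : 2 ^ (d - t) + j < 2 ^ (d + 1 - t) := by
        have : 2 ^ (d + 1 - t) = 2 ^ (d - t) * 2 := by rw [← pow_succ]; congr 1; omega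
        omega
      exact h t (Finset.mem_Icc.2 ⟨ht.1, ht.2.trans (Nat.le_succ d)⟩) (2 ^ (d - t) + j) hb
    · have := h (d + 1) (Finset.mem_Icc.2 ⟨by omega, le_refl _⟩) 0 (by simp)
      rwa [window_full] at this
  · rintro ⟨hL, hR, hS⟩ t ht j hj
    rw [Finset.mem_Icc] at ht
    rcases Nat.lt_or_ge t (d + 1) with htd | htd
    · have ht' : t ≤ d := by omega
      have hsplit : 2 ^ (d + 1 - t) = 2 ^ (d - t) * 2 := by rw [← pow_succ]; congr 1; omega
      rcases Nat.lt_or_ge j (2 ^ (d - t)) with hjl | hjr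
      · rw [window_left d t j ht' hjl x]
        exact hL t (Finset.mem_Icc.2 ⟨ht.1, ht'⟩) j hjl
      · obtain ⟨j', rfl⟩ : ∃ j', j = 2 ^ (d - t) + j' := ⟨j - 2 ^ (d - t), by omega⟩
        have hj' : j' < 2 ^ (d - t) := by omega
        rw [window_right d t j' ht' hj' x]
        exact hR t (Finset.mem_Icc.2 ⟨ht.1, ht'⟩) j' hj'
    · have ht1 : t = d + 1 := by omega
      subst ht1
      have hj0 : j = 0 := by simpa using hj
      subst hj0
      rwa [window_full]
lemma intRange_pzero (m : ℕ) (p : ℝ) : intRange ((m : ℝ) * p ^ 0) = intRange (m : ℝ) := by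
  norm_num

open scoped Classical in
lemma KG_zero (m : ℕ) (p : ℝ) (z : ℤ) :
    KG m p 0 z = if z ∈ intRange (m : ℝ) then 1 else 0 := by
  rw [KG]
  have hQ : ∀ x : Fin (2 ^ 0) → ↥(intRange (m : ℝ)),
      ((KQ m p 0 fun r => (x r : ℤ)) ∧ (∑ r, (x r : ℤ)) = z) ↔ (x 0 : ℤ) = z := by
    intro x
    have : (∑ r, (x r : ℤ)) = (x 0 : ℤ) := Fin.sum_univ_one fun r => (x r : ℤ)
    rw [this]
    exact ⟨fun h => h.2, fun h => ⟨KQ_zero m p _, h⟩⟩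
  rw [Finset.filter_congr fun x _ => by rw [hQ]]
  by_cases hz : z ∈ intRange (m : ℝ)
  · rw [if_pos hz, Finset.card_eq_one]
    refine ⟨fun _ => ⟨z, hz⟩, ?_⟩
    ext x
    simp only [Finset.mem_filter, Finset.mem_univ, true_and, Finset.mem_singleton]
    constructor
    · intro h; funext r; exact Subtype.ext (by rw [Subsingleton.elim (α := Fin 1) r 0]; exact h)
    · intro h; rw [h]
  · rw [if_neg hz, Finset.card_eq_zero]
    ext x
    simp only [Finset.mem_filter, Finset.mem_univ, true_and, Finset.notMem_empty, iff_false]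
    intro h
    exact hz (h ▸ (x 0).2)

lemma sum_mem_of_KQ (m : ℕ) (p : ℝ) (d : ℕ) (x : Fin (2 ^ d) → ↥(intRange (m : ℝ)))
    (h : KQ m p d (fun r => (x r : ℤ))) :
    (∑ r, (x r : ℤ)) ∈ intRange ((m : ℝ) * p ^ d) := by
  cases d with
  | zero =>
    rw [intRange_pzero]
    have : (∑ r, (x r : ℤ)) = (x 0 : ℤ) := Fin.sum_univ_one fun r => (x r : ℤ)
    rw [this]; exact (x 0).2
  | succ e => exact ((KQ_succ_iff m p e _).1 h).2.2

open scoped Classical in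
lemma KG_support (m : ℕ) (p : ℝ) (d : ℕ) (z : ℤ)
    (hz : z ∉ intRange ((m : ℝ) * p ^ d)) : KG m p d z = 0 := by
  rw [KG, Finset.card_eq_zero]
  ext x
  simp only [Finset.mem_filter, Finset.mem_univ, true_and, Finset.notMem_empty, iff_false]
  rintro ⟨hQ, hS⟩
  exact hz (hS ▸ sum_mem_of_KQ m p d x hQ)

open scoped Classical in
lemma KC_zero (m : ℕ) (p : ℝ) : KC m p 0 = (intRange (m : ℝ)).card := by
  rw [KC]
  have : ∀ x : Fin (2 ^ 0) → ↥(intRange (m : ℝ)), (KQ m p 0 fun r => (x r : ℤ)) :=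
    fun x => KQ_zero m p _
  rw [Finset.filter_true_of_mem fun x _ => this x, Finset.card_univ, Fintype.card_fun]
  simp

open scoped Classical in
lemma KC_succ (m : ℕ) (p : ℝ) (d : ℕ) :
    KC m p (d + 1) = ∑ z ∈ intRange ((m : ℝ) * p ^ (d + 1)), KG m p (d + 1) z := by
  rw [KC]
  rw [Finset.card_eq_sum_card_fiberwise (f := fun x => ∑ r, ((x r : ℤ)))
    (t := intRange ((m : ℝ) * p ^ (d + 1)))
    (fun x hx => sum_mem_of_KQ m p (d + 1) x (Finset.mem_filter.1 hx).2)]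
  refine Finset.sum_congr rfl fun z _ => ?_
  rw [KG, Finset.filter_filter]

lemma card_filter_prod {A B : Type*} [Fintype A] [Fintype B] (P : A → Prop) (Q : B → Prop)
    [DecidablePred P] [DecidablePred Q] [DecidablePred fun ab : A × B => P ab.1 ∧ Q ab.2] :
    (Finset.univ.filter fun ab : A × B => P ab.1 ∧ Q ab.2).card =
      (Finset.univ.filter P).card * (Finset.univ.filter Q).card := by
  rw [← Finset.card_product]
  congr 1
  ext ab
  simp [Finset.mem_product]
lemma pred_split (m : ℕ) (p : ℝ) (d : ℕ) (z a : ℤ)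
    (hz : z ∈ intRange ((m : ℝ) * p ^ (d + 1)))
    (x : Fin (2 ^ (d + 1)) → ↥(intRange (m : ℝ))) :
    (((KQ m p (d + 1) fun r => (x r : ℤ)) ∧ (∑ r, (x r : ℤ)) = z) ∧
        (∑ r, ((x (esum d (Sum.inl r)) : ℤ))) = a) ↔
      (((KQ m p d fun r => (x (esum d (Sum.inl r)) : ℤ)) ∧
          (∑ r, (x (esum d (Sum.inl r)) : ℤ)) = a) ∧
        ((KQ m p d fun r => (x (esum d (Sum.inr r)) : ℤ)) ∧
          (∑ r, (x (esum d (Sum.inr r)) : ℤ)) = z - a)) := by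
  have hsplit := sum_split d (fun r => (x r : ℤ))
  constructor
  · rintro ⟨⟨hQ, hS⟩, hL⟩
    obtain ⟨h1, h2, _⟩ := (KQ_succ_iff m p d _).1 hQ
    exact ⟨⟨h1, hL⟩, h2, by omega⟩
  · rintro ⟨⟨h1, hL⟩, h2, hR⟩
    refine ⟨⟨(KQ_succ_iff m p d _).2 ⟨h1, h2, ?_⟩, by omega⟩, hL⟩
    have hzz : (∑ r, (x r : ℤ)) = z := by omega
    rw [hzz]; exact hz

open scoped Classical in
lemma KG_succ (m : ℕ) (p : ℝ) (d : ℕ) (z : ℤ)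
    (hz : z ∈ intRange ((m : ℝ) * p ^ (d + 1))) :
    KG m p (d + 1) z = ∑ a ∈ intRange ((m : ℝ) * p ^ d), KG m p d a * KG m p d (z - a) := by
  rw [KG]
  rw [Finset.card_eq_sum_card_fiberwise
    (f := fun x : Fin (2 ^ (d + 1)) → ↥(intRange (m : ℝ)) =>
      ∑ r, ((x (esum d (Sum.inl r)) : ℤ)))
    (t := intRange ((m : ℝ) * p ^ d))
    (fun x hx => sum_mem_of_KQ m p d _
      (((KQ_succ_iff m p d _).1 (Finset.mem_filter.1 hx).2.1).1))]
  refine Finset.sum_congr rfl fun a _ => ?_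
  rw [Finset.filter_filter, KG, KG]
  refine Eq.trans (card_filter_equiv
    ((Equiv.arrowCongr (esum d).symm (Equiv.refl _)).trans
      (Equiv.sumArrowEquivProdArrow _ _ _)) _
    (fun ab : (Fin (2 ^ d) → ↥(intRange (m : ℝ))) × (Fin (2 ^ d) → ↥(intRange (m : ℝ))) =>
      ((KQ m p d fun r => (ab.1 r : ℤ)) ∧ (∑ r, (ab.1 r : ℤ)) = a) ∧
      ((KQ m p d fun r => (ab.2 r : ℤ)) ∧ (∑ r, (ab.2 r : ℤ)) = z - a))
    (fun x => pred_split m p d z a hz x))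
    (card_filter_prod (fun y : Fin (2 ^ d) → ↥(intRange (m : ℝ)) =>
        (KQ m p d fun r => (y r : ℤ)) ∧ (∑ r, (y r : ℤ)) = a)
      (fun y : Fin (2 ^ d) → ↥(intRange (m : ℝ)) =>
        (KQ m p d fun r => (y r : ℤ)) ∧ (∑ r, (y r : ℤ)) = z - a))
open scoped Classical in
lemma count_ge (s f : ℝ) (hs : 0 ≤ s) (hfs : f ≤ s) (z : ℤ) (hz : z ∈ intRange f) :
    ((intRange s).card : ℤ) - ⌊f / 2⌋ ≤
      (((intRange s).filter fun a => z - a ∈ intRange s).card : ℤ) := by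
  rw [intRange, Finset.mem_Icc] at hz
  set H := ⌊s / 2⌋ with hH
  set F := ⌊f / 2⌋ with hF
  have hFH : F ≤ H := Int.floor_le_floor (by linarith)
  have hset : ((intRange s).filter fun a => z - a ∈ intRange s) =
      Finset.Icc (max (-H) (z - H)) (min H (z + H)) := by
    ext a
    simp only [intRange, Finset.mem_filter, Finset.mem_Icc, max_le_iff, le_min_iff, ← hH]
    constructor
    · rintro ⟨⟨h1, h2⟩, h3, h4⟩; omega
    · rintro ⟨⟨h1, h2⟩, h3, h4⟩; omega
  rw [hset, Int.card_Icc, card_intRange_int s hs]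
  rcases le_or_gt 0 z with h | h
  · rw [min_eq_left (by omega), max_eq_right (by omega)]
    omega
  · rw [min_eq_right (by omega), max_eq_left (by omega)]
    omega
open scoped Classical in
lemma KG_bounds (m κ : ℕ) (p : ℝ) (hp0 : 0 < p) (hp1 : p ≤ 1) (hm : 0 < m)
    (hX : 30 < (m : ℝ) * p ^ κ) :
    ∀ d, d ≤ κ → ∀ z ∈ intRange ((m : ℝ) * p ^ d),
      ((m : ℝ) * (1 - p / 2 - 2 / ((m : ℝ) * p ^ κ))) ^ (2 ^ d - 1) * p ^ (2 ^ d - 1 - d)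
          ≤ (KG m p d z : ℝ) ∧
      (KG m p d z : ℝ) ≤
        ((m : ℝ) * (1 + 1 / ((m : ℝ) * p ^ κ))) ^ (2 ^ d - 1) * p ^ (2 ^ d - 1 - d) := by
  set X := (m : ℝ) * p ^ κ with hXdef
  have hX0 : (0 : ℝ) < X := lt_trans (by norm_num) hX
  set aa := 1 - p / 2 - 2 / X with haadef
  set bb := 1 + 1 / X with hbbdef
  have h2X : 2 / X < 2 / 30 := by
    apply div_lt_div_of_pos_left (by norm_num) (by norm_num) hX
  have haa0 : (0 : ℝ) < aa := by rw [haadef]; linarith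
  have hbb1 : (1 : ℝ) ≤ bb := by
    rw [hbbdef]; have : 0 < 1 / X := by positivity
    linarith
  clear_value X aa bb
  intro d
  induction d with
  | zero =>
    intro _ z hz
    rw [KG_zero, if_pos (by rwa [intRange_pzero] at hz)]
    norm_num
  | succ d ih =>
    intro hd1 z hz
    have hd : d ≤ κ := le_trans (Nat.le_succ d) hd1
    have ihh := ih hd
    have hpd : (0 : ℝ) < p ^ d := pow_pos hp0 d
    have hm0 : (0 : ℝ) < (m : ℝ) := by exact_mod_cast hm
    have hXle : X ≤ (m : ℝ) * p ^ d := by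
      have h := pow_le_pow_of_le_one hp0.le hp1 hd
      rw [hXdef]
      exact mul_le_mul_of_nonneg_left h hm0.le
    have hp1d : p ^ (d + 1) ≤ p ^ d := pow_le_pow_of_le_one hp0.le hp1 (Nat.le_succ d)
    have hu : (1 : ℝ) ≤ (m : ℝ) * p ^ d / X := (one_le_div hX0).2 hXle
    set S := (intRange ((m : ℝ) * p ^ d)).filter
      (fun a' => z - a' ∈ intRange ((m : ℝ) * p ^ d)) with hSdef
    -- cardinality bounds
    have hMd_le : (((intRange ((m : ℝ) * p ^ d)).card : ℝ)) ≤ (m : ℝ) * p ^ d * bb := by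
      have h1 := card_intRange_le ((m : ℝ) * p ^ d) (by positivity)
      have h2 : (m : ℝ) * p ^ d * bb = (m : ℝ) * p ^ d + (m : ℝ) * p ^ d / X := by
        rw [hbbdef]; ring
      linarith
    have hS_ge : ((m : ℝ) * p ^ d) * aa ≤ (S.card : ℝ) := by
      have hcount := count_ge ((m : ℝ) * p ^ d) ((m : ℝ) * p ^ (d + 1)) (by positivity)
        (mul_le_mul_of_nonneg_left hp1d hm0.le) z hz
      have hcount' : (((intRange ((m : ℝ) * p ^ d)).card : ℝ)) - (⌊(m : ℝ) * p ^ (d + 1) / 2⌋ : ℝ) ≤ (S.card : ℝ) := by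
        exact_mod_cast hcount
      have h1 : ((m : ℝ) * p ^ d) - 1 < ((intRange ((m : ℝ) * p ^ d)).card : ℝ) := lt_card_intRange _ (by positivity)
      have h2 : (⌊(m : ℝ) * p ^ (d + 1) / 2⌋ : ℝ) ≤ (m : ℝ) * p ^ (d + 1) / 2 := Int.floor_le _
      have h3 : (m : ℝ) * p ^ (d + 1) = (m : ℝ) * p ^ d * p := by ring
      have h4 : ((m : ℝ) * p ^ d) * aa =
          (m : ℝ) * p ^ d - ((m : ℝ) * p ^ d * p) / 2 - 2 * ((m : ℝ) * p ^ d / X) := by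
        rw [haadef]; ring
      linarith
    -- exponent identities
    have hdlt : d < 2 ^ d := Nat.lt_two_pow_self
    have h2d : 2 ^ (d + 1) = 2 * 2 ^ d := by rw [pow_succ]; ring
    have eexp1 : 2 ^ (d + 1) - 1 = (2 ^ d - 1) + ((2 ^ d - 1) + 1) := by omega
    have eexp2 : 2 ^ (d + 1) - 1 - (d + 1) = (2 ^ d - 1 - d) + ((2 ^ d - 1 - d) + d) := by omega
    set LB := ((m : ℝ) * aa) ^ (2 ^ d - 1) * p ^ (2 ^ d - 1 - d) with hLB
    set UB := ((m : ℝ) * bb) ^ (2 ^ d - 1) * p ^ (2 ^ d - 1 - d) with hUB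
    have hLB0 : 0 ≤ LB := by
      rw [hLB]
      exact mul_nonneg (pow_nonneg (mul_nonneg hm0.le haa0.le) _) (pow_nonneg hp0.le _)
    have hUB0 : 0 ≤ UB := by
      rw [hUB]
      exact mul_nonneg (pow_nonneg (mul_nonneg hm0.le (by linarith)) _) (pow_nonneg hp0.le _)
    have keyLB : ((m : ℝ) * aa) ^ (2 ^ (d + 1) - 1) * p ^ (2 ^ (d + 1) - 1 - (d + 1)) =
        ((m : ℝ) * p ^ d * aa) * (LB * LB) := by
      rw [eexp2, eexp1, pow_add, pow_add, pow_add, pow_add, pow_one, hLB]; ring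
    have keyUB : ((m : ℝ) * bb) ^ (2 ^ (d + 1) - 1) * p ^ (2 ^ (d + 1) - 1 - (d + 1)) =
        ((m : ℝ) * p ^ d * bb) * (UB * UB) := by
      rw [eexp2, eexp1, pow_add, pow_add, pow_add, pow_add, pow_one, hUB]; ring
    -- the recursion, cast to ℝ
    have hrec := KG_succ m p d z hz
    have hrecR : (KG m p (d + 1) z : ℝ) = ∑ a' ∈ (intRange ((m : ℝ) * p ^ d)), (KG m p d a' : ℝ) * (KG m p d (z - a') : ℝ) := by
      rw [hrec]; push_cast; rfl
    constructor
    · -- lower bound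
      rw [hrecR, keyLB]
      have hsub : S ⊆ (intRange ((m : ℝ) * p ^ d)) := Finset.filter_subset _ _
      have step1 : ∑ a' ∈ S, (KG m p d a' : ℝ) * (KG m p d (z - a') : ℝ) ≤
          ∑ a' ∈ (intRange ((m : ℝ) * p ^ d)), (KG m p d a' : ℝ) * (KG m p d (z - a') : ℝ) :=
        Finset.sum_le_sum_of_subset_of_nonneg hsub
          (fun a' _ _ => mul_nonneg (Nat.cast_nonneg _) (Nat.cast_nonneg _))
      have step2 : (S.card : ℝ) * (LB * LB) ≤
          ∑ a' ∈ S, (KG m p d a' : ℝ) * (KG m p d (z - a') : ℝ) := by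
        have := Finset.card_nsmul_le_sum S
          (fun a' => (KG m p d a' : ℝ) * (KG m p d (z - a') : ℝ)) (LB * LB) ?_
        · simpa [nsmul_eq_mul] using this
        · intro a' ha'
          rw [hSdef, Finset.mem_filter] at ha'
          exact mul_le_mul (ihh a' ha'.1).1 (ihh (z - a') ha'.2).1 hLB0 (Nat.cast_nonneg _)
      have step3 : ((m : ℝ) * p ^ d * aa) * (LB * LB) ≤ (S.card : ℝ) * (LB * LB) :=
        mul_le_mul_of_nonneg_right hS_ge (mul_nonneg hLB0 hLB0)
      linarith
    · -- upper bound
      rw [hrecR, keyUB]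
      rw [← Finset.sum_filter_add_sum_filter_not (intRange ((m : ℝ) * p ^ d)) (fun a' => z - a' ∈ (intRange ((m : ℝ) * p ^ d)))]
      have hzero : ∑ a' ∈ (intRange ((m : ℝ) * p ^ d)).filter (fun a' => ¬(z - a' ∈ (intRange ((m : ℝ) * p ^ d)))),
          (KG m p d a' : ℝ) * (KG m p d (z - a') : ℝ) = 0 := by
        refine Finset.sum_eq_zero fun a' ha' => ?_
        rw [Finset.mem_filter] at ha'
        rw [KG_support m p d (z - a') ha'.2]
        norm_num
      have step2 : ∑ a' ∈ S, (KG m p d a' : ℝ) * (KG m p d (z - a') : ℝ) ≤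
          (S.card : ℝ) * (UB * UB) := by
        have := Finset.sum_le_card_nsmul S
          (fun a' => (KG m p d a' : ℝ) * (KG m p d (z - a') : ℝ)) (UB * UB) ?_
        · simpa [nsmul_eq_mul] using this
        · intro a' ha'
          rw [hSdef, Finset.mem_filter] at ha'
          exact mul_le_mul (ihh a' ha'.1).2 (ihh (z - a') ha'.2).2 (Nat.cast_nonneg _) hUB0
      have step3 : (S.card : ℝ) ≤ ((m : ℝ) * p ^ d * bb) := by
        have h5 : (S.card : ℝ) ≤ ((intRange ((m : ℝ) * p ^ d)).card : ℝ) := by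
          exact_mod_cast Finset.card_filter_le (intRange ((m : ℝ) * p ^ d)) _
        linarith
      have step4 : (S.card : ℝ) * (UB * UB) ≤ ((m : ℝ) * p ^ d * bb) * (UB * UB) :=
        mul_le_mul_of_nonneg_right step3 (mul_nonneg hUB0 hUB0)
      linarith
open scoped Classical in
lemma nat_card_subtype {α : Type*} [Fintype α] (P : α → Prop) :
    Nat.card {x // P x} = (Finset.univ.filter P).card := by
  rw [Nat.card_eq_fintype_card, Fintype.card_subtype]

lemma blockIdx_injective {κ : ℕ} (d : ℕ) (hd : d ≤ κ) (i : Fin (2 ^ (κ - d))) :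
    Function.Injective (blockIdx d hd i) := by
  intro r s h
  have h2 := congrArg Fin.val h
  simp only [blockIdx] at h2
  exact Fin.ext (by omega)

open scoped Classical in
lemma card_fix (m n : ℕ) (j0 : Fin n) (c : ↥(intRange (m : ℝ))) :
    (Finset.univ.filter fun g : Fin n → ↥(intRange (m : ℝ)) => g j0 = c).card
      = (intRange (m : ℝ)).card ^ (n - 1) := by
  rw [← Fintype.card_subtype]
  have E : {g : Fin n → ↥(intRange (m : ℝ)) // g j0 = c} ≃
      ({j : Fin n // j ≠ j0} → ↥(intRange (m : ℝ))) :=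
    { toFun := fun g j => g.1 j.1
      invFun := fun h => ⟨fun j => if hj : j = j0 then c else h ⟨j, hj⟩, by simp⟩
      left_inv := by
        intro g
        refine Subtype.ext (funext fun j => ?_)
        by_cases hj : j = j0
        · subst hj; simp [g.2]
        · simp [hj]
      right_inv := by
        intro h
        funext j
        have hj := j.2
        simp [hj] }
  rw [Fintype.card_congr E, Fintype.card_fun]
  have h1 : Fintype.card {j : Fin n // j ≠ j0} =
      Fintype.card (Fin n) - Fintype.card {j : Fin n // j = j0} :=
    Fintype.card_subtype_compl _
  rw [h1, Fintype.card_subtype_eq, Fintype.card_fin, Fintype.card_coe]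
open scoped Classical in
lemma fiber_card (κ n m : ℕ) (hn : 0 < n) (d : ℕ) (hd : d ≤ κ) (i : Fin (2 ^ (κ - d)))
    (ℓ : Fin (2 ^ d) → Fin n) (x : Fin (2 ^ d) → ↥(intRange (m : ℝ))) :
    (Finset.univ.filter fun L : Fin (2 ^ κ) → Fin n → ↥(intRange (m : ℝ)) =>
        (fun r => L (blockIdx d hd i r) (ℓ r)) = x).card
      = (intRange (m : ℝ)).card ^ (2 ^ κ * n - 2 ^ d) := by
  have hpred : ∀ L : Fin (2 ^ κ) → Fin n → ↥(intRange (m : ℝ)),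
      ((fun r => L (blockIdx d hd i r) (ℓ r)) = x) ↔
        (∀ u, ∀ r, blockIdx d hd i r = u → L u (ℓ r) = x r) := by
    intro L
    rw [funext_iff]
    constructor
    · rintro h u r rfl; exact h r
    · intro h r; exact h _ r rfl
  rw [Finset.filter_congr (fun L _ => by rw [hpred L])]
  rw [← Fintype.card_subtype]
  rw [Fintype.card_congr (Equiv.subtypePiEquivPi
    (p := fun u (g : Fin n → ↥(intRange (m : ℝ))) =>
      ∀ r, blockIdx d hd i r = u → g (ℓ r) = x r))]
  rw [Fintype.card_pi]
  have hcard : ∀ u : Fin (2 ^ κ),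
      Fintype.card {g : Fin n → ↥(intRange (m : ℝ)) //
          ∀ r, blockIdx d hd i r = u → g (ℓ r) = x r} =
        if u ∈ Finset.univ.image (blockIdx d hd i) then (intRange (m : ℝ)).card ^ (n - 1)
        else (intRange (m : ℝ)).card ^ n := by
    intro u
    by_cases hu : u ∈ Finset.univ.image (blockIdx d hd i)
    · rw [if_pos hu]
      obtain ⟨r0, -, hr0⟩ := Finset.mem_image.1 hu
      have hiff : ∀ g : Fin n → ↥(intRange (m : ℝ)),
          (∀ r, blockIdx d hd i r = u → g (ℓ r) = x r) ↔ g (ℓ r0) = x r0 := by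
        intro g
        constructor
        · intro h; exact h r0 hr0
        · intro h r hr
          have hrr : r = r0 := blockIdx_injective d hd i (hr.trans hr0.symm)
          subst hrr; exact h
      rw [Fintype.card_congr (Equiv.subtypeEquivRight hiff), Fintype.card_subtype]
      exact card_fix m n (ℓ r0) (x r0)
    · rw [if_neg hu]
      have htriv : ∀ g : Fin n → ↥(intRange (m : ℝ)),
          (∀ r, blockIdx d hd i r = u → g (ℓ r) = x r) := by
        intro g r hr
        exact absurd (Finset.mem_image.2 ⟨r, Finset.mem_univ r, hr⟩) hu
      rw [Fintype.card_congr (Equiv.subtypeUnivEquiv htriv), Fintype.card_fun,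
        Fintype.card_coe, Fintype.card_fin]
  rw [Finset.prod_congr rfl (fun u _ => hcard u)]
  rw [Finset.prod_ite, Finset.prod_const, Finset.prod_const]
  have himg : (Finset.univ.filter (fun u => u ∈ Finset.univ.image (blockIdx d hd i))).card
      = 2 ^ d := by
    have h1 : (Finset.univ.filter (fun u => u ∈ Finset.univ.image (blockIdx d hd i)))
        = Finset.univ.image (blockIdx d hd i) := by
      ext u; simp
    rw [h1, Finset.card_image_of_injective _ (blockIdx_injective d hd i), Finset.card_univ,
      Fintype.card_fin]
  have htot := Finset.card_filter_add_card_filter_not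
    (s := (Finset.univ : Finset (Fin (2 ^ κ))))
    (p := fun u => u ∈ Finset.univ.image (blockIdx d hd i))
  have hcardu : (Finset.univ : Finset (Fin (2 ^ κ))).card = 2 ^ κ := by
    rw [Finset.card_univ, Fintype.card_fin]
  have hneg : (Finset.univ.filter
      (fun u => ¬ u ∈ Finset.univ.image (blockIdx d hd i))).card = 2 ^ κ - 2 ^ d := by
    omega
  rw [himg, hneg, ← pow_mul, ← pow_mul, ← pow_add]
  congr 1
  have hpow : 2 ^ d ≤ 2 ^ κ := Nat.pow_le_pow_right (by norm_num) hd
  have h2dn : 2 ^ d ≤ 2 ^ κ * n := le_trans hpow (Nat.le_mul_of_pos_right _ hn)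
  zify [hpow, show 1 ≤ n from hn, h2dn]
  ring
open scoped Classical in
lemma count_L (κ n m : ℕ) (p : ℝ) (hn : 0 < n) (d : ℕ) (hd : d ≤ κ) (i : Fin (2 ^ (κ - d)))
    (ℓ : Fin (2 ^ d) → Fin n) :
    (Finset.univ.filter fun L : Fin (2 ^ κ) → Fin n → ↥(intRange (m : ℝ)) =>
        KQ m p d fun r => (L (blockIdx d hd i r) (ℓ r) : ℤ)).card
      = KC m p d * (intRange (m : ℝ)).card ^ (2 ^ κ * n - 2 ^ d) := by
  rw [Finset.card_eq_sum_card_fiberwise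
    (f := fun (L : Fin (2 ^ κ) → Fin n → ↥(intRange (m : ℝ))) (r : Fin (2 ^ d)) =>
      L (blockIdx d hd i r) (ℓ r))
    (t := Finset.univ.filter fun x : Fin (2 ^ d) → ↥(intRange (m : ℝ)) =>
      KQ m p d fun r => (x r : ℤ))
    (fun L hL => Finset.mem_filter.2 ⟨Finset.mem_univ _, (Finset.mem_filter.1 hL).2⟩)]
  have hfib : ∀ x ∈ (Finset.univ.filter fun x : Fin (2 ^ d) → ↥(intRange (m : ℝ)) =>
      KQ m p d fun r => (x r : ℤ)),
      ((Finset.univ.filter fun L : Fin (2 ^ κ) → Fin n → ↥(intRange (m : ℝ)) =>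
          KQ m p d fun r => (L (blockIdx d hd i r) (ℓ r) : ℤ)).filter
        (fun L => (fun r => L (blockIdx d hd i r) (ℓ r)) = x)).card
      = (intRange (m : ℝ)).card ^ (2 ^ κ * n - 2 ^ d) := by
    intro x hx
    rw [Finset.filter_filter]
    have heq : (Finset.univ.filter fun L : Fin (2 ^ κ) → Fin n → ↥(intRange (m : ℝ)) =>
        (KQ m p d fun r => (L (blockIdx d hd i r) (ℓ r) : ℤ)) ∧
          (fun r => L (blockIdx d hd i r) (ℓ r)) = x)
        = (Finset.univ.filter fun L : Fin (2 ^ κ) → Fin n → ↥(intRange (m : ℝ)) =>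
            (fun r => L (blockIdx d hd i r) (ℓ r)) = x) := by
      ext L
      simp only [Finset.mem_filter, Finset.mem_univ, true_and, and_iff_right_iff_imp]
      intro h
      have hKQ := (Finset.mem_filter.1 hx).2
      have hfun : (fun r => (L (blockIdx d hd i r) (ℓ r) : ℤ)) = fun r => (x r : ℤ) :=
        funext fun r => by rw [congrFun h r]
      rw [show (KQ m p d fun r => (L (blockIdx d hd i r) (ℓ r) : ℤ)) =
        (KQ m p d fun r => (x r : ℤ)) from congrArg _ hfun]
      exact hKQ
    rw [heq]
    exact fiber_card κ n m hn d hd i ℓ x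
  rw [Finset.sum_congr rfl hfib, Finset.sum_const, smul_eq_mul]
  rfl

open scoped Classical in
lemma sum_level (κ n m : ℕ) (p : ℝ) (hn : 0 < n) (d : ℕ) (hd : d ≤ κ) (i : Fin (2 ^ (κ - d))) :
    (∑ L : Fin (2 ^ κ) → Fin n → ↥(intRange (m : ℝ)),
      levelListSize κ n m p (fun u j => (L u j : ℤ)) d hd i)
      = n ^ 2 ^ d * (KC m p d * (intRange (m : ℝ)).card ^ (2 ^ κ * n - 2 ^ d)) := by
  have h1 : ∀ L : Fin (2 ^ κ) → Fin n → ↥(intRange (m : ℝ)),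
      levelListSize κ n m p (fun u j => (L u j : ℤ)) d hd i
        = (Finset.univ.filter fun ℓ : Fin (2 ^ d) → Fin n =>
            KQ m p d fun r => (L (blockIdx d hd i r) (ℓ r) : ℤ)).card := by
    intro L
    rw [levelListSize]
    exact nat_card_subtype _
  calc (∑ L : Fin (2 ^ κ) → Fin n → ↥(intRange (m : ℝ)),
      levelListSize κ n m p (fun u j => (L u j : ℤ)) d hd i)
      = ∑ L : Fin (2 ^ κ) → Fin n → ↥(intRange (m : ℝ)), ∑ ℓ : Fin (2 ^ d) → Fin n,
          if KQ m p d fun r => (L (blockIdx d hd i r) (ℓ r) : ℤ) then 1 else 0 := by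
        refine Finset.sum_congr rfl fun L _ => ?_
        rw [h1 L, Finset.card_filter]
    _ = ∑ ℓ : Fin (2 ^ d) → Fin n, ∑ L : Fin (2 ^ κ) → Fin n → ↥(intRange (m : ℝ)),
          if KQ m p d fun r => (L (blockIdx d hd i r) (ℓ r) : ℤ) then 1 else 0 :=
        Finset.sum_comm
    _ = ∑ ℓ : Fin (2 ^ d) → Fin n,
          (KC m p d * (intRange (m : ℝ)).card ^ (2 ^ κ * n - 2 ^ d)) := by
        refine Finset.sum_congr rfl fun ℓ _ => ?_
        rw [← Finset.card_filter]
        exact count_L κ n m p hn d hd i ℓ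
    _ = n ^ 2 ^ d * (KC m p d * (intRange (m : ℝ)).card ^ (2 ^ κ * n - 2 ^ d)) := by
        rw [Finset.sum_const, smul_eq_mul, Finset.card_univ, Fintype.card_fun,
          Fintype.card_fin, Fintype.card_fin]
open scoped Classical in
lemma card_intRange_pos (m : ℕ) : 0 < (intRange (m : ℝ)).card :=
  Finset.card_pos.2 ⟨0, zero_mem_intRange_s5 _ (Nat.cast_nonneg m)⟩

open scoped Classical in
lemma sum_totalSize (κ n m : ℕ) (p : ℝ) (hn : 0 < n) :
    (∑ L : Fin (2 ^ κ) → Fin n → ↥(intRange (m : ℝ)),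
      totalSize κ n m p (fun u j => (L u j : ℤ)))
      = ∑ d ∈ Finset.range (κ + 1), if hd : d ≤ κ then
          2 ^ (κ - d) * (n ^ 2 ^ d *
            (KC m p d * (intRange (m : ℝ)).card ^ (2 ^ κ * n - 2 ^ d))) else 0 := by
  have hswap : (∑ L : Fin (2 ^ κ) → Fin n → ↥(intRange (m : ℝ)),
      totalSize κ n m p (fun u j => (L u j : ℤ)))
      = ∑ d ∈ (Finset.range (κ + 1)).attach, ∑ i : Fin (2 ^ (κ - (d : ℕ))),
          ∑ L : Fin (2 ^ κ) → Fin n → ↥(intRange (m : ℝ)),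
            levelListSize κ n m p (fun u j => (L u j : ℤ)) (d : ℕ)
              (Nat.lt_succ_iff.mp (Finset.mem_range.mp d.property)) i := by
    simp only [totalSize]
    rw [Finset.sum_comm]
    exact Finset.sum_congr rfl fun d _ => Finset.sum_comm
  rw [hswap]
  rw [← Finset.sum_attach (Finset.range (κ + 1)) (fun d => if hd : d ≤ κ then
    2 ^ (κ - d) * (n ^ 2 ^ d *
      (KC m p d * (intRange (m : ℝ)).card ^ (2 ^ κ * n - 2 ^ d))) else 0)]
  refine Finset.sum_congr rfl fun d _ => ?_
  have hd : (d : ℕ) ≤ κ := Nat.lt_succ_iff.mp (Finset.mem_range.mp d.property)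
  rw [dif_pos hd]
  rw [Finset.sum_congr rfl (fun i _ => sum_level κ n m p hn (d : ℕ) hd i)]
  rw [Finset.sum_const, smul_eq_mul, Finset.card_univ, Fintype.card_fin]

open scoped Classical in
lemma expTotalSize_eq (κ n m : ℕ) (p : ℝ) (hn : 0 < n) :
    expTotalSize κ n m p
      = ∑ d ∈ Finset.range (κ + 1), (2 : ℝ) ^ (κ - d) * (n : ℝ) ^ 2 ^ d *
          ((KC m p d : ℝ) / ((intRange (m : ℝ)).card : ℝ) ^ 2 ^ d) := by
  have hN : (0 : ℝ) < ((intRange (m : ℝ)).card : ℝ) := by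
    exact_mod_cast card_intRange_pos m
  have hcard : (Fintype.card (Fin (2 ^ κ) → Fin n → ↥(intRange (m : ℝ))) : ℝ)
      = ((intRange (m : ℝ)).card : ℝ) ^ (2 ^ κ * n) := by
    rw [Fintype.card_fun, Fintype.card_fun, Fintype.card_coe, Fintype.card_fin,
      Fintype.card_fin, ← pow_mul]
    push_cast
    ring
  rw [expTotalSize]
  have hsum : (∑ L : Fin (2 ^ κ) → Fin n → ↥(intRange (m : ℝ)),
      ((totalSize κ n m p (fun u j => (L u j : ℤ)) : ℝ)))
      = ((∑ L : Fin (2 ^ κ) → Fin n → ↥(intRange (m : ℝ)),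
          totalSize κ n m p (fun u j => (L u j : ℤ)) : ℕ) : ℝ) := by
    push_cast
    rfl
  rw [hsum, sum_totalSize κ n m p hn, hcard]
  push_cast
  rw [Finset.sum_div]
  refine Finset.sum_congr rfl fun d hd => ?_
  have hdk : d ≤ κ := Nat.lt_succ_iff.mp (Finset.mem_range.mp hd)
  rw [dif_pos hdk]
  have hpow : 2 ^ d ≤ 2 ^ κ * n :=
    le_trans (Nat.pow_le_pow_right (by norm_num) hdk) (Nat.le_mul_of_pos_right _ hn)
  have hsplit : ((intRange (m : ℝ)).card : ℝ) ^ (2 ^ κ * n)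
      = ((intRange (m : ℝ)).card : ℝ) ^ (2 ^ κ * n - 2 ^ d) *
        ((intRange (m : ℝ)).card : ℝ) ^ (2 ^ d) := by
    rw [← pow_add, Nat.sub_add_cancel hpow]
  push_cast
  rw [hsplit]
  field_simp
open scoped Classical in
lemma KC_bounds (m κ : ℕ) (p : ℝ) (hp0 : 0 < p) (hp1 : p ≤ 1) (hm : 0 < m)
    (hX : 30 < (m : ℝ) * p ^ κ) (d : ℕ) (hd1 : 1 ≤ d) (hd : d ≤ κ) :
    (m : ℝ) ^ 2 ^ d * p ^ (2 ^ d - 1) * ((1 - 1 / ((m : ℝ) * p ^ κ)) *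
        (1 - p / 2 - 2 / ((m : ℝ) * p ^ κ)) ^ (2 ^ d - 1)) ≤ (KC m p d : ℝ) ∧
    (KC m p d : ℝ) ≤ (m : ℝ) ^ 2 ^ d * p ^ (2 ^ d - 1) *
        (1 + 1 / ((m : ℝ) * p ^ κ)) ^ 2 ^ d := by
  obtain ⟨e, rfl⟩ : ∃ e, d = e + 1 := ⟨d - 1, by omega⟩
  set d := e + 1 with hddef
  set X := (m : ℝ) * p ^ κ with hXdef
  have hX0 : (0 : ℝ) < X := lt_trans (by norm_num) hX
  set aa := 1 - p / 2 - 2 / X with haadef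
  set bb := 1 + 1 / X with hbbdef
  have hm0 : (0 : ℝ) < (m : ℝ) := by exact_mod_cast hm
  have hpd : (0 : ℝ) < p ^ d := pow_pos hp0 d
  have hXle : X ≤ (m : ℝ) * p ^ d := by
    rw [hXdef]
    exact mul_le_mul_of_nonneg_left (pow_le_pow_of_le_one hp0.le hp1 hd) hm0.le
  have hu : (1 : ℝ) ≤ (m : ℝ) * p ^ d / X := (one_le_div hX0).2 hXle
  have h2X : 2 / X < 2 / 30 :=
    div_lt_div_of_pos_left (by norm_num) (by norm_num) hX
  have haa0 : (0 : ℝ) < aa := by rw [haadef]; linarith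
  clear_value X aa bb
  have hGB := KG_bounds m κ p hp0 hp1 hm (by rw [← hXdef]; exact hX) d hd
  rw [← hXdef] at hGB
  rw [← haadef, ← hbbdef] at hGB
  rw [KC_succ m p e]
  have hMd_le : (((intRange ((m : ℝ) * p ^ d)).card : ℝ)) ≤ (m : ℝ) * p ^ d * bb := by
    have h1 := card_intRange_le ((m : ℝ) * p ^ d) (by positivity)
    have h2 : (m : ℝ) * p ^ d * bb = (m : ℝ) * p ^ d + (m : ℝ) * p ^ d / X := by
      rw [hbbdef]; ring
    linarith
  have hMd_ge : (m : ℝ) * p ^ d * (1 - 1 / X) ≤ ((intRange ((m : ℝ) * p ^ d)).card : ℝ) := by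
    have h1 := lt_card_intRange ((m : ℝ) * p ^ d) (by positivity)
    have h2 : (m : ℝ) * p ^ d * (1 - 1 / X) = (m : ℝ) * p ^ d - (m : ℝ) * p ^ d / X := by ring
    linarith
  have hdlt : d < 2 ^ d := Nat.lt_two_pow_self
  have ee1 : 2 ^ d = 1 + (2 ^ d - 1) := by omega
  have ee2 : 2 ^ d - 1 = d + (2 ^ d - 1 - d) := by omega
  set LB := ((m : ℝ) * aa) ^ (2 ^ d - 1) * p ^ (2 ^ d - 1 - d) with hLB
  set UB := ((m : ℝ) * bb) ^ (2 ^ d - 1) * p ^ (2 ^ d - 1 - d) with hUB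
  have hLB0 : 0 ≤ LB := by
    rw [hLB]
    exact mul_nonneg (pow_nonneg (mul_nonneg hm0.le haa0.le) _) (pow_nonneg hp0.le _)
  have hUB0 : 0 ≤ UB := by
    rw [hUB]
    refine mul_nonneg (pow_nonneg (mul_nonneg hm0.le ?_) _) (pow_nonneg hp0.le _)
    rw [hbbdef]; positivity
  have hmpow : (m : ℝ) ^ 2 ^ d = (m : ℝ) * (m : ℝ) ^ (2 ^ d - 1) := by
    conv_lhs => rw [ee1]
    rw [pow_add, pow_one]
  have hppow : p ^ (2 ^ d - 1) = p ^ d * p ^ (2 ^ d - 1 - d) := by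
    conv_lhs => rw [ee2]
    rw [pow_add]
  have hbpow : bb ^ 2 ^ d = bb * bb ^ (2 ^ d - 1) := by
    conv_lhs => rw [ee1]
    rw [pow_add, pow_one]
  have keyL : ((m : ℝ) * p ^ d * (1 - 1 / X)) * LB =
      (m : ℝ) ^ 2 ^ d * p ^ (2 ^ d - 1) * ((1 - 1 / X) * aa ^ (2 ^ d - 1)) := by
    rw [hLB, hmpow, hppow, mul_pow]
    ring
  have keyU : ((m : ℝ) * p ^ d * bb) * UB =
      (m : ℝ) ^ 2 ^ d * p ^ (2 ^ d - 1) * bb ^ 2 ^ d := by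
    rw [hUB, hmpow, hppow, hbpow, mul_pow]
    ring
  constructor
  · rw [← keyL]
    have step1 : ((intRange ((m : ℝ) * p ^ d)).card : ℝ) * LB ≤
        ∑ z ∈ intRange ((m : ℝ) * p ^ d), (KG m p d z : ℝ) := by
      have := Finset.card_nsmul_le_sum (intRange ((m : ℝ) * p ^ d))
        (fun z => (KG m p d z : ℝ)) LB (fun z hz => (hGB z hz).1)
      simpa [nsmul_eq_mul] using this
    have step0 : (↑(∑ z ∈ intRange ((m : ℝ) * p ^ (e + 1)), KG m p (e + 1) z) : ℝ)
        = ∑ z ∈ intRange ((m : ℝ) * p ^ d), (KG m p d z : ℝ) := by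
      push_cast [hddef]; rfl
    rw [step0]
    have step2 : ((m : ℝ) * p ^ d * (1 - 1 / X)) * LB ≤
        ((intRange ((m : ℝ) * p ^ d)).card : ℝ) * LB :=
      mul_le_mul_of_nonneg_right hMd_ge hLB0
    linarith
  · rw [← keyU]
    have step1 : (∑ z ∈ intRange ((m : ℝ) * p ^ d), (KG m p d z : ℝ)) ≤
        ((intRange ((m : ℝ) * p ^ d)).card : ℝ) * UB := by
      have := Finset.sum_le_card_nsmul (intRange ((m : ℝ) * p ^ d))
        (fun z => (KG m p d z : ℝ)) UB (fun z hz => (hGB z hz).2)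
      simpa [nsmul_eq_mul] using this
    have step0 : (↑(∑ z ∈ intRange ((m : ℝ) * p ^ (e + 1)), KG m p (e + 1) z) : ℝ)
        = ∑ z ∈ intRange ((m : ℝ) * p ^ d), (KG m p d z : ℝ) := by
      push_cast [hddef]; rfl
    rw [step0]
    have step2 : ((intRange ((m : ℝ) * p ^ d)).card : ℝ) * UB ≤
        ((m : ℝ) * p ^ d * bb) * UB :=
      mul_le_mul_of_nonneg_right hMd_le hUB0
    linarith
lemma key_ineq1 (p X : ℝ) (hp0 : 0 < p) (hp : p < 1/30) (hX : 35 < X) :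
    (1 + 1 / X) ^ 2 * ((1 - p) * (1 - 35 / X)) ≤ (1 - p / 2 - 2 / X) ^ 2 := by
  have hX0 : (0:ℝ) < X := by linarith
  have hq : 1/X < 1/35 := div_lt_div_of_pos_left (by norm_num) (by norm_num) hX
  have hq0 : 0 < 1/X := by positivity
  have h35 : 35/X = 35*(1/X) := by ring
  have h2' : 2/X = 2*(1/X) := by ring
  have h1' : 1/X = 1*(1/X) := by ring
  rw [h35, h2']
  have h1 : p*(1/X) < (1/X)/30 := by nlinarith
  have h2 : p*((1/X)*(1/X)) < ((1/X)*(1/X))/30 := by nlinarith [mul_pos hq0 hq0]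
  have h3 : 0 ≤ ((1/X)*(1/X)*(1/X))*(1-p) := by nlinarith [mul_pos (mul_pos hq0 hq0) hq0]
  nlinarith [sq_nonneg p, mul_pos hq0 hq0]

lemma key_ineq2 (X : ℝ) (hX : 30 < X) : (1 + 1 / X) ^ 2 ≤ 1 + 35 / X := by
  have hX0 : (0:ℝ) < X := by linarith
  have hq : 1/X < 1/30 := div_lt_div_of_pos_left (by norm_num) (by norm_num) hX
  have hq0 : 0 < 1/X := by positivity
  have h35 : 35/X = 35*(1/X) := by ring
  rw [h35]
  nlinarith [sq_nonneg (1/X)]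
lemma per_d_upper (m κ : ℕ) (p : ℝ) (hp0 : 0 < p) (hp1 : p ≤ 1) (hm : 0 < m) (hκ : 1 ≤ κ)
    (hX : 30 < (m : ℝ) * p ^ κ) (d : ℕ) (hd1 : 1 ≤ d) (hd : d ≤ κ) :
    (KC m p d : ℝ) / ((intRange (m : ℝ)).card : ℝ) ^ 2 ^ d ≤
      p ^ (2 ^ d - 1) * ((1 + p) ^ (2 ^ κ - 1) * (1 + 35 / ((m : ℝ) * p ^ κ)) ^ (2 ^ κ - 1)) := by
  have hm0 : (0 : ℝ) < (m : ℝ) := by exact_mod_cast hm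
  have hX0 : (0 : ℝ) < (m : ℝ) * p ^ κ := by positivity
  have hN0 : (0 : ℝ) < ((intRange (m : ℝ)).card : ℝ) := by exact_mod_cast card_intRange_pos m
  have hNm : (m : ℝ) ≤ ((intRange (m : ℝ)).card : ℝ) := by
    have h1 := lt_card_intRange (m : ℝ) (Nat.cast_nonneg m)
    have h2 : m < (intRange (m : ℝ)).card + 1 := by exact_mod_cast (by linarith : (m:ℝ) < ((intRange (m : ℝ)).card : ℝ) + 1)
    exact_mod_cast Nat.lt_succ_iff.1 h2
  rw [div_le_iff₀ (pow_pos hN0 _)]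
  have hKC := (KC_bounds m κ p hp0 hp1 hm hX d hd1 hd).2
  have hb1 : (1 + 1 / ((m : ℝ) * p ^ κ)) ^ 2 ≤ 1 + 35 / ((m : ℝ) * p ^ κ) := by
    exact key_ineq2 _ hX
  have hexp : 2 ^ d ≤ 2 * (2 ^ κ - 1) := by
    have h1 : 2 ^ d ≤ 2 ^ κ := Nat.pow_le_pow_right (by norm_num) hd
    have h2 : 2 ≤ 2 ^ κ := by
      calc 2 = 2 ^ 1 := (pow_one 2).symm
      _ ≤ 2 ^ κ := Nat.pow_le_pow_right (by norm_num) hκ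
    omega
  have hbb1 : (1 : ℝ) ≤ 1 + 1 / ((m : ℝ) * p ^ κ) := by
    have : 0 < 1 / ((m : ℝ) * p ^ κ) := by positivity
    linarith
  have hb2 : (1 + 1 / ((m : ℝ) * p ^ κ)) ^ 2 ^ d ≤
      (1 + 35 / ((m : ℝ) * p ^ κ)) ^ (2 ^ κ - 1) := by
    calc (1 + 1 / ((m : ℝ) * p ^ κ)) ^ 2 ^ d
        ≤ (1 + 1 / ((m : ℝ) * p ^ κ)) ^ (2 * (2 ^ κ - 1)) :=
          pow_le_pow_right₀ hbb1 hexp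
      _ = ((1 + 1 / ((m : ℝ) * p ^ κ)) ^ 2) ^ (2 ^ κ - 1) := by rw [← pow_mul]
      _ ≤ (1 + 35 / ((m : ℝ) * p ^ κ)) ^ (2 ^ κ - 1) :=
          pow_le_pow_left₀ (by positivity) hb1 _
  calc (KC m p d : ℝ)
      ≤ (m : ℝ) ^ 2 ^ d * p ^ (2 ^ d - 1) * (1 + 1 / ((m : ℝ) * p ^ κ)) ^ 2 ^ d := hKC
    _ ≤ ((intRange (m : ℝ)).card : ℝ) ^ 2 ^ d * p ^ (2 ^ d - 1) *
          ((1 + p) ^ (2 ^ κ - 1) * (1 + 35 / ((m : ℝ) * p ^ κ)) ^ (2 ^ κ - 1)) := by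
        refine mul_le_mul (mul_le_mul (pow_le_pow_left₀ hm0.le hNm _) le_rfl
          (pow_nonneg hp0.le _) (pow_nonneg (by positivity) _)) ?_ (by positivity)
          (by positivity)
        calc (1 + 1 / ((m : ℝ) * p ^ κ)) ^ 2 ^ d
            ≤ (1 + 35 / ((m : ℝ) * p ^ κ)) ^ (2 ^ κ - 1) := hb2
          _ ≤ (1 + p) ^ (2 ^ κ - 1) * (1 + 35 / ((m : ℝ) * p ^ κ)) ^ (2 ^ κ - 1) := by
              refine le_mul_of_one_le_left (by positivity) (one_le_pow₀ (by linarith))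
    _ = p ^ (2 ^ d - 1) * ((1 + p) ^ (2 ^ κ - 1) * (1 + 35 / ((m : ℝ) * p ^ κ)) ^ (2 ^ κ - 1)) *
          ((intRange (m : ℝ)).card : ℝ) ^ 2 ^ d := by ring

lemma per_d_lower (m κ : ℕ) (p : ℝ) (hp0 : 0 < p) (hp4 : p < 1 / 30) (hm : 0 < m) (hκ : 1 ≤ κ)
    (hX : 35 < (m : ℝ) * p ^ κ) (d : ℕ) (hd1 : 1 ≤ d) (hd : d ≤ κ) :
    p ^ (2 ^ d - 1) * ((1 - p) ^ (2 ^ κ - 1) * (1 - 35 / ((m : ℝ) * p ^ κ)) ^ (2 ^ κ - 1)) ≤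
      (KC m p d : ℝ) / ((intRange (m : ℝ)).card : ℝ) ^ 2 ^ d := by
  have hp1 : p ≤ 1 := by linarith
  have hm0 : (0 : ℝ) < (m : ℝ) := by exact_mod_cast hm
  have hX0 : (0 : ℝ) < (m : ℝ) * p ^ κ := by positivity
  have hN0 : (0 : ℝ) < ((intRange (m : ℝ)).card : ℝ) := by exact_mod_cast card_intRange_pos m
  have hNm1 : ((intRange (m : ℝ)).card : ℝ) ≤ (m : ℝ) + 1 :=
    card_intRange_le (m : ℝ) (Nat.cast_nonneg m)
  rw [le_div_iff₀ (pow_pos hN0 _)]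
  have hKC := (KC_bounds m κ p hp0 hp1 hm (by linarith) d hd1 hd).1
  set c := (1 - p) * (1 - 35 / ((m : ℝ) * p ^ κ)) with hcdef
  clear_value c
  have h35le : 35 / ((m : ℝ) * p ^ κ) ≤ 1 := by
    rw [div_le_one hX0]; linarith
  have hc0 : 0 ≤ c := by
    rw [hcdef]; exact mul_nonneg (by linarith) (by linarith)
  have h350 : 0 < 35 / ((m : ℝ) * p ^ κ) := by positivity
  have hc1 : c ≤ 1 := by
    rw [hcdef]
    exact mul_le_one₀ (by linarith) (by linarith) (by linarith)
  have hcpow : (1 - p) ^ (2 ^ κ - 1) * (1 - 35 / ((m : ℝ) * p ^ κ)) ^ (2 ^ κ - 1)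
      = c ^ (2 ^ κ - 1) := by rw [hcdef, mul_pow]
  -- numeric keys
  have hq : 1 / ((m : ℝ) * p ^ κ) < 1 / 35 :=
    div_lt_div_of_pos_left (by norm_num) (by norm_num) hX
  have hq0 : 0 < 1 / ((m : ℝ) * p ^ κ) := by positivity
  have hkey : (1 + 1 / ((m : ℝ) * p ^ κ)) ^ 2 * c ≤ (1 - p / 2 - 2 / ((m : ℝ) * p ^ κ)) ^ 2 := by
    rw [hcdef]
    exact key_ineq1 p _ hp0 hp4 hX
  have h2q : 2 / ((m : ℝ) * p ^ κ) = 2 * (1 / ((m : ℝ) * p ^ κ)) := by ring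
  have haa0 : (0:ℝ) < 1 - p / 2 - 2 / ((m : ℝ) * p ^ κ) := by
    rw [h2q]; linarith
  have haaX : 1 - p / 2 - 2 / ((m : ℝ) * p ^ κ) ≤ 1 - 1 / ((m : ℝ) * p ^ κ) := by
    rw [h2q]; linarith
  -- chain
  have s1 : c ^ (2 ^ κ - 1) ≤ c ^ (2 ^ d - 1) := by
    refine pow_le_pow_of_le_one hc0 hc1 ?_
    have : 2 ^ d ≤ 2 ^ κ := Nat.pow_le_pow_right (by norm_num) hd
    omega
  have s1' : c ^ (2 ^ d - 1) ≤ c ^ (2 ^ (d - 1)) := by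
    refine pow_le_pow_of_le_one hc0 hc1 ?_
    have h1 : d - 1 < 2 ^ (d - 1) := Nat.lt_two_pow_self
    have h2 : 2 ^ d = 2 ^ (d - 1) * 2 := by
      conv_lhs => rw [show d = (d - 1) + 1 by omega]
      rw [pow_succ]
    omega
  have s2 : (1 + 1 / (m : ℝ)) ^ 2 ^ d ≤ (1 + 1 / ((m : ℝ) * p ^ κ)) ^ 2 ^ d := by
    refine pow_le_pow_left₀ (by positivity) ?_ _
    have hXm : (m : ℝ) * p ^ κ ≤ (m : ℝ) := by
      nlinarith [pow_le_one₀ hp0.le hp1 (n := κ)]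
    have := one_div_le_one_div_of_le hX0 hXm
    linarith
  have hd2 : 2 ^ d = 2 ^ (d - 1) * 2 := by
    conv_lhs => rw [show d = (d - 1) + 1 by omega]
    rw [pow_succ]
  have s3 : (1 + 1 / ((m : ℝ) * p ^ κ)) ^ 2 ^ d * c ^ (2 ^ (d - 1)) ≤
      (1 - p / 2 - 2 / ((m : ℝ) * p ^ κ)) ^ 2 ^ d := by
    calc (1 + 1 / ((m : ℝ) * p ^ κ)) ^ 2 ^ d * c ^ (2 ^ (d - 1))
        = (((1 + 1 / ((m : ℝ) * p ^ κ)) ^ 2) * c) ^ 2 ^ (d - 1) := by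
          rw [mul_pow, ← pow_mul]
          congr 2
          omega
      _ ≤ ((1 - p / 2 - 2 / ((m : ℝ) * p ^ κ)) ^ 2) ^ 2 ^ (d - 1) :=
          pow_le_pow_left₀ (mul_nonneg (by positivity) hc0) hkey _
      _ = (1 - p / 2 - 2 / ((m : ℝ) * p ^ κ)) ^ 2 ^ d := by
          rw [← pow_mul]
          congr 1
          omega
  have s4 : (1 - p / 2 - 2 / ((m : ℝ) * p ^ κ)) ^ 2 ^ d ≤
      (1 - 1 / ((m : ℝ) * p ^ κ)) * (1 - p / 2 - 2 / ((m : ℝ) * p ^ κ)) ^ (2 ^ d - 1) := by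
    have h1 : (1 - p / 2 - 2 / ((m : ℝ) * p ^ κ)) ^ 2 ^ d =
        (1 - p / 2 - 2 / ((m : ℝ) * p ^ κ)) * (1 - p / 2 - 2 / ((m : ℝ) * p ^ κ)) ^ (2 ^ d - 1) := by
      rw [← pow_succ']
      congr 1
      have := Nat.one_le_two_pow (n := d)
      omega
    rw [h1]
    exact mul_le_mul_of_nonneg_right haaX (pow_nonneg haa0.le _)
  -- N ^ 2^d ≤ m^2^d (1+1/m)^2^d
  have hNpow : ((intRange (m : ℝ)).card : ℝ) ^ 2 ^ d ≤
      (m : ℝ) ^ 2 ^ d * (1 + 1 / (m : ℝ)) ^ 2 ^ d := by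
    rw [← mul_pow]
    refine pow_le_pow_left₀ hN0.le ?_ _
    have : (m : ℝ) * (1 + 1 / (m : ℝ)) = (m : ℝ) + 1 := by field_simp
    linarith
  -- final combination
  rw [hcpow]
  calc p ^ (2 ^ d - 1) * c ^ (2 ^ κ - 1) * ((intRange (m : ℝ)).card : ℝ) ^ 2 ^ d
      ≤ p ^ (2 ^ d - 1) * c ^ (2 ^ κ - 1) * ((m : ℝ) ^ 2 ^ d * (1 + 1 / (m : ℝ)) ^ 2 ^ d) := by
        refine mul_le_mul_of_nonneg_left hNpow ?_
        exact mul_nonneg (pow_nonneg hp0.le _) (pow_nonneg hc0 _)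
    _ = (m : ℝ) ^ 2 ^ d * p ^ (2 ^ d - 1) * (c ^ (2 ^ κ - 1) * (1 + 1 / (m : ℝ)) ^ 2 ^ d) := by
        ring
    _ ≤ (m : ℝ) ^ 2 ^ d * p ^ (2 ^ d - 1) *
          ((1 - 1 / ((m : ℝ) * p ^ κ)) * (1 - p / 2 - 2 / ((m : ℝ) * p ^ κ)) ^ (2 ^ d - 1)) := by
        refine mul_le_mul_of_nonneg_left ?_ (by positivity)
        calc c ^ (2 ^ κ - 1) * (1 + 1 / (m : ℝ)) ^ 2 ^ d
            ≤ c ^ (2 ^ (d - 1)) * (1 + 1 / ((m : ℝ) * p ^ κ)) ^ 2 ^ d := by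
              refine mul_le_mul (s1.trans s1') s2 (by positivity) (pow_nonneg hc0 _)
          _ = (1 + 1 / ((m : ℝ) * p ^ κ)) ^ 2 ^ d * c ^ 2 ^ (d - 1) := by ring
          _ ≤ (1 - p / 2 - 2 / ((m : ℝ) * p ^ κ)) ^ 2 ^ d := s3
          _ ≤ (1 - 1 / ((m : ℝ) * p ^ κ)) *
                (1 - p / 2 - 2 / ((m : ℝ) * p ^ κ)) ^ (2 ^ d - 1) := s4
    _ ≤ (KC m p d : ℝ) := hKC
theorem kTree_total_size_bounds
    (κ n m : ℕ) (hκ : 1 ≤ κ) (hn : 0 < n) (hm : 0 < m)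
    (p : ℝ) (hp0 : 0 < p) (hp1 : p ≤ 1)
    (h1 : (7 : ℝ) * 2 ^ κ < m)
    (h2 : ((7 : ℝ) / m) ^ (2 ^ (κ - 1) - 1) < p * 2 ^ κ)
    (h3 : (30 : ℝ) < (m : ℝ) * p ^ κ)
    (h4 : p < 1 / 30) :
    (2 ^ κ : ℝ) * n * (1 + ∑ d ∈ Finset.Icc 1 κ, ((n : ℝ) * p) ^ (2 ^ d - 1) / (2 : ℝ) ^ d) *
        (1 - p) ^ (2 ^ κ - 1) * (1 - 35 / ((m : ℝ) * p ^ κ)) ^ (2 ^ κ - 1)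
      ≤ expTotalSize κ n m p ∧
    expTotalSize κ n m p
      ≤ (2 ^ κ : ℝ) * n * (1 + ∑ d ∈ Finset.Icc 1 κ, ((n : ℝ) * p) ^ (2 ^ d - 1) / (2 : ℝ) ^ d) *
        (1 + p) ^ (2 ^ κ - 1) * (1 + 35 / ((m : ℝ) * p ^ κ)) ^ (2 ^ κ - 1) := by
  have hN0 : (0:ℝ) < ((intRange (m : ℝ)).card : ℝ) := by exact_mod_cast card_intRange_pos m
  have hNne : ((intRange (m : ℝ)).card : ℝ) ≠ 0 := ne_of_gt hN0
  have hX0 : (0:ℝ) < (m:ℝ) * p ^ κ := by positivity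
  rw [expTotalSize_eq κ n m p hn]
  have hdecomp : ∀ F : ℕ → ℝ,
      (∑ d ∈ Finset.range (κ+1), F d) = F 0 + ∑ d ∈ Finset.Icc 1 κ, F d := by
    intro F
    have hins : Finset.range (κ+1) = insert 0 (Finset.Icc 1 κ) := by
      ext a
      simp only [Finset.mem_range, Finset.mem_insert, Finset.mem_Icc]
      omega
    rw [hins, Finset.sum_insert (by simp)]
  have hT0 : (2 : ℝ) ^ (κ - 0) * (n : ℝ) ^ 2 ^ 0 *
      ((KC m p 0 : ℝ) / ((intRange (m : ℝ)).card : ℝ) ^ 2 ^ 0) = (2:ℝ)^κ * n := by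
    have hc : ((KC m p 0 : ℝ)) = ((intRange (m : ℝ)).card : ℝ) := by
      exact_mod_cast congrArg (Nat.cast : ℕ → ℝ) (KC_zero m p)
    rw [hc]
    norm_num [div_self hNne]
  have hscaf : ∀ d, d ≤ κ → 1 ≤ d →
      (2:ℝ)^κ * (n:ℝ) * (((n:ℝ)*p)^(2^d-1) / (2:ℝ)^d)
        = (2:ℝ)^(κ-d) * (n:ℝ)^(2^d) * p^(2^d-1) := by
    intro d hd hd1
    have h2' : (2:ℝ)^(κ-d) * (2:ℝ)^d = (2:ℝ)^κ := by
      rw [← pow_add]; congr 1; omega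
    have hn2 : (n:ℝ)^(2^d) = (n:ℝ) * (n:ℝ)^(2^d-1) := by
      conv_lhs => rw [show 2^d = 1 + (2^d-1) by have := Nat.one_le_two_pow (n := d); omega]
      rw [pow_add, pow_one]
    rw [mul_pow, hn2, ← h2']
    field_simp
  have hform : ∀ E : ℝ,
      (2 ^ κ : ℝ) * n * (1 + ∑ d ∈ Finset.Icc 1 κ, ((n : ℝ) * p) ^ (2 ^ d - 1) / (2 : ℝ) ^ d) * E
        = ∑ d ∈ Finset.range (κ+1),
            ((2:ℝ)^κ * n * (if d = 0 then 1 else ((n:ℝ)*p)^(2^d-1)/(2:ℝ)^d) * E) := by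
    intro E
    rw [hdecomp (fun d => (2:ℝ)^κ * n * (if d = 0 then 1 else ((n:ℝ)*p)^(2^d-1)/(2:ℝ)^d) * E)]
    rw [if_pos rfl]
    have hIc : ∑ d ∈ Finset.Icc 1 κ,
        ((2:ℝ)^κ * n * (if d = 0 then 1 else ((n:ℝ)*p)^(2^d-1)/(2:ℝ)^d) * E)
        = ∑ d ∈ Finset.Icc 1 κ, (((n:ℝ)*p)^(2^d-1)/(2:ℝ)^d) * ((2:ℝ)^κ * n * E) := by
      refine Finset.sum_congr rfl fun d hd => ?_
      rw [if_neg (by rw [Finset.mem_Icc] at hd; omega)]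
      ring
    rw [hIc, ← Finset.sum_mul]
    ring
  constructor
  · -- lower bound
    by_cases hX35 : (m:ℝ) * p ^ κ ≤ 35
    · have hodd : Odd (2^κ - 1) := by
        refine Nat.Even.sub_odd Nat.one_le_two_pow ?_ odd_one
        exact (Nat.even_pow).2 ⟨even_two, by omega⟩
      have hC : (1 - 35 / ((m:ℝ) * p ^ κ)) ^ (2^κ - 1) ≤ 0 := by
        refine Odd.pow_nonpos hodd ?_
        have h35 : (1:ℝ) ≤ 35 / ((m:ℝ) * p ^ κ) := (one_le_div hX0).2 hX35
        linarith
      have hAB : 0 ≤ (2 ^ κ : ℝ) * n *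
          (1 + ∑ d ∈ Finset.Icc 1 κ, ((n : ℝ) * p) ^ (2 ^ d - 1) / (2 : ℝ) ^ d) *
          (1 - p) ^ (2 ^ κ - 1) := by
        refine mul_nonneg (by positivity) (pow_nonneg (by linarith) _)
      have hsum_nonneg : 0 ≤ ∑ d ∈ Finset.range (κ+1), (2 : ℝ) ^ (κ - d) * (n : ℝ) ^ 2 ^ d *
          ((KC m p d : ℝ) / ((intRange (m : ℝ)).card : ℝ) ^ 2 ^ d) := by
        refine Finset.sum_nonneg fun d _ => by positivity
      exact le_trans (mul_nonpos_iff.2 (Or.inl ⟨hAB, hC⟩)) hsum_nonneg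
    · push_neg at hX35
      rw [mul_assoc, hform ((1 - p) ^ (2 ^ κ - 1) * (1 - 35 / ((m:ℝ) * p ^ κ)) ^ (2 ^ κ - 1))]
      refine Finset.sum_le_sum fun d hd => ?_
      rcases Nat.eq_zero_or_pos d with rfl | hd1
      · rw [if_pos rfl, hT0]
        have h35le : 35 / ((m : ℝ) * p ^ κ) ≤ 1 := by
          rw [div_le_one hX0]; linarith
        have h350 : 0 < 35 / ((m : ℝ) * p ^ κ) := by positivity
        have hE : (1 - p) ^ (2 ^ κ - 1) * (1 - 35 / ((m:ℝ) * p ^ κ)) ^ (2 ^ κ - 1) ≤ 1 := by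
          rw [← mul_pow]
          exact pow_le_one₀ (mul_nonneg (by linarith) (by linarith))
            (mul_le_one₀ (by linarith) (by linarith) (by linarith))
        have h2n : (0:ℝ) ≤ (2:ℝ)^κ * n := by positivity
        nlinarith
      · rw [if_neg (by omega)]
        have hdk : d ≤ κ := by rw [Finset.mem_range] at hd; omega
        have hPL := per_d_lower m κ p hp0 h4 hm hκ hX35 d hd1 hdk
        calc (2:ℝ)^κ * n * (((n:ℝ)*p)^(2^d-1)/(2:ℝ)^d) *
              ((1 - p) ^ (2 ^ κ - 1) * (1 - 35 / ((m:ℝ) * p ^ κ)) ^ (2 ^ κ - 1))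
            = (2:ℝ)^(κ-d) * (n:ℝ)^(2^d) * (p^(2^d-1) *
              ((1 - p) ^ (2 ^ κ - 1) * (1 - 35 / ((m:ℝ) * p ^ κ)) ^ (2 ^ κ - 1))) := by
              rw [hscaf d hdk hd1]; ring
          _ ≤ (2:ℝ)^(κ-d) * (n:ℝ)^(2^d) *
              ((KC m p d : ℝ) / ((intRange (m : ℝ)).card : ℝ) ^ 2 ^ d) := by
              refine mul_le_mul_of_nonneg_left hPL (by positivity)
  · -- upper bound
    rw [mul_assoc, hform ((1 + p) ^ (2 ^ κ - 1) * (1 + 35 / ((m:ℝ) * p ^ κ)) ^ (2 ^ κ - 1))]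
    refine Finset.sum_le_sum fun d hd => ?_
    rcases Nat.eq_zero_or_pos d with rfl | hd1
    · rw [if_pos rfl, hT0]
      have hE : (1:ℝ) ≤ (1 + p) ^ (2 ^ κ - 1) * (1 + 35 / ((m:ℝ) * p ^ κ)) ^ (2 ^ κ - 1) := by
        have e1 : (1:ℝ) ≤ (1 + p) ^ (2 ^ κ - 1) := one_le_pow₀ (by linarith)
        have e2 : (1:ℝ) ≤ (1 + 35 / ((m:ℝ) * p ^ κ)) ^ (2 ^ κ - 1) := by
          refine one_le_pow₀ ?_
          have : 0 < 35 / ((m:ℝ) * p ^ κ) := by positivity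
          linarith
        nlinarith
      have h2n : (0:ℝ) ≤ (2:ℝ)^κ * n := by positivity
      nlinarith
    · rw [if_neg (by omega)]
      have hdk : d ≤ κ := by rw [Finset.mem_range] at hd; omega
      have hPU := per_d_upper m κ p hp0 hp1 hm hκ h3 d hd1 hdk
      calc (2:ℝ)^(κ-d) * (n:ℝ)^(2^d) *
            ((KC m p d : ℝ) / ((intRange (m : ℝ)).card : ℝ) ^ 2 ^ d)
          ≤ (2:ℝ)^(κ-d) * (n:ℝ)^(2^d) * (p^(2^d-1) *
            ((1 + p) ^ (2 ^ κ - 1) * (1 + 35 / ((m:ℝ) * p ^ κ)) ^ (2 ^ κ - 1))) := by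
            refine mul_le_mul_of_nonneg_left hPU (by positivity)
        _ = (2:ℝ)^κ * n * (((n:ℝ)*p)^(2^d-1)/(2:ℝ)^d) *
            ((1 + p) ^ (2 ^ κ - 1) * (1 + 35 / ((m:ℝ) * p ^ κ)) ^ (2 ^ κ - 1)) := by
            rw [hscaf d hdk hd1]; ring
end
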